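/- arXiv:1108.5277 — 8 statements merged into one kernel-verified Lean document; each statement's English description precedes it below -/
import Mathlib

section
/- The functions p(k,t) = (1/k!) · Σ_{j=1}^{k+1} (-1)^{k+1-j} j^k · C(k+1, j) · e^{-λt/j} satisfy the pure birth system of ODEs: p'(0,t) = -λ p(0,t), and for k ≥ 1, p'(k,t) = (λ/k) p(k-1,t) - (λ/(k+1)) p(k,t), with initial conditions p(k,0) = δ_{k,0}. -/
open Finset Real

/-- Transient distribution of the pure birth process with rates `λ/(1+k)`:
`p(k,t) = (1/k!) · Σ_{j=1}^{k+1} (-1)^{k+1-j} j^k C(k+1,j) e^{-λt/j}`. -/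
noncomputable def birthP (lam : ℝ) (k : ℕ) (t : ℝ) : ℝ :=
  (1 / (Nat.factorial k : ℝ)) *
    ∑ j ∈ Finset.Icc 1 (k + 1),
      (-1 : ℝ) ^ (k + 1 - j) * (j : ℝ) ^ k * ((k + 1).choose j : ℝ) *
        Real.exp (-(lam * t) / (j : ℝ))

lemma altzero (k : ℕ) : ∀ n, k < n → (fwdDiff (1:ℕ))^[n] (fun x : ℕ => (x:ℝ)^k) = 0 := by
  induction k using Nat.strong_induction_on with
  | _ k IH =>
    intro n hn
    obtain ⟨m, rfl⟩ : ∃ m, n = m + 1 := ⟨n - 1, by omega⟩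
    rw [Function.iterate_succ_apply]
    have hΔ : fwdDiff (1:ℕ) (fun x : ℕ => (x:ℝ)^k)
        = ∑ i ∈ range k, (fun x : ℕ => ((k.choose i : ℝ)) * (x:ℝ)^i) := by
      funext x
      simp only [fwdDiff, Finset.sum_apply]
      push_cast
      rw [add_pow, Finset.sum_range_succ]
      simp [mul_comm]
    rw [hΔ, fwdDiff_iter_finset_sum]
    apply Finset.sum_eq_zero
    intro i hi
    have hi' : i < k := Finset.mem_range.mp hi
    have : (fun x : ℕ => ((k.choose i : ℝ)) * (x:ℝ)^i)
        = (k.choose i : ℝ) • (fun x : ℕ => (x:ℝ)^i) := by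
      funext x; simp [smul_eq_mul]
    rw [this, fwdDiff_iter_const_smul, IH i hi' m (by omega), smul_zero]

lemma sum0 (k : ℕ) (hk : 1 ≤ k) :
    ∑ j ∈ Finset.Icc 1 (k+1), (-1:ℝ)^(k+1-j) * (j:ℝ)^k * (((k+1).choose j : ℕ) : ℝ) = 0 := by
  have h0 := congrFun (altzero k (k+1) (Nat.lt_succ_self k)) 0
  rw [fwdDiff_iter_eq_sum_shift] at h0
  simp only [Pi.zero_apply, smul_eq_mul, zsmul_eq_mul] at h0
  have h1 : ∑ j ∈ Finset.range (k+2),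
      (-1:ℝ)^(k+1-j) * (((k+1).choose j : ℕ) : ℝ) * (j:ℝ)^k = 0 := by
    rw [← h0]
    apply Finset.sum_congr rfl
    intro j _
    push_cast
    ring
  rw [Finset.range_eq_Ico, Finset.sum_eq_sum_Ico_succ_bot (by omega)] at h1
  have h2 : ((0:ℕ):ℝ)^k = 0 := by
    simp [zero_pow (by omega : k ≠ 0)]
  rw [h2, mul_zero, zero_add] at h1
  rw [show Finset.Ico 1 (k+2) = Finset.Icc 1 (k+1) from rfl] at h1
  rw [← h1]
  apply Finset.sum_congr rfl
  intro j _
  ring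

lemma birthP_deriv (lam : ℝ) (k : ℕ) (t : ℝ) :
    HasDerivAt (fun s => birthP lam k s)
      ((1 / (Nat.factorial k : ℝ)) *
        ∑ j ∈ Finset.Icc 1 (k + 1),
          (-1 : ℝ) ^ (k + 1 - j) * (j : ℝ) ^ k * ((k + 1).choose j : ℝ) *
            (-lam / (j : ℝ) * Real.exp (-(lam * t) / (j : ℝ)))) t := by
  unfold birthP
  apply HasDerivAt.const_mul
  apply HasDerivAt.fun_sum
  intro j hj
  apply HasDerivAt.const_mul
  have h1 : HasDerivAt (fun s : ℝ => -(lam * s) / (j : ℝ)) (-lam / (j:ℝ)) t := by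
    have : (fun s : ℝ => -(lam * s) / (j : ℝ)) = fun s => (-lam / (j:ℝ)) * s := by
      funext s; ring
    rw [this]
    simpa using (hasDerivAt_id t).const_mul (-lam / (j:ℝ))
  simpa [mul_comm] using h1.exp

/-- The functions `p(k,t)` satisfy the pure birth system
`p'(0,t) = -λ p(0,t)`, `p'(k,t) = (λ/k) p(k-1,t) - (λ/(k+1)) p(k,t)` for `k ≥ 1`,
with initial conditions `p(k,0) = δ_{k,0}`. -/
theorem stmt_0 (lam : ℝ) (hlam : 0 < lam) :
    (∀ t : ℝ, 0 ≤ t →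
      HasDerivAt (fun s => birthP lam 0 s) (-lam * birthP lam 0 t) t) ∧
    (∀ k : ℕ, 1 ≤ k → ∀ t : ℝ, 0 ≤ t →
      HasDerivAt (fun s => birthP lam k s)
        (lam / (k : ℝ) * birthP lam (k - 1) t - lam / ((k : ℝ) + 1) * birthP lam k t) t) ∧
    (∀ k : ℕ, birthP lam k 0 = if k = 0 then 1 else 0) := by
  refine ⟨?_, ?_, ?_⟩
  · intro t ht
    have hd := birthP_deriv lam 0 t
    convert hd using 1
    simp [birthP]
  · intro k hk t ht
    obtain ⟨m, rfl⟩ : ∃ m, k = m + 1 := ⟨k - 1, by omega⟩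
    have hd := birthP_deriv lam (m+1) t
    convert hd using 1
    simp only [Nat.add_sub_cancel, Nat.cast_add, Nat.cast_one]
    unfold birthP
    have hext : ∑ j ∈ Finset.Icc 1 (m+1),
          (-1:ℝ)^(m+1-j) * (j:ℝ)^m * ((m+1).choose j : ℝ) * Real.exp (-(lam*t)/(j:ℝ))
        = ∑ j ∈ Finset.Icc 1 (m+1+1),
          (-1:ℝ)^(m+1-j) * (j:ℝ)^m * ((m+1).choose j : ℝ) * Real.exp (-(lam*t)/(j:ℝ)) := by
      rw [Finset.sum_Icc_succ_top (by omega : 1 ≤ m+1+1)]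
      simp [Nat.choose_eq_zero_of_lt (by omega : m+1 < m+2)]
    rw [hext]
    simp only [Finset.mul_sum, ← Finset.sum_sub_distrib]
    apply Finset.sum_congr rfl
    intro j hj
    obtain ⟨hj1, hj2⟩ := Finset.mem_Icc.mp hj
    rcases eq_or_lt_of_le hj2 with hje | hjlt
    · -- j = m + 2
      subst hje
      simp only [Nat.sub_self, pow_zero, Nat.choose_self,
        Nat.choose_eq_zero_of_lt (by omega : m+1 < m+1+1)]
      have hfac : ((m+1).factorial : ℝ) ≠ 0 := by positivity
      have hm2 : ((m:ℝ)+1+1) ≠ 0 := by positivity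
      push_cast
      field_simp
      ring
    · -- j ≤ m + 1
      obtain ⟨i, rfl⟩ : ∃ i, j = i + 1 := ⟨j - 1, by omega⟩
      obtain ⟨d, rfl⟩ : ∃ d, m = i + d := ⟨m - i, by omega⟩
      rw [show i+d+1+1-(i+1) = d+1 by omega, show i+d+1-(i+1) = d by omega]
      have hfac : (((i+d+1).factorial : ℕ):ℝ) = ((i:ℝ)+(d:ℝ)+1) * (((i+d).factorial:ℕ):ℝ) := by
        rw [show i+d+1 = (i+d)+1 from rfl, Nat.factorial_succ]; push_cast; ring
      have hpow : ((i:ℝ)+1)^(i+d+1) = ((i:ℝ)+1)^(i+d) * ((i:ℝ)+1) := pow_succ _ _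
      have hsign : (-1:ℝ)^(d+1) = -(-1:ℝ)^d := by rw [pow_succ]; ring
      have hc3 : (((i+d+2).choose (i+1):ℕ):ℝ) * ((i:ℝ)+1)
          = ((i:ℝ)+(d:ℝ)+2) * (((i+d+1).choose i :ℕ):ℝ) := by
        have h2 : (i+d+2) * ((i+d+1).choose i) = ((i+d+2).choose (i+1)) * (i+1) :=
          Nat.add_one_mul_choose_eq (i+d+1) i
        exact_mod_cast (by linarith [congrArg (Nat.cast (R := ℝ)) h2] : _)
      have hc4 : (((i+d+2).choose (i+1):ℕ):ℝ)
          = (((i+d+1).choose i :ℕ):ℝ) + (((i+d+1).choose (i+1):ℕ):ℝ) := by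
        exact_mod_cast congrArg (Nat.cast (R := ℝ)) (Nat.choose_succ_succ (i+d+1) i)
      have hkey : ((i:ℝ)+(d:ℝ)+2) * (((i+d+1).choose (i+1):ℕ):ℝ)
          = ((d:ℝ)+1) * (((i+d+2).choose (i+1):ℕ):ℝ) := by
        linear_combination (-((i:ℝ)+(d:ℝ)+2)) * hc4 + hc3
      have hF : (((i+d).factorial:ℕ):ℝ) ≠ 0 := by positivity
      have h1 : ((i:ℝ)+(d:ℝ)+1) ≠ 0 := by positivity
      have h2 : ((i:ℝ)+(d:ℝ)+2) ≠ 0 := by positivity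
      have h3 : ((i:ℝ)+1) ≠ 0 := by positivity
      push_cast
      rw [hfac, hpow, hsign]
      have hC1 : (((i+d+1).choose (i+1):ℕ):ℝ) = ((d:ℝ)+1) * (((i+d+2).choose (i+1):ℕ):ℝ) / ((i:ℝ)+(d:ℝ)+2) := by
        rw [eq_div_iff h2]; linarith [hkey]
      have h4 : ((i:ℝ)+(d:ℝ)+1+1) ≠ 0 := by positivity
      rw [show i+d+1+1 = i+d+2 from rfl, hC1]
      field_simp
      ring
  · intro k
    rcases Nat.eq_zero_or_pos k with rfl | hk
    · simp [birthP]
    · rw [if_neg (by omega)]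
      unfold birthP
      have : ∀ j ∈ Finset.Icc 1 (k+1),
          (-1:ℝ)^(k+1-j) * (j:ℝ)^k * ((k+1).choose j : ℝ) * Real.exp (-(lam*0)/(j:ℝ))
          = (-1:ℝ)^(k+1-j) * (j:ℝ)^k * ((k+1).choose j : ℝ) := by
        intro j _
        simp
      rw [Finset.sum_congr rfl this, sum0 k hk, mul_zero]
end

section
/- For all k ≥ 0 and t ≥ 0, the quantities p(k,t) = (1/k!) · Σ_{j=1}^{k+1} (-1)^{k+1-j} j^k · C(k+1, j) · e^{-λt/j} sum to 1 over k, i.e., Σ_{k=0}^{∞} p(k,t) = 1 for every t ≥ 0. -/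
open Finset Real

lemma exp_series_hasSum (x : ℝ) :
    HasSum (fun m : ℕ => x ^ m / (Nat.factorial m : ℝ)) (Real.exp x) := by
  rw [Real.exp_eq_exp_ℝ]
  exact NormedSpace.expSeries_div_hasSum_exp x

/-- Alternating finite differences kill low-degree powers. -/
lemma diff_range : ∀ r N : ℕ, r < N →
    ∑ j ∈ range (N + 1), (-1 : ℝ) ^ j * (N.choose j : ℝ) * (j : ℝ) ^ r = 0 := by
  intro r
  induction r using Nat.strong_induction_on with
  | _ r IH =>
    intro N hN
    match r with
    | 0 =>
      have h0 : N ≠ 0 := by omega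
      have h := Int.alternating_sum_range_choose_of_ne h0
      have h' : ((∑ m ∈ range (N + 1), ((-1) ^ m * N.choose m : ℤ) : ℤ) : ℝ) = 0 := by
        rw [h]; simp
      push_cast at h'
      simpa using h'
    | r + 1 =>
      obtain ⟨M, rfl⟩ : ∃ M, N = M + 1 := ⟨N - 1, by omega⟩
      rw [Finset.sum_range_succ']
      have hlast : (-1 : ℝ) ^ 0 * ((M + 1).choose 0 : ℝ) * ((0 : ℕ) : ℝ) ^ (r + 1) = 0 := by
        simp
      rw [hlast, add_zero]
      have hM : r < M := by omega
      have key : ∀ i ∈ range (M + 1),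
          (-1 : ℝ) ^ (i + 1) * (((M + 1).choose (i + 1) : ℕ) : ℝ) * ((i + 1 : ℕ) : ℝ) ^ (r + 1)
            = ∑ s ∈ range (r + 1),
                (-((M : ℝ) + 1)) * (r.choose s : ℝ) *
                  ((-1) ^ i * (M.choose i : ℝ) * (i : ℝ) ^ s) := by
        intro i _
        have hc : (((M + 1).choose (i + 1) : ℕ) : ℝ) * ((i : ℝ) + 1)
            = ((M : ℝ) + 1) * (M.choose i : ℝ) := by
          have := Nat.add_one_mul_choose_eq M i
          have h2 : (M + 1) * M.choose i = (M + 1).choose (i + 1) * (i + 1) := by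
            simpa [Nat.succ_eq_add_one] using this
          exact_mod_cast (congrArg (fun z : ℕ => (z : ℝ)) h2).symm
        have hbin : ((i : ℝ) + 1) ^ r
            = ∑ s ∈ range (r + 1), (i : ℝ) ^ s * (r.choose s : ℝ) := by
          simpa using add_pow (i : ℝ) 1 r
        have hcast : ((i + 1 : ℕ) : ℝ) = (i : ℝ) + 1 := by push_cast; ring
        rw [hcast]
        have hstep : ((i : ℝ) + 1) ^ (r + 1) = ((i : ℝ) + 1) ^ r * ((i : ℝ) + 1) :=
          pow_succ _ _
        rw [hstep, hbin, Finset.sum_mul, Finset.mul_sum]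
        apply Finset.sum_congr rfl
        intro s _
        have : (-1 : ℝ) ^ (i + 1) = -(-1 : ℝ) ^ i := by rw [pow_succ]; ring
        rw [this]
        linear_combination (-(-1 : ℝ) ^ i * (i : ℝ) ^ s * (r.choose s : ℝ)) * hc
      rw [Finset.sum_congr rfl key, Finset.sum_comm]
      refine Finset.sum_eq_zero fun s hs => ?_
      have hsr : s < r + 1 := Finset.mem_range.mp hs
      have hs' : s < M := by omega
      have hz := IH s hsr M hs'
      calc ∑ i ∈ range (M + 1),
            (-((M : ℝ) + 1)) * (r.choose s : ℝ) * ((-1) ^ i * (M.choose i : ℝ) * (i : ℝ) ^ s)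
          = (-((M : ℝ) + 1)) * (r.choose s : ℝ) *
              ∑ i ∈ range (M + 1), (-1 : ℝ) ^ i * (M.choose i : ℝ) * (i : ℝ) ^ s := by
            rw [Finset.mul_sum]
        _ = 0 := by rw [hz, mul_zero]

lemma range_eq_insert_Icc (n : ℕ) : range (n + 1) = insert 0 (Icc 1 n) := by
  ext x; simp [Finset.mem_range, Finset.mem_Icc, Finset.mem_insert]; omega

lemma diff_Icc (k r : ℕ) (h1 : 1 ≤ r) (h2 : r ≤ k) :
    ∑ j ∈ Icc 1 (k + 1), (-1 : ℝ) ^ (k + 1 - j) * ((k + 1).choose j : ℝ) * (j : ℝ) ^ r = 0 := by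
  have hzero : (-1 : ℝ) ^ (k + 1 - 0) * ((k + 1).choose 0 : ℝ) * ((0 : ℕ) : ℝ) ^ r = 0 := by
    simp [zero_pow (by omega : r ≠ 0)]
  have hins := range_eq_insert_Icc (k + 1)
  have hnotmem : (0 : ℕ) ∉ Icc 1 (k + 1) := by simp
  have hfull : ∑ j ∈ range (k + 2), (-1 : ℝ) ^ (k + 1 - j) * ((k + 1).choose j : ℝ) * (j : ℝ) ^ r
      = ∑ j ∈ Icc 1 (k + 1), (-1 : ℝ) ^ (k + 1 - j) * ((k + 1).choose j : ℝ) * (j : ℝ) ^ r := by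
    rw [hins, Finset.sum_insert hnotmem, hzero, zero_add]
  rw [← hfull]
  have hsign : ∀ j ∈ range (k + 2),
      (-1 : ℝ) ^ (k + 1 - j) * ((k + 1).choose j : ℝ) * (j : ℝ) ^ r
        = (-1 : ℝ) ^ (k + 1) * ((-1) ^ j * ((k + 1).choose j : ℝ) * (j : ℝ) ^ r) := by
    intro j hj
    have hj' : j ≤ k + 1 := by have := Finset.mem_range.mp hj; omega
    have hadd : k + 1 - j + j = k + 1 := by omega
    have hsq : ((-1 : ℝ) ^ j) * ((-1 : ℝ) ^ j) = 1 := by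
      rw [← pow_add]; simp [pow_add, pow_mul, ← two_mul]
    calc (-1 : ℝ) ^ (k + 1 - j) * ((k + 1).choose j : ℝ) * (j : ℝ) ^ r
        = (-1 : ℝ) ^ (k + 1 - j) * (((-1 : ℝ) ^ j) * ((-1 : ℝ) ^ j)) *
            ((k + 1).choose j : ℝ) * (j : ℝ) ^ r := by rw [hsq]; ring
      _ = (-1 : ℝ) ^ (k + 1) * ((-1) ^ j * ((k + 1).choose j : ℝ) * (j : ℝ) ^ r) := by
          have hpow : (-1 : ℝ) ^ (k + 1) = (-1 : ℝ) ^ (k + 1 - j) * (-1 : ℝ) ^ j := by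
            rw [← pow_add, hadd]
          rw [hpow]; ring
  rw [Finset.sum_congr rfl hsign, ← Finset.mul_sum, diff_range r (k + 1) (by omega), mul_zero]

/-- row `k` of the coefficient array, without the `(-(lam t))^m/m!` factor. -/
noncomputable def innerS (m k : ℕ) : ℝ :=
  (1 / (Nat.factorial k : ℝ)) * ∑ j ∈ Icc 1 (k + 1),
    (-1 : ℝ) ^ (k + 1 - j) * ((k + 1).choose j : ℝ) * ((j : ℝ) ^ k / (j : ℝ) ^ m)

noncomputable def Gf (m n : ℕ) : ℝ :=
  (1 / (Nat.factorial n : ℝ)) * ∑ j ∈ Icc 1 n,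
    (-1 : ℝ) ^ (n - j) * (n.choose j : ℝ) * ((j : ℝ) ^ n / (j : ℝ) ^ m)

lemma Gf_one (m : ℕ) : Gf m 1 = 1 := by
  simp [Gf]

lemma innerS_zero (m : ℕ) : innerS m 0 = 1 := by
  simp [innerS]

lemma tele (m n : ℕ) : Gf m (n + 2) = Gf m (n + 1) + innerS m (n + 1) := by
  have hsub : Icc 1 (n + 1) ⊆ Icc 1 (n + 2) := by
    intro x hx; simp only [Finset.mem_Icc] at *; omega
  have hext : ∑ j ∈ Icc 1 (n + 1),
        (-1 : ℝ) ^ (n + 1 - j) * ((n + 1).choose j : ℝ) * ((j : ℝ) ^ (n + 1) / (j : ℝ) ^ m)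
      = ∑ j ∈ Icc 1 (n + 2),
        (-1 : ℝ) ^ (n + 1 - j) * ((n + 1).choose j : ℝ) * ((j : ℝ) ^ (n + 1) / (j : ℝ) ^ m) := by
    apply Finset.sum_subset hsub
    intro x hx hx'
    have hx2 : x = n + 2 := by
      simp only [Finset.mem_Icc] at hx hx'; omega
    subst hx2
    rw [Nat.choose_eq_zero_of_lt (by omega)]
    simp
  unfold Gf innerS
  rw [hext, Finset.mul_sum, Finset.mul_sum, Finset.mul_sum, ← Finset.sum_add_distrib]
  refine Finset.sum_congr rfl fun j hj => ?_
  have hj1 : 1 ≤ j := (Finset.mem_Icc.mp hj).1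
  have hj2 : j ≤ n + 2 := (Finset.mem_Icc.mp hj).2
  have hjne : (j : ℝ) ≠ 0 := by positivity
  have hfac : ((Nat.factorial (n + 2) : ℕ) : ℝ) = ((n : ℝ) + 2) * (Nat.factorial (n + 1) : ℝ) := by
    rw [Nat.factorial_succ]; push_cast; ring
  have hfacne : (Nat.factorial (n + 1) : ℝ) ≠ 0 := by positivity
  have hpow : (j : ℝ) ^ (n + 2) = (j : ℝ) ^ (n + 1) * j := pow_succ _ _
  rcases Nat.lt_or_ge j (n + 2) with hlt | hge
  · -- j ≤ n + 1
    have hsign : (-1 : ℝ) ^ (n + 1 - j) = -(-1 : ℝ) ^ (n + 2 - j) := by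
      rw [show n + 2 - j = (n + 1 - j) + 1 by omega, pow_succ]; ring
    have hc : (((n + 2).choose j : ℕ) : ℝ) * j
        = ((n : ℝ) + 2) * (((n + 2).choose j : ℝ) - ((n + 1).choose j : ℝ)) := by
      have h := Nat.choose_mul_succ_eq (n + 1) j
      -- (n+1).choose j * (n+2) = (n+2).choose j * (n+2-j)
      have hcast : (((n + 2).choose j : ℕ) : ℝ) * ((n : ℝ) + 2 - j)
          = ((n + 1).choose j : ℝ) * ((n : ℝ) + 2) := by
        have := congrArg (fun z : ℕ => (z : ℝ)) h
        push_cast [Nat.cast_sub (by omega : j ≤ n + 2)] at this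
        linarith [this]
      linear_combination -hcast
    have hc' : (((n + 2).choose j : ℝ) * j) / ((n : ℝ) + 2)
        = ((n + 2).choose j : ℝ) - ((n + 1).choose j : ℝ) := by
      rw [hc]; field_simp
    have hfacinv : (1 : ℝ) / ((Nat.factorial (n + 2) : ℕ) : ℝ)
        = 1 / ((n : ℝ) + 2) * (1 / (Nat.factorial (n + 1) : ℝ)) := by
      rw [hfac, one_div, mul_inv, one_div, one_div]
    rw [hsign, hfacinv, hpow]
    linear_combination ((-1 : ℝ) ^ (n + 2 - j) * (j : ℝ) ^ (n + 1) /
      ((j : ℝ) ^ m * (Nat.factorial (n + 1) : ℝ))) * hc'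
  · -- j = n + 2
    have hj3 : j = n + 2 := by omega
    subst hj3
    have hz : (((n + 1).choose (n + 2) : ℕ) : ℝ) = 0 := by
      rw [Nat.choose_eq_zero_of_lt (by omega)]; simp
    rw [hz]
    rw [Nat.sub_self, Nat.choose_self, hfac, hpow]
    have h2 : ((n : ℝ) + 2) ≠ 0 := by positivity
    have hjm : ((n + 2 : ℕ) : ℝ) ^ m ≠ 0 := by positivity
    push_cast at hjm ⊢
    field_simp
    ring

lemma partial_sum (m n : ℕ) : ∑ k ∈ range (n + 1), innerS m k = Gf m (n + 1) := by
  induction n with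
  | zero => simp [innerS_zero, Gf_one]
  | succ n ih => rw [Finset.sum_range_succ, ih, ← tele]

lemma Gf_succ_self (m : ℕ) (hm : 1 ≤ m) : Gf m (m + 1) = 0 := by
  unfold Gf
  have h : ∀ j ∈ Icc 1 (m + 1),
      (-1 : ℝ) ^ (m + 1 - j) * ((m + 1).choose j : ℝ) * ((j : ℝ) ^ (m + 1) / (j : ℝ) ^ m)
        = (-1 : ℝ) ^ (m + 1 - j) * ((m + 1).choose j : ℝ) * (j : ℝ) ^ 1 := by
    intro j hj
    have hj1 : 1 ≤ j := (Finset.mem_Icc.mp hj).1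
    have hjne : (j : ℝ) ≠ 0 := by positivity
    have : (j : ℝ) ^ (m + 1) / (j : ℝ) ^ m = (j : ℝ) ^ 1 := by
      rw [pow_succ, pow_one]
      field_simp
    rw [this]
  rw [Finset.sum_congr rfl h, diff_Icc m 1 le_rfl hm, mul_zero]

lemma innerS_eq_zero (m k : ℕ) (h : m < k) : innerS m k = 0 := by
  unfold innerS
  have hk : ∀ j ∈ Icc 1 (k + 1),
      (-1 : ℝ) ^ (k + 1 - j) * ((k + 1).choose j : ℝ) * ((j : ℝ) ^ k / (j : ℝ) ^ m)
        = (-1 : ℝ) ^ (k + 1 - j) * ((k + 1).choose j : ℝ) * (j : ℝ) ^ (k - m) := by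
    intro j hj
    have hj1 : 1 ≤ j := (Finset.mem_Icc.mp hj).1
    have hjne : (j : ℝ) ≠ 0 := by positivity
    rw [pow_sub₀ (j : ℝ) hjne (le_of_lt h), div_eq_mul_inv]
  rw [Finset.sum_congr rfl hk, diff_Icc k (k - m) (by omega) (by omega), mul_zero]

noncomputable def cc (lam t : ℝ) (k m : ℕ) : ℝ :=
  ((-(lam * t)) ^ m / (Nat.factorial m : ℝ)) * innerS m k

lemma hasSum_row (lam t : ℝ) (k : ℕ) :
    HasSum (fun m => cc lam t k m) (birthP lam k t) := by
  have hterm : ∀ j : ℕ, HasSum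
      (fun m : ℕ => ((1 / (Nat.factorial k : ℝ)) *
          ((-1 : ℝ) ^ (k + 1 - j) * (j : ℝ) ^ k * ((k + 1).choose j : ℝ))) *
        ((-(lam * t) / (j : ℝ)) ^ m / (Nat.factorial m : ℝ)))
      (((1 / (Nat.factorial k : ℝ)) *
          ((-1 : ℝ) ^ (k + 1 - j) * (j : ℝ) ^ k * ((k + 1).choose j : ℝ))) *
        Real.exp (-(lam * t) / (j : ℝ))) := fun j =>
    (exp_series_hasSum (-(lam * t) / (j : ℝ))).mul_left _
  have hsum := hasSum_sum (s := Icc 1 (k + 1)) (f := fun j (m : ℕ) =>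
      ((1 / (Nat.factorial k : ℝ)) *
          ((-1 : ℝ) ^ (k + 1 - j) * (j : ℝ) ^ k * ((k + 1).choose j : ℝ))) *
        ((-(lam * t) / (j : ℝ)) ^ m / (Nat.factorial m : ℝ)))
    (fun j _ => hterm j)
  have heq1 : (∑ j ∈ Icc 1 (k + 1), ((1 / (Nat.factorial k : ℝ)) *
          ((-1 : ℝ) ^ (k + 1 - j) * (j : ℝ) ^ k * ((k + 1).choose j : ℝ))) *
        Real.exp (-(lam * t) / (j : ℝ))) = birthP lam k t := by
    unfold birthP
    rw [Finset.mul_sum]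
    exact Finset.sum_congr rfl fun j _ => by ring
  have heq2 : ∀ m : ℕ, (∑ j ∈ Icc 1 (k + 1), ((1 / (Nat.factorial k : ℝ)) *
          ((-1 : ℝ) ^ (k + 1 - j) * (j : ℝ) ^ k * ((k + 1).choose j : ℝ))) *
        ((-(lam * t) / (j : ℝ)) ^ m / (Nat.factorial m : ℝ))) = cc lam t k m := by
    intro m
    unfold cc innerS
    rw [Finset.mul_sum, Finset.mul_sum]
    refine Finset.sum_congr rfl fun j hj => ?_
    have hj1 : 1 ≤ j := (Finset.mem_Icc.mp hj).1
    have hjne : (j : ℝ) ≠ 0 := by positivity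
    rw [div_pow]
    field_simp
  rw [← heq1]
  convert hsum using 1
  funext m
  exact (heq2 m).symm

lemma hasSum_col (lam t : ℝ) (m : ℕ) :
    HasSum (fun k => cc lam t k m) (if m = 0 then (1 : ℝ) else 0) := by
  have hzero : ∀ k ∉ range (m + 1), cc lam t k m = 0 := by
    intro k hk
    have : m < k := by
      simp only [Finset.mem_range, not_lt] at hk
      omega
    rw [cc, innerS_eq_zero m k this, mul_zero]
  have h1 : HasSum (fun k => cc lam t k m) (∑ k ∈ range (m + 1), cc lam t k m) :=
    hasSum_sum_of_ne_finset_zero hzero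
  have h2 : ∑ k ∈ range (m + 1), cc lam t k m = if m = 0 then (1 : ℝ) else 0 := by
    have : ∑ k ∈ range (m + 1), cc lam t k m
        = ((-(lam * t)) ^ m / (Nat.factorial m : ℝ)) * ∑ k ∈ range (m + 1), innerS m k := by
      rw [Finset.mul_sum]; rfl
    rw [this, partial_sum m m]
    rcases Nat.eq_zero_or_pos m with hm | hm
    · subst hm
      norm_num [Gf_one]
    · rw [Gf_succ_self m hm, mul_zero, if_neg (by omega)]
  rwa [h2] at h1

lemma cc_bound (lam t : ℝ) (ht : 0 ≤ lam * t) (p : ℕ × ℕ) :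
    ‖cc lam t p.1 p.2‖ ≤ (2 * 2 ^ p.1 / (Nat.factorial p.1 : ℝ)) *
      ((lam * t) ^ p.2 / (Nat.factorial p.2 : ℝ)) := by
  obtain ⟨k, m⟩ := p
  simp only
  rcases Nat.lt_or_ge m k with h | h
  · rw [cc, innerS_eq_zero m k h, mul_zero, norm_zero]
    positivity
  · -- k ≤ m
    have hfk : (0 : ℝ) < (Nat.factorial k : ℝ) := by positivity
    have hIb : ‖innerS m k‖ ≤ 2 * 2 ^ k / (Nat.factorial k : ℝ) := by
      rw [innerS, norm_mul]
      have h1 : ‖(1 : ℝ) / (Nat.factorial k : ℝ)‖ = 1 / (Nat.factorial k : ℝ) := by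
        rw [Real.norm_eq_abs, abs_of_pos (by positivity)]
      rw [h1]
      have h2 : ‖∑ j ∈ Icc 1 (k + 1),
          (-1 : ℝ) ^ (k + 1 - j) * ((k + 1).choose j : ℝ) * ((j : ℝ) ^ k / (j : ℝ) ^ m)‖
          ≤ ∑ j ∈ Icc 1 (k + 1), ((k + 1).choose j : ℝ) := by
        refine (norm_sum_le _ _).trans (Finset.sum_le_sum fun j hj => ?_)
        have hj1 : 1 ≤ j := (Finset.mem_Icc.mp hj).1
        have hj1' : (1 : ℝ) ≤ (j : ℝ) := by exact_mod_cast hj1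
        have hd : (j : ℝ) ^ k / (j : ℝ) ^ m ≤ 1 := by
          rw [div_le_one (by positivity)]
          exact pow_le_pow_right₀ hj1' h
        have hd0 : (0 : ℝ) ≤ (j : ℝ) ^ k / (j : ℝ) ^ m := by positivity
        calc ‖(-1 : ℝ) ^ (k + 1 - j) * ((k + 1).choose j : ℝ) * ((j : ℝ) ^ k / (j : ℝ) ^ m)‖
            = ((k + 1).choose j : ℝ) * ((j : ℝ) ^ k / (j : ℝ) ^ m) := by
              rw [norm_mul, norm_mul, norm_pow, norm_neg, norm_one, one_pow, one_mul,
                Real.norm_eq_abs, Real.norm_eq_abs, abs_of_nonneg (by positivity),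
                abs_of_nonneg hd0]
          _ ≤ ((k + 1).choose j : ℝ) * 1 := by
              exact mul_le_mul_of_nonneg_left hd (by positivity)
          _ = ((k + 1).choose j : ℝ) := mul_one _
      have h3 : ∑ j ∈ Icc 1 (k + 1), (((k + 1).choose j : ℕ) : ℝ) ≤ 2 * 2 ^ k := by
        have hsub : Icc 1 (k + 1) ⊆ range (k + 2) := by
          intro x hx; simp only [Finset.mem_Icc, Finset.mem_range] at *; omega
        have hle : ∑ j ∈ Icc 1 (k + 1), (((k + 1).choose j : ℕ) : ℝ)
            ≤ ∑ j ∈ range (k + 2), (((k + 1).choose j : ℕ) : ℝ) :=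
          Finset.sum_le_sum_of_subset_of_nonneg hsub fun j _ _ => by positivity
        have hch : ∑ j ∈ range (k + 2), (((k + 1).choose j : ℕ) : ℝ) = 2 ^ (k + 1) := by
          exact_mod_cast congrArg (fun z : ℕ => (z : ℝ)) (Nat.sum_range_choose (k + 1))
        rw [hch] at hle
        calc ∑ j ∈ Icc 1 (k + 1), (((k + 1).choose j : ℕ) : ℝ) ≤ 2 ^ (k + 1) := hle
          _ = 2 * 2 ^ k := by ring
      calc (1 / (Nat.factorial k : ℝ)) * ‖∑ j ∈ Icc 1 (k + 1),
            (-1 : ℝ) ^ (k + 1 - j) * ((k + 1).choose j : ℝ) * ((j : ℝ) ^ k / (j : ℝ) ^ m)‖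
          ≤ (1 / (Nat.factorial k : ℝ)) * (2 * 2 ^ k) := by
            exact mul_le_mul_of_nonneg_left (h2.trans h3) (by positivity)
        _ = 2 * 2 ^ k / (Nat.factorial k : ℝ) := by ring
    have hw : ‖(-(lam * t)) ^ m / (Nat.factorial m : ℝ)‖
        = (lam * t) ^ m / (Nat.factorial m : ℝ) := by
      rw [norm_div, norm_pow, norm_neg, Real.norm_eq_abs, Real.norm_eq_abs,
        abs_of_nonneg ht, abs_of_nonneg (by positivity)]
    calc ‖cc lam t k m‖ = ‖(-(lam * t)) ^ m / (Nat.factorial m : ℝ)‖ * ‖innerS m k‖ :=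
          norm_mul _ _
      _ ≤ ((lam * t) ^ m / (Nat.factorial m : ℝ)) * (2 * 2 ^ k / (Nat.factorial k : ℝ)) := by
          rw [hw]
          exact mul_le_mul_of_nonneg_left hIb (by positivity)
      _ = (2 * 2 ^ k / (Nat.factorial k : ℝ)) * ((lam * t) ^ m / (Nat.factorial m : ℝ)) := by
          ring

set_option maxHeartbeats 1000000 in
/-- For every `t ≥ 0`, `Σ_{k=0}^∞ p(k,t) = 1`. -/
theorem stmt_1 (lam : ℝ) (hlam : 0 < lam) (t : ℝ) (ht : 0 ≤ t) :
    HasSum (fun k : ℕ => birthP lam k t) 1 := by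
  have hlt : 0 ≤ lam * t := mul_nonneg hlam.le ht
  -- the dominating array is summable
  have hf : Summable fun k : ℕ => ‖2 * 2 ^ k / (Nat.factorial k : ℝ)‖ := by
    have : Summable fun k : ℕ => 2 * ((2 : ℝ) ^ k / (Nat.factorial k : ℝ)) :=
      (Real.summable_pow_div_factorial 2).mul_left 2
    have h0 : Summable fun k : ℕ => 2 * (2 : ℝ) ^ k / (Nat.factorial k : ℝ) :=
      this.congr fun k => by ring
    exact h0.abs.congr fun k => by rw [Real.norm_eq_abs]
  have hg : Summable fun m : ℕ => ‖(lam * t) ^ m / (Nat.factorial m : ℝ)‖ := by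
    have h0 : Summable fun m : ℕ => (lam * t) ^ m / (Nat.factorial m : ℝ) :=
      Real.summable_pow_div_factorial (lam * t)
    exact h0.abs.congr fun m => by rw [Real.norm_eq_abs]
  have hgsum : Summable fun p : ℕ × ℕ =>
      (2 * 2 ^ p.1 / (Nat.factorial p.1 : ℝ)) * ((lam * t) ^ p.2 / (Nat.factorial p.2 : ℝ)) :=
    summable_mul_of_summable_norm hf hg
  have hq : Summable fun p : ℕ × ℕ => cc lam t p.1 p.2 :=
    Summable.of_norm_bounded hgsum (cc_bound lam t hlt)
  have h1 : HasSum (fun k : ℕ => birthP lam k t) (∑' p : ℕ × ℕ, cc lam t p.1 p.2) :=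
    hq.hasSum.prod_fiberwise fun k => hasSum_row lam t k
  have hswap : Summable fun p : ℕ × ℕ => cc lam t p.2 p.1 := hq.prod_symm
  have h2 : HasSum (fun m : ℕ => if m = 0 then (1 : ℝ) else 0)
      (∑' p : ℕ × ℕ, cc lam t p.2 p.1) :=
    hswap.hasSum.prod_fiberwise fun m => hasSum_col lam t m
  have heqt : (∑' p : ℕ × ℕ, cc lam t p.2 p.1) = ∑' p : ℕ × ℕ, cc lam t p.1 p.2 :=
    (Equiv.prodComm ℕ ℕ).tsum_eq (fun p : ℕ × ℕ => cc lam t p.1 p.2)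
  have hone : (∑' p : ℕ × ℕ, cc lam t p.1 p.2) = 1 := by
    rw [← heqt]
    exact h2.unique (hasSum_ite_eq 0 1)
  rwa [hone] at h1
end

section
/- The sequence p_{n,k} defined by the recursion p_{n+1,k} = (k/(k+1)) p_{n,k} + (1/k) p_{n,k-1} for n ≥ 0 and 1 ≤ k ≤ n+1, with p_{0,0} = 1, p_{n,0} = 0 for n ≥ 1, and p_{i,j} = 0 for j ≥ i+1, has the closed form p_{n,k} = (1/k!) · Σ_{i=1}^{k} (-1)^{k-i} · C(k+1, i+1) · i^k · (i/(i+1))^{n-k} for all n ≥ k ≥ 1. -/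
open Finset


lemma diff_sum (m : ℕ) (f : ℕ → ℝ) :
    ∑ j ∈ range (m+2), (-1:ℝ)^j * ((m+1).choose j) * f j
      = ∑ j ∈ range (m+1), (-1:ℝ)^j * (m.choose j) * (f j - f (j+1)) := by
  rw [Finset.sum_range_succ' (fun j => (-1:ℝ)^j * ((m+1).choose j) * f j) (m+1)]
  have e1 : ∀ j ∈ range (m+1),
      (-1:ℝ)^(j+1) * (((m+1).choose (j+1) : ℕ) : ℝ) * f (j+1)
        = -((-1:ℝ)^j * (m.choose j) * f (j+1)) + (-1:ℝ)^(j+1) * (m.choose (j+1)) * f (j+1) := by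
    intro j _
    have h : (((m+1).choose (j+1) : ℕ) : ℝ) = (m.choose j : ℝ) + (m.choose (j+1)) := by
      rw [Nat.choose_succ_succ]; push_cast; ring
    rw [h]; ring
  rw [Finset.sum_congr rfl e1, Finset.sum_add_distrib]
  have e2 : ∑ j ∈ range (m+1), (-1:ℝ)^(j+1) * ((m.choose (j+1) : ℕ) : ℝ) * f (j+1)
      = ∑ j ∈ range (m+2), (-1:ℝ)^j * (m.choose j) * f j - (-1:ℝ)^0 * ((m.choose 0 : ℕ) : ℝ) * f 0 := by
    rw [Finset.sum_range_succ' (fun j => (-1:ℝ)^j * (m.choose j) * f j) (m+1)]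
    ring
  rw [e2, Finset.sum_range_succ]
  simp only [Nat.choose_succ_self, Nat.cast_zero, mul_zero, zero_mul, add_zero, pow_zero,
    Nat.choose_zero_right, Nat.cast_one, one_mul, mul_one]
  simp only [mul_sub, Finset.sum_sub_distrib]
  have e3 : ∑ x ∈ range m, -((-1:ℝ)^x * (m.choose x) * f (x+1)) + -((-1:ℝ)^m * (m.choose m) * f (m+1))
      = -∑ x ∈ range (m+1), (-1:ℝ)^x * (m.choose x) * f (x+1) := by
    rw [← Finset.sum_range_succ (fun x => -((-1:ℝ)^x * (m.choose x) * f (x+1))) m,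
      Finset.sum_neg_distrib]
  have e4 : ∑ j ∈ range (m+2), (-1:ℝ)^j * (m.choose j) * f j
      = ∑ j ∈ range (m+1), (-1:ℝ)^j * (m.choose j) * f j := by
    rw [Finset.sum_range_succ]; simp
  rw [e3, e4]; ring


lemma findiff : ∀ m : ℕ, ∀ k : ℕ, k < m → ∀ x : ℝ,
    ∑ j ∈ range (m+1), (-1:ℝ)^j * (m.choose j) * (x + j)^k = 0 := by
  intro m
  induction m with
  | zero => intro k hk; omega
  | succ m ih =>
    intro k hk x
    rw [show m + 1 + 1 = m + 2 from rfl, diff_sum m (fun j => (x + j)^k)]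
    have e1 : ∀ j ∈ range (m+1),
        (-1:ℝ)^j * (m.choose j) * ((x + j)^k - (x + (j+1:ℕ))^k)
          = ∑ t ∈ range k, -((k.choose t : ℝ) * (-1:ℝ)^j * (m.choose j) * (x + j)^t) := by
      intro j _
      have hb : (x + (j+1:ℕ))^k = ∑ t ∈ range (k+1), (x + j)^t * (k.choose t) := by
        push_cast
        rw [show x + (j + 1 : ℝ) = (x + j) + 1 by ring, add_pow]
        simp
      have hS : ∑ t ∈ range k, ((k.choose t : ℝ) * (-1:ℝ)^j * (m.choose j) * (x + j)^t)
          = ((-1:ℝ)^j * (m.choose j)) * ∑ t ∈ range k, (x + j)^t * (k.choose t) := by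
        rw [Finset.mul_sum]; exact Finset.sum_congr rfl fun t _ => by ring
      rw [Finset.sum_neg_distrib, hS, hb, Finset.sum_range_succ]
      simp only [Nat.choose_self, Nat.cast_one, mul_one]
      ring
    rw [Finset.sum_congr rfl e1, Finset.sum_comm]
    apply Finset.sum_eq_zero
    intro t ht
    simp only [Finset.mem_range] at ht
    have hS2 : ∑ j ∈ range (m+1), -((k.choose t : ℝ) * (-1:ℝ)^j * (m.choose j) * (x + j)^t)
        = (-(k.choose t : ℝ)) * ∑ j ∈ range (m+1), (-1:ℝ)^j * (m.choose j) * (x + j)^t := by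
      rw [Finset.mul_sum]; exact Finset.sum_congr rfl fun j _ => by ring
    rw [hS2, ih t (by omega) x, mul_zero]

lemma S_eq_one (k : ℕ) (hk : 1 ≤ k) :
    ∑ i ∈ Icc 1 k, (-1:ℝ)^(k-i) * (((k+1).choose (i+1) : ℕ) : ℝ) * (i:ℝ)^k = 1 := by
  have h := findiff (k+1) k (by omega) (-1)
  rw [Finset.sum_range_succ' _ (k+1)] at h
  rw [Finset.sum_range_succ' _ k] at h
  simp only [pow_zero, Nat.choose_zero_right, Nat.cast_one, one_mul, Nat.cast_zero, add_zero,
    Nat.cast_one] at h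
  -- h : ∑ j ∈ range k, (-1)^(j+2) * ((k+1).choose (j+2)) * (-1 + (j+2))^k + term1 + term0 = 0
  have h1 : ((-1:ℝ) + (1:ℕ)) ^ k = 0 := by
    simp [zero_pow (by omega : k ≠ 0)]
  have hIcc : ∑ i ∈ Icc 1 k, (-1:ℝ)^(k-i) * (((k+1).choose (i+1) : ℕ) : ℝ) * (i:ℝ)^k
      = ∑ j ∈ range k, (-1:ℝ)^(k-(1+j)) * (((k+1).choose (1+j+1) : ℕ) : ℝ) * ((1+j:ℕ):ℝ)^k := by
    rw [← Finset.Ico_add_one_right_eq_Icc, Finset.sum_Ico_eq_sum_range]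
    simp
  have hsign : ∀ j ∈ range k, (-1:ℝ)^(k-(1+j)) * (((k+1).choose (1+j+1) : ℕ) : ℝ) * ((1+j:ℕ):ℝ)^k
      = -((-1:ℝ)^k * ((-1:ℝ)^(j+1+1) * (((k+1).choose (j+1+1) : ℕ) : ℝ) * ((-1:ℝ) + ((j+1+1:ℕ):ℝ))^k)) := by
    intro j hj
    simp only [Finset.mem_range] at hj
    have hs : (-1:ℝ)^(k-(1+j)) * (-1:ℝ)^(1+j) = (-1:ℝ)^k := by
      rw [← pow_add, Nat.sub_add_cancel (by omega)]
    have : (-1:ℝ)^(k-(1+j)) = (-1:ℝ)^k * (-1:ℝ)^(1+j) := by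
      have h2 : ((-1:ℝ)^(1+j)) * ((-1:ℝ)^(1+j)) = 1 := by
        rw [← pow_add, Even.neg_one_pow ⟨1+j, rfl⟩]
      calc (-1:ℝ)^(k-(1+j)) = (-1:ℝ)^(k-(1+j)) * ((-1:ℝ)^(1+j) * (-1:ℝ)^(1+j)) := by rw [h2]; ring
        _ = (-1:ℝ)^k * (-1:ℝ)^(1+j) := by rw [← mul_assoc, hs]
    rw [this]
    push_cast
    rw [show (-1:ℝ) + ((j:ℝ)+1+1) = (j:ℝ)+1 by ring]
    rw [show (1:ℝ) + (j:ℝ) = (j:ℝ) + 1 from by ring]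
    ring_nf
  have h1' : (-1:ℝ)^(0+1) * (((k+1).choose (0+1) : ℕ) : ℝ) * ((-1:ℝ) + ((0+1:ℕ):ℝ))^k = 0 := by
    simp [zero_pow (by omega : k ≠ 0)]
  rw [h1'] at h
  have hX : ∑ j ∈ range k, (-1:ℝ)^(j+1+1) * (((k+1).choose (j+1+1) : ℕ) : ℝ) * ((-1:ℝ) + ((j+1+1:ℕ):ℝ))^k
      = -(-1:ℝ)^k := by linarith
  rw [hIcc, Finset.sum_congr rfl hsign, Finset.sum_neg_distrib, ← Finset.mul_sum, hX]
  have hsq : (-1:ℝ)^k * (-1:ℝ)^k = 1 := by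
    rw [← pow_add]; exact Even.neg_one_pow ⟨k, rfl⟩
  rw [show -((-1:ℝ)^k * -(-1:ℝ)^k) = (-1:ℝ)^k * (-1:ℝ)^k by ring, hsq]


lemma key_step (k' m : ℕ) (hk' : 1 ≤ k') :
    (1 / ((Nat.factorial (k'+1)) : ℝ)) * ∑ i ∈ Icc 1 (k'+1),
        (-1:ℝ)^(k'+1-i) * (((k'+1+1).choose (i+1) : ℕ) : ℝ) * (i:ℝ)^(k'+1) * ((i:ℝ)/((i:ℝ)+1))^(m+1)
    = (((k'+1:ℕ):ℝ) / (((k'+1:ℕ):ℝ)+1)) *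
        ((1 / ((Nat.factorial (k'+1)) : ℝ)) * ∑ i ∈ Icc 1 (k'+1),
          (-1:ℝ)^(k'+1-i) * (((k'+1+1).choose (i+1) : ℕ) : ℝ) * (i:ℝ)^(k'+1) * ((i:ℝ)/((i:ℝ)+1))^m)
      + (1 / ((k'+1:ℕ):ℝ)) *
        ((1 / ((Nat.factorial k') : ℝ)) * ∑ i ∈ Icc 1 k',
          (-1:ℝ)^(k'-i) * (((k'+1).choose (i+1) : ℕ) : ℝ) * (i:ℝ)^k' * ((i:ℝ)/((i:ℝ)+1))^(m+1)) := by
  have hfac : (Nat.factorial (k'+1) : ℝ) = ((k'+1:ℕ):ℝ) * (Nat.factorial k' : ℝ) := by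
    rw [Nat.factorial_succ]; push_cast; ring
  have hfacpos : (0:ℝ) < (Nat.factorial k' : ℝ) := by positivity
  have hKpos : (0:ℝ) < ((k'+1:ℕ):ℝ) := by positivity
  -- reduce to sum identity
  have main : ∑ i ∈ Icc 1 (k'+1),
        (-1:ℝ)^(k'+1-i) * (((k'+1+1).choose (i+1) : ℕ) : ℝ) * (i:ℝ)^(k'+1) * ((i:ℝ)/((i:ℝ)+1))^(m+1)
      = (((k'+1:ℕ):ℝ) / (((k'+1:ℕ):ℝ)+1)) * ∑ i ∈ Icc 1 (k'+1),
          (-1:ℝ)^(k'+1-i) * (((k'+1+1).choose (i+1) : ℕ) : ℝ) * (i:ℝ)^(k'+1) * ((i:ℝ)/((i:ℝ)+1))^m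
        + ∑ i ∈ Icc 1 k',
          (-1:ℝ)^(k'-i) * (((k'+1).choose (i+1) : ℕ) : ℝ) * (i:ℝ)^k' * ((i:ℝ)/((i:ℝ)+1))^(m+1) := by
    rw [Finset.sum_Icc_succ_top (by omega : 1 ≤ k'+1),
        Finset.sum_Icc_succ_top (by omega : 1 ≤ k'+1), mul_add]
    have htop : (-1:ℝ)^(k'+1-(k'+1)) * (((k'+1+1).choose (k'+1+1) : ℕ) : ℝ) * ((k'+1:ℕ):ℝ)^(k'+1)
          * (((k'+1:ℕ):ℝ)/(((k'+1:ℕ):ℝ)+1))^(m+1)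
        = (((k'+1:ℕ):ℝ) / (((k'+1:ℕ):ℝ)+1)) *
          ((-1:ℝ)^(k'+1-(k'+1)) * (((k'+1+1).choose (k'+1+1) : ℕ) : ℝ) * ((k'+1:ℕ):ℝ)^(k'+1)
            * (((k'+1:ℕ):ℝ)/(((k'+1:ℕ):ℝ)+1))^m) := by
      rw [pow_succ]; ring
    rw [htop]
    have hterm : ∀ i ∈ Icc 1 k',
        (-1:ℝ)^(k'+1-i) * (((k'+1+1).choose (i+1) : ℕ) : ℝ) * (i:ℝ)^(k'+1) * ((i:ℝ)/((i:ℝ)+1))^(m+1)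
        = (((k'+1:ℕ):ℝ) / (((k'+1:ℕ):ℝ)+1)) *
            ((-1:ℝ)^(k'+1-i) * (((k'+1+1).choose (i+1) : ℕ) : ℝ) * (i:ℝ)^(k'+1) * ((i:ℝ)/((i:ℝ)+1))^m)
          + (-1:ℝ)^(k'-i) * (((k'+1).choose (i+1) : ℕ) : ℝ) * (i:ℝ)^k' * ((i:ℝ)/((i:ℝ)+1))^(m+1) := by
      intro i hi
      simp only [Finset.mem_Icc] at hi
      obtain ⟨hi1, hi2⟩ := hi
      have hxpos : (0:ℝ) < (i:ℝ) := by exact_mod_cast hi1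
      have hx1pos : (0:ℝ) < (i:ℝ) + 1 := by linarith
      have hbin : ((k'+1+1:ℕ):ℝ) * (((k'+1).choose (i+1) : ℕ) : ℝ)
          = (((k'+1+1).choose (i+1) : ℕ) : ℝ) * (((k'+1:ℕ):ℝ) - (i:ℝ)) := by
        have h3 : (k'+1+1) * ((k'+1).choose (i+1)) = ((k'+1+1).choose (i+1)) * (k'+1-i) := by
          rw [← show k'+1+1-(i+1) = k'+1-i from by omega, ← Nat.choose_succ_right_eq,
            ← Nat.add_one_mul_choose_eq]
        have := congrArg (Nat.cast (R := ℝ)) h3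
        push_cast [Nat.cast_sub (by omega : i ≤ k'+1)] at this
        push_cast
        linarith [this]
      have hsign : (-1:ℝ)^(k'+1-i) = -(-1:ℝ)^(k'-i) := by
        rw [show k'+1-i = (k'-i)+1 from by omega, pow_succ]; ring
      have hpow : (i:ℝ)^(k'+1) = (i:ℝ)^k' * (i:ℝ) := by rw [pow_succ]
      have key2 : -((((k'+1+1).choose (i+1) : ℕ) : ℝ) * (i:ℝ) * ((i:ℝ)/((i:ℝ)+1)))
          = -((((k'+1:ℕ):ℝ)/(((k'+1:ℕ):ℝ)+1)) * ((((k'+1+1).choose (i+1) : ℕ) : ℝ) * (i:ℝ)))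
            + (((k'+1).choose (i+1) : ℕ) : ℝ) * ((i:ℝ)/((i:ℝ)+1)) := by
        have hK1pos : (0:ℝ) < ((k'+1:ℕ):ℝ) + 1 := by positivity
        push_cast at hbin ⊢
        field_simp
        linear_combination (-1:ℝ) * hbin
      rw [hsign, hpow, pow_succ ((i:ℝ)/((i:ℝ)+1)) m]
      linear_combination ((-1:ℝ)^(k'-i) * (i:ℝ)^k' * ((i:ℝ)/((i:ℝ)+1))^m) * key2
    rw [Finset.sum_congr rfl hterm, Finset.sum_add_distrib, Finset.mul_sum]
    ring
  rw [main]
  rw [hfac]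
  field_simp

/-- Closed form for the distribution of the subordinated chain with transition
probabilities `p_{k,k+1} = 1/(1+k)`, `p_{k,k} = k/(k+1)`, started at `0`. -/

theorem stmt_2 (p : ℕ → ℕ → ℝ)
    (h00 : p 0 0 = 1)
    (hn0 : ∀ n : ℕ, 1 ≤ n → p n 0 = 0)
    (hupper : ∀ i j : ℕ, i + 1 ≤ j → p i j = 0)
    (hrec : ∀ n k : ℕ, 1 ≤ k → k ≤ n + 1 →
      p (n + 1) k = ((k : ℝ) / ((k : ℝ) + 1)) * p n k + (1 / (k : ℝ)) * p n (k - 1)) :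
    ∀ n k : ℕ, 1 ≤ k → k ≤ n →
      p n k = (1 / (Nat.factorial k : ℝ)) *
        ∑ i ∈ Finset.Icc 1 k,
          (-1 : ℝ) ^ (k - i) * ((k + 1).choose (i + 1) : ℝ) * (i : ℝ) ^ k *
            ((i : ℝ) / ((i : ℝ) + 1)) ^ (n - k) := by
  have S_eq_one : ∀ k : ℕ, 1 ≤ k →
      ∑ i ∈ Icc 1 k, (-1:ℝ)^(k-i) * (((k+1).choose (i+1) : ℕ) : ℝ) * (i:ℝ)^k = 1 :=
    _root_.S_eq_one
  have key_step : ∀ k' m : ℕ, 1 ≤ k' →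
    (1 / ((Nat.factorial (k'+1)) : ℝ)) * ∑ i ∈ Icc 1 (k'+1),
        (-1:ℝ)^(k'+1-i) * (((k'+1+1).choose (i+1) : ℕ) : ℝ) * (i:ℝ)^(k'+1) * ((i:ℝ)/((i:ℝ)+1))^(m+1)
    = (((k'+1:ℕ):ℝ) / (((k'+1:ℕ):ℝ)+1)) *
        ((1 / ((Nat.factorial (k'+1)) : ℝ)) * ∑ i ∈ Icc 1 (k'+1),
          (-1:ℝ)^(k'+1-i) * (((k'+1+1).choose (i+1) : ℕ) : ℝ) * (i:ℝ)^(k'+1) * ((i:ℝ)/((i:ℝ)+1))^m)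
      + (1 / ((k'+1:ℕ):ℝ)) *
        ((1 / ((Nat.factorial k') : ℝ)) * ∑ i ∈ Icc 1 k',
          (-1:ℝ)^(k'-i) * (((k'+1).choose (i+1) : ℕ) : ℝ) * (i:ℝ)^k' * ((i:ℝ)/((i:ℝ)+1))^(m+1)) :=
    fun k' m h => _root_.key_step k' m h
  intro n
  induction n with
  | zero => intro k h1 h2; omega
  | succ n ih =>
    intro k hk1 hk2
    rcases Nat.lt_or_ge k (n+1) with hlt | hge
    · -- k ≤ n
      have hkn : k ≤ n := by omega
      have hr := hrec n k hk1 (by omega)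
      rcases Nat.lt_or_ge 1 k with h2k | h1k
      · -- 2 ≤ k
        obtain ⟨k', rfl⟩ : ∃ k', k = k'+1 := ⟨k-1, by omega⟩
        have hk'1 : 1 ≤ k' := by omega
        rw [show k'+1-1 = k' from rfl] at hr
        rw [ih (k'+1) hk1 hkn, ih k' hk'1 (by omega)] at hr
        rw [hr]
        rw [show n + 1 - (k'+1) = (n - (k'+1)) + 1 from by omega,
            show n - k' = (n - (k'+1)) + 1 from by omega]
        exact (key_step k' (n - (k'+1)) hk'1).symm
      · -- k = 1
        have hk : k = 1 := by omega
        subst hk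
        rw [show (1:ℕ)-1 = 0 from rfl, ih 1 le_rfl hkn, hn0 n (by omega)] at hr
        rw [hr]
        simp only [Finset.Icc_self, Finset.sum_singleton]
        norm_num
        conv_rhs => rw [show n = (n-1)+1 from by omega]
        rw [pow_succ]
        ring
    · -- k = n+1
      have hk : k = n+1 := by omega
      subst hk
      have hr := hrec n (n+1) (by omega) le_rfl
      rw [hupper n (n+1) le_rfl] at hr
      simp only [Nat.add_sub_cancel] at hr
      rw [hr]
      simp only [Nat.sub_self, pow_zero, mul_one]
      rw [S_eq_one (n+1) (by omega)]
      rcases Nat.eq_zero_or_pos n with rfl | hn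
      · rw [h00]; norm_num [Nat.factorial]
      · rw [ih n hn le_rfl]
        simp only [Nat.sub_self, pow_zero, mul_one]
        rw [S_eq_one n hn]
        rw [Nat.factorial_succ]
        have h1 : (0:ℝ) < (Nat.factorial n : ℝ) := by positivity
        have h2 : (0:ℝ) < ((n:ℝ)+1) := by positivity
        push_cast
        field_simp
        ring
end

section
/- For each n ≥ 0, the values p_{n,k} = (1/k!) · Σ_{i=1}^{k} (-1)^{k-i} · C(k+1, i+1) · i^k · (i/(i+1))^{n-k} for 1 ≤ k ≤ n (together with p_{0,0} = 1 and p_{n,0} = 0 for n ≥ 1) are nonnegative and sum to 1 over k. -/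
open Finset

/-- Closed-form values of the `n`-step distribution of the chain with
`p_{k,k+1} = 1/(1+k)`, `p_{k,k} = k/(k+1)`, started at `0`. -/
noncomputable def chainP (n k : ℕ) : ℝ :=
  if k = 0 then (if n = 0 then 1 else 0)
  else (1 / (Nat.factorial k : ℝ)) *
    ∑ i ∈ Finset.Icc 1 k,
      (-1 : ℝ) ^ (k - i) * ((k + 1).choose (i + 1) : ℝ) * (i : ℝ) ^ k *
        ((i : ℝ) / ((i : ℝ) + 1)) ^ (n - k)


noncomputable def chainQ : ℕ → ℕ → ℝ
  | 0, 0 => 1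
  | 0, _ + 1 => 0
  | _ + 1, 0 => 0
  | n + 1, k + 1 => chainQ n (k + 1) * (((k : ℝ) + 1) / ((k : ℝ) + 2))
      + chainQ n k * (1 / ((k : ℝ) + 1))

lemma chainQ_succ (n k : ℕ) : chainQ (n+1) (k+1)
    = chainQ n (k + 1) * (((k : ℝ) + 1) / ((k : ℝ) + 2)) + chainQ n k * (1 / ((k : ℝ) + 1)) := by
  rfl

lemma chainQ_nonneg : ∀ n k, 0 ≤ chainQ n k := by
  intro n
  induction n with
  | zero =>
    intro k
    rcases k with _ | k
    · norm_num [chainQ]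
    · norm_num [chainQ]
  | succ n ih =>
    intro k
    rcases k with _ | k
    · simp [chainQ]
    · rw [chainQ_succ]
      refine add_nonneg (mul_nonneg (ih _) (by positivity)) (mul_nonneg (ih _) (by positivity))

lemma chainQ_eq_zero : ∀ n k, n < k → chainQ n k = 0 := by
  intro n
  induction n with
  | zero =>
    intro k hk
    rcases k with _ | k
    · omega
    · norm_num [chainQ]
  | succ n ih =>
    intro k hk
    rcases k with _ | k
    · omega
    · rw [chainQ_succ, ih (k+1) (by omega), ih k (by omega), zero_mul, zero_mul, add_zero]

lemma chainQ_sum (n : ℕ) : ∑ k ∈ range (n + 1), chainQ n k = 1 := by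
  induction n with
  | zero => norm_num [chainQ]
  | succ n ih =>
    rw [Finset.sum_range_succ']
    have h0 : chainQ (n + 1) 0 = 0 := by simp [chainQ]
    rw [h0, add_zero]
    simp only [chainQ_succ]
    rw [Finset.sum_add_distrib]
    have h1 : ∑ j ∈ range (n + 1), chainQ n (j + 1) * (((j:ℝ) + 1) / ((j:ℝ) + 2))
        = ∑ j ∈ range (n + 1), chainQ n j * ((j:ℝ) / ((j:ℝ) + 1)) := by
      have h2 := Finset.sum_range_succ' (fun j => chainQ n j * ((j:ℝ) / ((j:ℝ) + 1))) (n + 1)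
      rw [Finset.sum_range_succ, chainQ_eq_zero n (n+1) (by omega), zero_mul, add_zero] at h2
      simp only [Nat.cast_zero, zero_div, mul_zero, add_zero] at h2
      calc ∑ j ∈ range (n+1), chainQ n (j+1) * (((j:ℝ)+1)/((j:ℝ)+2))
          = ∑ j ∈ range (n+1), chainQ n (j+1) * ((((j+1:ℕ)):ℝ)/((((j+1:ℕ)):ℝ)+1)) := by
            refine Finset.sum_congr rfl fun j _ => ?_
            push_cast
            ring_nf
        _ = ∑ j ∈ range (n+1), chainQ n j * ((j:ℝ)/((j:ℝ)+1)) := h2.symm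
    rw [h1, ← Finset.sum_add_distrib]
    calc ∑ j ∈ range (n+1), (chainQ n j * ((j:ℝ)/((j:ℝ)+1)) + chainQ n j * (1/((j:ℝ)+1)))
        = ∑ j ∈ range (n+1), chainQ n j := by
          refine Finset.sum_congr rfl fun k _ => ?_
          have hk : ((k:ℝ) + 1) ≠ 0 := by positivity
          have h2 : (k:ℝ)/((k:ℝ)+1) + 1/((k:ℝ)+1) = 1 := by field_simp
          rw [← mul_add, h2, mul_one]
      _ = 1 := ih


lemma A_zero : ∀ k n : ℕ, k < n →
    ∑ j ∈ range (n + 1), (-1:ℝ)^j * (n.choose j : ℝ) * (j:ℝ)^k = 0 := by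
  intro k
  induction k using Nat.strong_induction_on with
  | _ k ih =>
    intro n hkn
    rcases k with _ | t
    · have hn0 : n ≠ 0 := by omega
      have h := Int.alternating_sum_range_choose_of_ne hn0
      have h2 := congrArg (fun z : ℤ => (z : ℝ)) h
      push_cast at h2
      simpa using h2
    · obtain ⟨N, rfl⟩ : ∃ N, n = N + 1 := ⟨n - 1, by omega⟩
      rw [Finset.sum_range_succ']
      have h0 : (-1:ℝ)^0 * (((N+1).choose 0 : ℕ) : ℝ) * ((0:ℕ):ℝ)^(t+1) = 0 := by
        norm_num
      rw [h0, add_zero]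
      have hstep : ∀ j ∈ range (N + 1), (-1:ℝ)^(j+1) * (((N+1).choose (j+1) : ℕ) : ℝ) * (((j+1:ℕ)):ℝ)^(t+1)
          = ∑ s ∈ range (t + 1), (-((N:ℝ)+1)) * (t.choose s : ℝ) * ((-1:ℝ)^j * (N.choose j : ℝ) * (j:ℝ)^s) := by
        intro j _
        have hc : (((N+1).choose (j+1) : ℕ) : ℝ) * ((j:ℝ)+1) = ((N:ℝ)+1) * (N.choose j : ℝ) := by
          have := Nat.add_one_mul_choose_eq N j
          exact_mod_cast this.symm
        have hp : ((j:ℝ)+1)^t = ∑ s ∈ range (t+1), (j:ℝ)^s * (t.choose s : ℝ) := by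
          have := add_pow (j:ℝ) 1 t
          simpa using this
        push_cast
        rw [show ((j:ℝ)+1)^(t+1) = ((j:ℝ)+1)^t * ((j:ℝ)+1) from pow_succ _ _, hp,
          Finset.sum_mul, Finset.mul_sum]
        refine Finset.sum_congr rfl fun s _ => ?_
        linear_combination ((-1:ℝ)^(j+1) * (j:ℝ)^s * ((t.choose s : ℕ):ℝ)) * hc
      rw [Finset.sum_congr rfl hstep, Finset.sum_comm]
      refine Finset.sum_eq_zero fun s hs => ?_
      rw [← Finset.mul_sum, ih s (by simpa using hs) N (by simp at hs; omega), mul_zero]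



lemma chainP_diag (k : ℕ) : chainP k k = 1 / (k.factorial : ℝ) := by
  rcases Nat.eq_zero_or_pos k with h | h
  · subst h; simp [chainP]
  · rw [chainP, if_neg (by omega)]
    simp only [Nat.sub_self, pow_zero, mul_one]
    rw [S_eq_one k h, mul_one]

lemma chainP_formula (n k : ℕ) (h : k ≠ 0 ∨ n ≠ 0) :
    chainP n k = (1 / (Nat.factorial k : ℝ)) *
      ∑ i ∈ Finset.Icc 1 k,
        (-1 : ℝ) ^ (k - i) * ((k + 1).choose (i + 1) : ℝ) * (i : ℝ) ^ k *
          ((i : ℝ) / ((i : ℝ) + 1)) ^ (n - k) := by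
  rcases Nat.eq_zero_or_pos k with hk | hk
  · subst hk
    have hn : n ≠ 0 := h.resolve_left (fun g => g rfl)
    rw [chainP]
    simp only [if_pos rfl, if_neg hn]
    simp
  · rw [chainP, if_neg (by omega)]

lemma perterm (u c1 c2 I E K P : ℝ) (hI : I + 1 ≠ 0) (hK : K + 2 ≠ 0)
    (hc : (K + 1 - I) * c2 = (K + 2) * c1) :
    u * -1 * c2 * (P * I) * (E * (I / (I + 1)))
      = (K + 1) / (K + 2) * (u * -1 * c2 * (P * I) * E) + u * c1 * P * (E * (I / (I + 1))) := by
  field_simp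
  linear_combination (u * P * I * E) * hc

lemma chainP_rec (n k : ℕ) (hk : k + 1 ≤ n) :
    chainP (n+1) (k+1)
      = chainP n (k+1) * (((k:ℝ) + 1) / ((k:ℝ) + 2)) + chainP n k * (1 / ((k:ℝ) + 1)) := by
  rw [chainP_formula (n+1) (k+1) (Or.inl (by omega)),
      chainP_formula n (k+1) (Or.inl (by omega)),
      chainP_formula n k (Or.inr (by omega))]
  have he : n + 1 - (k + 1) = n - k := by omega
  rw [he]
  have hzero : (-1:ℝ)^(k - (k+1)) * (((k+1).choose ((k+1)+1) : ℕ) : ℝ) * (((k+1:ℕ)):ℝ)^k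
      * ((((k+1:ℕ)):ℝ) / ((((k+1:ℕ)):ℝ) + 1))^(n - k) = 0 := by
    rw [Nat.choose_eq_zero_of_lt (by omega)]
    norm_num
  have hext : ∑ i ∈ Icc 1 k, (-1:ℝ)^(k-i) * (((k+1).choose (i+1) : ℕ) : ℝ) * (i:ℝ)^k
        * ((i:ℝ) / ((i:ℝ)+1))^(n-k)
      = ∑ i ∈ Icc 1 (k+1), (-1:ℝ)^(k-i) * (((k+1).choose (i+1) : ℕ) : ℝ) * (i:ℝ)^k
        * ((i:ℝ) / ((i:ℝ)+1))^(n-k) := by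
    rw [Finset.sum_Icc_succ_top (show 1 ≤ k + 1 by omega), hzero, add_zero]
  rw [hext]
  have he2 : n - k = (n - (k+1)) + 1 := by omega
  have key : ∑ i ∈ Icc 1 (k+1), (-1:ℝ)^(k+1-i) * (((k+2).choose (i+1) : ℕ) : ℝ) * (i:ℝ)^(k+1)
        * ((i:ℝ) / ((i:ℝ)+1))^(n-k)
      = (((k:ℝ) + 1) / ((k:ℝ) + 2)) *
        ∑ i ∈ Icc 1 (k+1), (-1:ℝ)^(k+1-i) * (((k+2).choose (i+1) : ℕ) : ℝ) * (i:ℝ)^(k+1)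
          * ((i:ℝ) / ((i:ℝ)+1))^(n-(k+1))
      + ∑ i ∈ Icc 1 (k+1), (-1:ℝ)^(k-i) * (((k+1).choose (i+1) : ℕ) : ℝ) * (i:ℝ)^k
          * ((i:ℝ) / ((i:ℝ)+1))^(n-k) := by
    rw [Finset.mul_sum, ← Finset.sum_add_distrib]
    refine Finset.sum_congr rfl fun i hi => ?_
    simp only [Finset.mem_Icc] at hi
    have hi1 : (i:ℝ) + 1 ≠ 0 := by positivity
    have hk2 : (k:ℝ) + 2 ≠ 0 := by positivity
    by_cases hie : i = k + 1
    · subst hie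
      rw [Nat.choose_eq_zero_of_lt (show k + 1 < (k+1) + 1 by omega)]
      rw [Nat.sub_self, pow_zero, he2, pow_succ]
      push_cast
      ring
    · have hile : i ≤ k := by omega
      have hs : k + 1 - i = (k - i) + 1 := by omega
      have hcnat : (k + 1 - i) * (k+2).choose (i+1) = (k+2) * (k+1).choose (i+1) := by
        have h1 : (k+2).choose (i+2) * (i+2) = (k+2).choose (i+1) * ((k+2) - (i+1)) :=
          Nat.choose_succ_right_eq (k+2) (i+1)
        have h2 : (k+2) * (k+1).choose (i+1) = (k+2).choose (i+2) * (i+2) :=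
          Nat.add_one_mul_choose_eq (k+1) (i+1)
        rw [h2, h1, show k + 2 - (i+1) = k + 1 - i by omega, mul_comm]
      have hc : ((k:ℝ) + 1 - (i:ℝ)) * (((k+2).choose (i+1) : ℕ) : ℝ)
          = ((k:ℝ) + 2) * (((k+1).choose (i+1) : ℕ) : ℝ) := by
        have h4 := congrArg (fun z : ℕ => (z : ℝ)) hcnat
        push_cast [Nat.cast_sub (show i ≤ k + 1 by omega)] at h4
        convert h4 using 2 <;> push_cast <;> ring
      rw [hs, pow_succ (-1:ℝ) (k-i), pow_succ (i:ℝ) k, he2,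
        pow_succ ((i:ℝ)/((i:ℝ)+1)) (n - (k+1))]
      exact perterm ((-1:ℝ)^(k-i)) _ _ (i:ℝ) _ (k:ℝ) ((i:ℝ)^k) hi1 hk2 hc
  rw [key]
  have hfac : (((k+1).factorial : ℕ) : ℝ) = ((k.factorial : ℕ) : ℝ) * ((k:ℝ) + 1) := by
    rw [Nat.factorial_succ]; push_cast; ring
  have hf0 : ((k.factorial : ℕ) : ℝ) ≠ 0 := by
    exact_mod_cast Nat.factorial_ne_zero k
  have hk1 : (k:ℝ) + 1 ≠ 0 := by positivity
  rw [hfac]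
  field_simp

lemma chainQ_diag (k : ℕ) : chainQ k k = 1 / (k.factorial : ℝ) := by
  induction k with
  | zero => norm_num [chainQ]
  | succ k ih =>
    rw [chainQ_succ, chainQ_eq_zero k (k+1) (by omega), zero_mul, zero_add, ih,
      Nat.factorial_succ]
    push_cast
    rw [div_mul_div_comm, one_mul]
    ring_nf

lemma chainP_eq_chainQ : ∀ n, ∀ k, k ≤ n → chainP n k = chainQ n k := by
  intro n
  induction n with
  | zero =>
    intro k hk
    interval_cases k
    simp [chainP, chainQ]
  | succ n ih =>
    intro k hk
    rcases k with _ | j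
    · simp [chainP, chainQ]
    rcases eq_or_lt_of_le hk with h | h
    · have hj : n = j := by omega
      subst hj
      rw [chainP_diag, chainQ_diag]
    · have hjn : j + 1 ≤ n := by omega
      rw [chainP_rec n j hjn, chainQ_succ, ih (j+1) hjn, ih j (by omega)]

/-- For each `n`, the values `p_{n,k}` (for `0 ≤ k ≤ n`) are nonnegative and sum to `1`. -/
theorem stmt_3 (n : ℕ) :
    (∀ k : ℕ, k ≤ n → 0 ≤ chainP n k) ∧
    (∑ k ∈ Finset.range (n + 1), chainP n k = 1) := by
  constructor
  · intro k hk
    rw [chainP_eq_chainQ n k hk]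
    exact chainQ_nonneg n k
  · rw [Finset.sum_congr rfl fun k hk => chainP_eq_chainQ n k (by
      simp only [Finset.mem_range] at hk; omega)]
    exact chainQ_sum n
end

section
/- Let X_n be the chain with p_{k,k+1} = 1/(1+k), p_{k,k} = k/(k+1), X_0 = 0, and let μ_n = E(X_n) = (-1+√(1+8n))/2. Then for all 0 < ε < 1: P(X_n ≥ (1+ε)μ_n) ≤ exp(-ε²μ_n/3) and P(X_n ≤ (1-ε)μ_n) ≤ exp(-ε²μ_n/3). -/
open Finset

/- ## Auxiliary analytic lemmas -/

private lemma aux_exp_quad_upper {x : ℝ} (hx : 0 ≤ x) : Real.exp (x - x^2/2) ≤ 1 + x := by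
  rcases le_total x 1 with h1 | h1
  · have he : Real.exp x ≤ 1 + x + x^2/2 + x^3 * (2/9) := by
      have := Real.exp_bound' hx h1 (n := 3) (by norm_num)
      have h3 : (∑ m ∈ Finset.range 3, x ^ m / m.factorial) = 1 + x + x^2/2 := by
        simp [Finset.sum_range_succ, Nat.factorial]
      rw [h3] at this
      norm_num [Nat.factorial] at this
      linarith
    have hq : (1:ℝ) + x^2/2 ≤ Real.exp (x^2/2) := by
      have := Real.add_one_le_exp (x^2/2); linarith
    have hpos : (0:ℝ) < 1 + x^2/2 := by positivity
    have key : Real.exp (x - x^2/2) * (1 + x^2/2) ≤ (1 + x) * (1 + x^2/2) := by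
      calc Real.exp (x - x^2/2) * (1 + x^2/2)
          ≤ Real.exp (x - x^2/2) * Real.exp (x^2/2) := by
            exact mul_le_mul_of_nonneg_left hq (Real.exp_pos _).le
        _ = Real.exp x := by rw [← Real.exp_add]; ring_nf
        _ ≤ 1 + x + x^2/2 + x^3 * (2/9) := he
        _ ≤ (1 + x) * (1 + x^2/2) := by nlinarith [pow_nonneg hx 3]
    exact le_of_mul_le_mul_right key hpos
  · have h2 : x - x^2/2 ≤ 1/2 := by nlinarith [sq_nonneg (x - 1)]
    have h3 : Real.exp (x - x^2/2) ≤ Real.exp (1/2) := Real.exp_le_exp.mpr h2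
    have h4 : Real.exp (1/2) ≤ 2 := by
      have hsq : Real.exp (1/2) * Real.exp (1/2) = Real.exp 1 := by
        rw [← Real.exp_add]; norm_num
      nlinarith [Real.exp_one_lt_d9, Real.exp_pos (1/2 : ℝ)]
    linarith

private lemma aux_exp_lower_quarter {x : ℝ} (hx : 0 ≤ x) (hx4 : x ≤ 1/4) :
    Real.exp (-x - 2/3 * x^2) ≤ 1 - x := by
  set y : ℝ := x + 2/3 * x^2 with hy
  have hy0 : 0 ≤ y := by positivity
  have hq : 1 + y + y^2/2 ≤ Real.exp y := by
    have := Real.quadratic_le_exp_of_nonneg hy0; nlinarith [this]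
  have hpos : (0:ℝ) < 1 + y + y^2/2 := by positivity
  have h1 : 1 ≤ (1 - x) * (1 + y + y^2/2) := by
    rw [hy]; nlinarith [sq_nonneg x, pow_nonneg hx 3, pow_nonneg hx 4, pow_nonneg hx 5]
  have hey : Real.exp (-x - 2/3*x^2) = (Real.exp y)⁻¹ := by
    rw [← Real.exp_neg]; congr 1; rw [hy]; ring
  rw [hey]
  have hEpos := Real.exp_pos y
  rw [inv_le_iff_one_le_mul₀ hEpos]
  have h2 : (1 - x) * (1 + y + y^2/2) ≤ (1 - x) * Real.exp y :=
    mul_le_mul_of_nonneg_left hq (by linarith)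
  nlinarith [h1, h2]

private lemma aux_exp_cubic_lower {s : ℝ} (hs : 0 ≤ s) :
    1 + s ≤ Real.exp (s - s^2/2 + s^3/3) := by
  set t : ℝ := s - s^2/2 + s^3/3 with ht
  have ht0 : 0 ≤ t := by
    rw [ht]; nlinarith [sq_nonneg (2*s - 3), mul_nonneg hs (sq_nonneg (2*s-3))]
  rcases le_total s (3/2) with h1 | h1
  · have hsum : 1 + t + t^2/2 + t^3/6 ≤ Real.exp t := by
      have := Real.sum_le_exp_of_nonneg ht0 4
      have h4 : (∑ i ∈ Finset.range 4, t ^ i / i.factorial) = 1 + t + t^2/2 + t^3/6 := by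
        simp [Finset.sum_range_succ, Nat.factorial]
      linarith [h4 ▸ this]
    have hpoly : 1 + s ≤ 1 + t + t^2/2 + t^3/6 := by
      rw [ht]
      nlinarith [pow_nonneg hs 4, pow_nonneg hs 5, pow_nonneg hs 6, pow_nonneg hs 7,
        pow_nonneg hs 8, pow_nonneg hs 9, sq_nonneg s, mul_nonneg hs hs,
        sq_nonneg (s - 1), mul_nonneg (pow_nonneg hs 4) (sub_nonneg.mpr h1)]
    linarith
  · have hts : s ≤ t := by rw [ht]; nlinarith [sq_nonneg s]
    have := Real.add_one_le_exp t
    linarith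

private lemma aux_sum_Ioc_id (a : ℕ) :
    (∑ j ∈ Finset.Ioc 0 a, (j:ℝ)) = (a:ℝ)*((a:ℝ)+1)/2 := by
  induction a with
  | zero => simp
  | succ b ih =>
    rw [Finset.sum_Ioc_succ_top (Nat.zero_le b), ih]
    push_cast; ring

private lemma aux_sum_Ioc_sq (a : ℕ) :
    (∑ j ∈ Finset.Ioc 0 a, (j:ℝ)^2) = (a:ℝ)*((a:ℝ)+1)*(2*(a:ℝ)+1)/6 := by
  induction a with
  | zero => simp
  | succ b ih =>
    rw [Finset.sum_Ioc_succ_top (Nat.zero_le b), ih]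
    push_cast; ring

/- ## Exponent optimization lemmas -/

private lemma aux_T1 {A μ : ℝ} (hA : 2 ≤ A) (hA2 : A ≤ 2*μ) (hμ : 1 ≤ μ) :
    40*A*(A+1)*(2*A+1) ≤ 81*μ*(A+μ+1)^2 := by
  nlinarith [sq_nonneg (A - 2*μ), sq_nonneg (A+μ+1),
    mul_nonneg (sub_nonneg.mpr hA2) (sub_nonneg.mpr hμ),
    mul_nonneg (sub_nonneg.mpr hA) (sub_nonneg.mpr hA2), sq_nonneg A,
    mul_pos (lt_of_lt_of_le zero_lt_one hμ) (lt_of_lt_of_le zero_lt_two hA)]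

private lemma aux_T2 {A μ : ℝ} (hA : 2*μ ≤ A) (hA2 : A ≤ 2*μ+1) (hμ : 1 ≤ μ) :
    40*μ*A*(A+1)*(2*A+1) ≤ 81*(A-μ)^2*(A+μ+1)^2 := by
  nlinarith [mul_nonneg (sub_nonneg.mpr hA) (sub_nonneg.mpr hμ), sq_nonneg (A - 2*μ),
    mul_nonneg (sub_nonneg.mpr hA2) (sub_nonneg.mpr hμ), sq_nonneg (A+μ+1),
    mul_nonneg (sub_nonneg.mpr hA) (sub_nonneg.mpr hA2)]

private lemma aux_h60 {A μ : ℝ} (hA : 2 ≤ A) (hμ : 1 ≤ μ) (hPQ : μ^2+μ ≤ A*(A+1)) :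
    60*(μ^2+μ)*(A*(A+1)-(μ^2+μ)) ≤ (A*(A+1))^2*(2*A+1)^2 := by
  have h1 : (μ^2+μ)*(A*(A+1)-(μ^2+μ)) ≤ (A*(A+1))^2/4 := by
    nlinarith [sq_nonneg (A*(A+1) - 2*(μ^2+μ))]
  have h2 : (0:ℝ) ≤ A*(A+1) := by nlinarith
  nlinarith [sq_nonneg (A*(A+1)), mul_nonneg (mul_nonneg h2 h2) (sub_nonneg.mpr hA)]

set_option maxHeartbeats 1000000 in
private lemma aux_upper_exponent {μ ε A nr : ℝ} (hμ : 1 ≤ μ) (hε0 : 0 < ε) (hε1 : ε < 1)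
    (hAu : (1+ε)*μ ≤ A) (hAu1 : A ≤ (1+ε)*μ + 1) (hA2 : 2 ≤ A)
    (hn : μ^2 + μ = 2*nr) :
    ∃ s : ℝ, 0 < s ∧
      nr*(s - s^2/2 + s^3/3) - (s*(A*(A+1)/2) - s^2/2*(A*(A+1)*(2*A+1)/6)) ≤ -(ε^2*μ)/3 := by
  have hnr : nr = (μ^2+μ)/2 := by linarith
  subst hnr
  have hμ0 : (0:ℝ) < μ := by linarith
  have hd : ε*μ ≤ A - μ := by nlinarith
  have hdpos : (0:ℝ) < A - μ := lt_of_lt_of_le (mul_pos hε0 hμ0) hd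
  have hQP : (μ^2+μ) < A*(A+1) := by nlinarith [mul_pos hdpos (show (0:ℝ) < A+μ+1 by linarith)]
  set W : ℝ := (A*(A+1) - (μ^2+μ))/2 with hW
  set E : ℝ := A*(A+1)*(2*A+1)/12 with hE
  have hWpos : 0 < W := by rw [hW]; linarith
  have hEpos : 0 < E := by rw [hE]; nlinarith
  refine ⟨W/(2*E), by positivity, ?_⟩
  set s : ℝ := W/(2*E) with hs
  have hs0 : 0 < s := by positivity
  have hW2E : W = 2*s*E := by rw [hs]; field_simp
  have hI : 5*(μ^2+μ)*(s*E) ≤ 3*E^2 := by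
    have h60 := aux_h60 hA2 hμ hQP.le
    have : 5*((μ^2+μ)/2)*W ≤ 3*E^2 := by rw [hW, hE]; linarith [h60]
    rw [hW2E] at this; linarith
  have hII : 40*ε^2*μ*E ≤ 108*s^2*E^2 := by
    have h27 : 40*ε^2*μ*E ≤ 27*W^2 := by
      rcases le_total A (2*μ) with hc | hc
      · have T1 := aux_T1 hA2 hc hμ
        have e1 : ε^2*μ^2 ≤ (A-μ)^2 := by nlinarith [mul_pos hε0 hμ0]
        have hgoalμ : μ*(40*ε^2*μ*E) ≤ μ*(27*W^2) := by
          have hq : (0:ℝ) ≤ 40*A*(A+1)*(2*A+1) := by nlinarith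
          have m1 : (A-μ)^2 * (40*A*(A+1)*(2*A+1)) ≤ (A-μ)^2 * (81*μ*(A+μ+1)^2) :=
            mul_le_mul_of_nonneg_left T1 (sq_nonneg _)
          have m2 : (ε^2*μ^2) * (40*A*(A+1)*(2*A+1)) ≤ (A-μ)^2 * (40*A*(A+1)*(2*A+1)) :=
            mul_le_mul_of_nonneg_right e1 hq
          rw [hW, hE]; linarith [m1, m2]
        exact le_of_mul_le_mul_left hgoalμ hμ0
      · have hA2μ1 : A ≤ 2*μ + 1 := by nlinarith
        have T2 := aux_T2 hc hA2μ1 hμ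
        have hε2 : ε^2 ≤ 1 := by nlinarith
        have hq : (0:ℝ) ≤ 40*μ*A*(A+1)*(2*A+1) := by nlinarith
        have m2 : ε^2*(40*μ*A*(A+1)*(2*A+1)) ≤ 1*(40*μ*A*(A+1)*(2*A+1)) :=
          mul_le_mul_of_nonneg_right hε2 hq
        rw [hW, hE]; linarith [T2, m2]
    calc 40*ε^2*μ*E ≤ 27*W^2 := h27
      _ = 108*s^2*E^2 := by rw [hW2E]; ring
  have hg : ((μ^2+μ)/2)*s^3 + ε^2*μ ≤ 3*s^2*E := by
    have h1 : (5*(μ^2+μ)*(s*E))*s^2 ≤ (3*E^2)*s^2 := mul_le_mul_of_nonneg_right hI (sq_nonneg s)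
    have h2 : 10*E*(((μ^2+μ)/2)*s^3 + ε^2*μ) ≤ 10*E*(3*s^2*E) := by linarith [h1, hII]
    exact le_of_mul_le_mul_left h2 (by positivity)
  have hgA : ((μ^2+μ)/2)*s^3 + ε^2*μ ≤ 3*s^2*(A*(A+1)*(2*A+1)/12) := by rw [← hE]; exact hg
  have hsQ : s*(A*(A+1)) = 4*s^2*(A*(A+1)*(2*A+1)/12) + s*(μ^2+μ) := by
    have h0 : s*(A*(A+1)) = 2*(s*W) + s*(μ^2+μ) := by rw [hW]; ring
    rw [h0, hW2E, hE]; ring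
  have hPs : (0:ℝ) ≤ (μ^2+μ)*s^2/4 := by positivity
  linarith [hgA, hsQ, hPs]

private lemma aux_T3 {A μ : ℝ} (hA : 0 ≤ A) (hA2 : A ≤ μ) (hμ : 1 ≤ μ) :
    6*μ^3 + 2*A*(A+1)*(2*A+1) ≤ 9*μ^2*(μ+A+1) := by
  nlinarith [mul_nonneg hA (sub_nonneg.mpr hA2), mul_nonneg (mul_nonneg hA hA) (sub_nonneg.mpr hA2),
    sq_nonneg (μ - A), mul_nonneg (sub_nonneg.mpr hA2) (sub_nonneg.mpr hμ), sq_nonneg A]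

set_option maxHeartbeats 1000000 in
private lemma aux_lower_exponent {μ ε A nr : ℝ} (hμ : 1 ≤ μ) (hε0 : 0 < ε) (hε1 : ε < 1)
    (hA0 : 0 ≤ A) (hAb : A ≤ (1-ε)*μ) (hn : μ^2 + μ = 2*nr) :
    -(nr*(ε/μ)) + (ε/μ)*(A*(A+1)/2) + 2/3*(ε/μ)^2*(A*(A+1)*(2*A+1)/6) ≤ -(ε^2*μ)/3 := by
  have hnr : nr = (μ^2+μ)/2 := by linarith
  subst hnr
  have hμ0 : (0:ℝ) < μ := by linarith
  have hμne : μ ≠ 0 := ne_of_gt hμ0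
  have hPQ : ε*μ ≤ μ - A := by nlinarith
  have hAμ : A ≤ μ := by nlinarith [mul_pos hε0 hμ0]
  have T3 := aux_T3 hA0 hAμ hμ
  have m0 : ε*μ*(μ+A+1) ≤ (μ^2+μ) - A*(A+1) := by
    have h1 : ε*μ*(μ+A+1) ≤ (μ-A)*(μ+A+1) :=
      mul_le_mul_of_nonneg_right hPQ (by linarith)
    nlinarith [h1]
  have m0' : 9*(ε*μ)*(ε*μ*(μ+A+1)) ≤ 9*(ε*μ)*((μ^2+μ) - A*(A+1)) :=
    mul_le_mul_of_nonneg_left m0 (by positivity)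
  have t3' : ε^2*(6*μ^3 + 2*A*(A+1)*(2*A+1)) ≤ ε^2*(9*μ^2*(μ+A+1)) :=
    mul_le_mul_of_nonneg_left T3 (sq_nonneg ε)
  have GG : 6*ε^2*μ^3 + 2*ε^2*(A*(A+1))*(2*A+1) ≤ 9*(ε*μ)*((μ^2+μ) - A*(A+1)) := by
    nlinarith [m0', t3']
  have h18 : (0:ℝ) < 18*μ^2 := by positivity
  rw [← mul_le_mul_iff_right₀ h18]
  have eL : 18*μ^2*(-((μ^2+μ)/2*(ε/μ)) + (ε/μ)*(A*(A+1)/2) + 2/3*(ε/μ)^2*(A*(A+1)*(2*A+1)/6))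
      = -(9*(ε*μ)*((μ^2+μ) - A*(A+1))) + 2*ε^2*(A*(A+1))*(2*A+1) := by
    field_simp; ring
  have eR : 18*μ^2*(-(ε^2*μ)/3) = -(6*ε^2*μ^3) := by ring
  rw [eL, eR]
  linarith [GG]

/- ## The product supermartingale functions -/

open Classical in
noncomputable def upF (s : ℝ) (k : ℕ) : ℝ := ∏ j ∈ Finset.Ioc 0 k, (1 + s*(j:ℝ))

open Classical in
noncomputable def loF (s : ℝ) (k : ℕ) : ℝ :=
  ∏ j ∈ Finset.Ioc 0 k, (if s*((j:ℝ)+1) ≤ 1 then 1 - s*(j:ℝ) else 0)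

private lemma upF_zero (s : ℝ) : upF s 0 = 1 := by simp [upF]

private lemma upF_succ (s : ℝ) (k : ℕ) : upF s (k+1) = upF s k * (1 + s*((k:ℝ)+1)) := by
  rw [upF, upF, Finset.prod_Ioc_succ_top (Nat.zero_le k)]
  push_cast; ring

private lemma aux_one_le_prod {s : ℝ} (hs : 0 ≤ s) (S : Finset ℕ) :
    (1:ℝ) ≤ ∏ j ∈ S, (1 + s*(j:ℝ)) := by
  have h := Finset.prod_le_prod (f := fun _ : ℕ => (1:ℝ)) (g := fun j : ℕ => 1 + s*(j:ℝ))
    (s := S) (fun _ _ => zero_le_one) (fun j _ => by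
      nlinarith [mul_nonneg hs (Nat.cast_nonneg (α := ℝ) j)])
  simpa using h

private lemma upF_one_le {s : ℝ} (hs : 0 ≤ s) (k : ℕ) : 1 ≤ upF s k :=
  aux_one_le_prod hs _

private lemma upF_nonneg {s : ℝ} (hs : 0 ≤ s) (k : ℕ) : 0 ≤ upF s k :=
  le_trans zero_le_one (upF_one_le hs k)

private lemma upF_mono {s : ℝ} (hs : 0 ≤ s) {a k : ℕ} (h : a ≤ k) : upF s a ≤ upF s k := by
  have h0 : (0:ℝ) ≤ upF s a := upF_nonneg hs a
  unfold upF at h0 ⊢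
  rw [← Finset.prod_Ioc_consecutive _ (Nat.zero_le a) h]
  exact le_mul_of_one_le_right h0 (aux_one_le_prod hs _)

private lemma upF_H {s : ℝ} (k : ℕ) :
    ((k:ℝ)/((k:ℝ)+1)) * upF s k + (1/((k:ℝ)+1)) * upF s (k+1) = (1+s) * upF s k := by
  rw [upF_succ]
  have hk : ((k:ℝ)+1) ≠ 0 := by positivity
  field_simp
  ring

private lemma upF_lower {s : ℝ} (hs : 0 ≤ s) (a : ℕ) :
    Real.exp (s*((a:ℝ)*((a:ℝ)+1)/2) - s^2/2*((a:ℝ)*((a:ℝ)+1)*(2*(a:ℝ)+1)/6)) ≤ upF s a := by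
  have hsum : (∑ j ∈ Finset.Ioc 0 a, (s*(j:ℝ) - (s*(j:ℝ))^2/2))
      = s*((a:ℝ)*((a:ℝ)+1)/2) - s^2/2*((a:ℝ)*((a:ℝ)+1)*(2*(a:ℝ)+1)/6) := by
    have e0 : ∀ j ∈ Finset.Ioc 0 a, s*(j:ℝ) - (s*(j:ℝ))^2/2 = s*(j:ℝ) - s^2/2*(j:ℝ)^2 := by
      intro j _; ring
    rw [Finset.sum_congr rfl e0, Finset.sum_sub_distrib, ← Finset.mul_sum, ← Finset.mul_sum,
      aux_sum_Ioc_id, aux_sum_Ioc_sq]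
  rw [← hsum, Real.exp_sum, upF]
  apply Finset.prod_le_prod
  · intro j _; exact (Real.exp_pos _).le
  · intro j _; exact aux_exp_quad_upper (by positivity)

private lemma loF_zero (s : ℝ) : loF s 0 = 1 := by simp [loF]

private lemma loF_succ (s : ℝ) (k : ℕ) :
    loF s (k+1) = loF s k * (if s*((k:ℝ)+1+1) ≤ 1 then 1 - s*((k:ℝ)+1) else 0) := by
  rw [loF, loF, Finset.prod_Ioc_succ_top (Nat.zero_le k)]
  simp only [Nat.cast_add, Nat.cast_one]

private lemma loF_factor_nonneg {s : ℝ} (hs : 0 ≤ s) (j : ℕ) :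
    0 ≤ (if s*((j:ℝ)+1) ≤ 1 then 1 - s*(j:ℝ) else 0) := by
  split_ifs with h
  · have : s*(j:ℝ) ≤ s*((j:ℝ)+1) := by nlinarith
    linarith
  · exact le_refl 0

private lemma loF_factor_le_one {s : ℝ} (hs : 0 ≤ s) (j : ℕ) :
    (if s*((j:ℝ)+1) ≤ 1 then 1 - s*(j:ℝ) else 0) ≤ 1 := by
  split_ifs with h
  · have : 0 ≤ s*(j:ℝ) := by positivity
    linarith
  · linarith

private lemma loF_nonneg {s : ℝ} (hs : 0 ≤ s) (k : ℕ) : 0 ≤ loF s k :=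
  Finset.prod_nonneg (fun j _ => loF_factor_nonneg hs j)

private lemma loF_anti {s : ℝ} (hs : 0 ≤ s) {a k : ℕ} (h : k ≤ a) : loF s a ≤ loF s k := by
  rw [loF, loF, ← Finset.prod_Ioc_consecutive _ (Nat.zero_le k) h]
  apply mul_le_of_le_one_right
  · exact Finset.prod_nonneg (fun j _ => loF_factor_nonneg hs j)
  · exact Finset.prod_le_one (fun j _ => loF_factor_nonneg hs j) (fun j _ => loF_factor_le_one hs j)

private lemma loF_H {s : ℝ} (hs : 0 ≤ s) (hs1 : s ≤ 1) (k : ℕ) :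
    ((k:ℝ)/((k:ℝ)+1)) * loF s k + (1/((k:ℝ)+1)) * loF s (k+1) ≤ (1-s) * loF s k := by
  have hk1 : (0:ℝ) < (k:ℝ)+1 := by positivity
  by_cases h1 : s*((k:ℝ)+1) ≤ 1
  · rw [loF_succ]
    by_cases h2 : s*((k:ℝ)+1+1) ≤ 1
    · rw [if_pos h2]
      apply le_of_eq
      field_simp
      ring
    · rw [if_neg h2, mul_zero, mul_zero, add_zero]
      have hF := loF_nonneg hs k
      have hcoef : (k:ℝ)/((k:ℝ)+1) ≤ 1 - s := by
        rw [div_le_iff₀ hk1]; nlinarith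
      exact mul_le_mul_of_nonneg_right hcoef hF
  · have hk0 : 1 ≤ k := by
      by_contra hk
      push_neg at hk
      interval_cases k
      · simp at h1; linarith
    have hFk : loF s k = 0 := by
      rw [loF]
      apply Finset.prod_eq_zero (Finset.mem_Ioc.mpr ⟨hk0, le_refl k⟩)
      rw [if_neg h1]
    rw [loF_succ, hFk]
    simp

private lemma loF_lower {s : ℝ} (hs : 0 ≤ s) {a : ℕ} (ha1 : s*((a:ℝ)+1) ≤ 1)
    (ha4 : s*(a:ℝ) ≤ 1/4) :
    Real.exp (-(s*((a:ℝ)*((a:ℝ)+1)/2)) - 2/3*s^2*((a:ℝ)*((a:ℝ)+1)*(2*(a:ℝ)+1)/6)) ≤ loF s a := by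
  have hsum : (∑ j ∈ Finset.Ioc 0 a, (-(s*(j:ℝ)) - 2/3*(s*(j:ℝ))^2))
      = -(s*((a:ℝ)*((a:ℝ)+1)/2)) - 2/3*s^2*((a:ℝ)*((a:ℝ)+1)*(2*(a:ℝ)+1)/6) := by
    have e0 : ∀ j ∈ Finset.Ioc 0 a, -(s*(j:ℝ)) - 2/3*(s*(j:ℝ))^2
        = (-s)*(j:ℝ) + (-(2/3*s^2))*(j:ℝ)^2 := by
      intro j _; ring
    rw [Finset.sum_congr rfl e0, Finset.sum_add_distrib, ← Finset.mul_sum, ← Finset.mul_sum,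
      aux_sum_Ioc_id, aux_sum_Ioc_sq]
    ring
  rw [← hsum, Real.exp_sum, loF]
  apply Finset.prod_le_prod
  · intro j _; exact (Real.exp_pos _).le
  · intro j hj
    rw [Finset.mem_Ioc] at hj
    have hja : (j:ℝ) ≤ (a:ℝ) := by exact_mod_cast hj.2
    have hcond : s*((j:ℝ)+1) ≤ 1 := by nlinarith
    rw [if_pos hcond]
    have hx0 : 0 ≤ s*(j:ℝ) := by positivity
    have hx4 : s*(j:ℝ) ≤ 1/4 := by nlinarith
    exact aux_exp_lower_quarter hx0 hx4

open Classical in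
/-- Chernoff-type deviation bounds for the chain with `p_{k,k+1} = 1/(1+k)`,
`p_{k,k} = k/(k+1)`, `X_0 = 0`, with mean `μ_n = (-1+√(1+8n))/2`:
for `0 < ε < 1`, `P(X_n ≥ (1+ε)μ_n) ≤ exp(-ε²μ_n/3)` and
`P(X_n ≤ (1-ε)μ_n) ≤ exp(-ε²μ_n/3)`. -/
theorem stmt_7 (p : ℕ → ℕ → ℝ)
    (h00 : p 0 0 = 1)
    (hn0 : ∀ n : ℕ, 1 ≤ n → p n 0 = 0)
    (hupper : ∀ i j : ℕ, i + 1 ≤ j → p i j = 0)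
    (hrec : ∀ n k : ℕ, 1 ≤ k → k ≤ n + 1 →
      p (n + 1) k = ((k : ℝ) / ((k : ℝ) + 1)) * p n k + (1 / (k : ℝ)) * p n (k - 1))
    (m : ℕ → ℝ) (hm : ∀ n, m n = (-1 + Real.sqrt (1 + 8 * (n : ℝ))) / 2) :
    ∀ n : ℕ, ∀ ε : ℝ, 0 < ε → ε < 1 →
      ((∑ k ∈ (Finset.range (n + 1)).filter (fun k : ℕ => (1 + ε) * m n ≤ (k : ℝ)), p n k) ≤
        Real.exp (-(ε ^ 2 * m n) / 3)) ∧
      ((∑ k ∈ (Finset.range (n + 1)).filter (fun k : ℕ => (k : ℝ) ≤ (1 - ε) * m n), p n k) ≤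
        Real.exp (-(ε ^ 2 * m n) / 3)) := by
  have hpos : ∀ n k, 0 ≤ p n k := by
    intro n
    induction n with
    | zero =>
      intro k
      match k with
      | 0 => rw [h00]; norm_num
      | (k+1) => rw [hupper 0 (k+1) (by omega)]
    | succ n ih =>
      intro k
      match k with
      | 0 => rw [hn0 (n+1) (by omega)]
      | (k+1) =>
        by_cases hk : k + 1 ≤ n + 1
        · rw [hrec n (k+1) (by omega) hk]
          have c1 : (0:ℝ) ≤ ((k+1:ℕ):ℝ) / (((k+1:ℕ):ℝ) + 1) := by positivity
          have c2 : (0:ℝ) ≤ 1 / ((k+1:ℕ):ℝ) := by positivity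
          exact add_nonneg (mul_nonneg c1 (ih (k+1))) (mul_nonneg c2 (ih k))
        · rw [hupper (n+1) (k+1) (by omega)]
  have key : ∀ (f : ℕ → ℝ) (c : ℝ), 0 ≤ c → (∀ k, 0 ≤ f k) →
      (∀ k : ℕ, ((k:ℝ)/((k:ℝ)+1)) * f k + (1/((k:ℝ)+1)) * f (k+1) ≤ c * f k) →
      ∀ n, (∑ k ∈ Finset.range (n+1), p n k * f k) ≤ c^n * f 0 := by
    intro f c hc hf hH
    intro n
    induction n with
    | zero => simp [h00]
    | succ n ih =>
      have step : (∑ k ∈ Finset.range (n+2), p (n+1) k * f k)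
          ≤ c * ∑ k ∈ Finset.range (n+1), p n k * f k := by
        have e1 : (∑ k ∈ Finset.range (n+2), p (n+1) k * f k)
            = (∑ k ∈ Finset.range (n+1), p (n+1) (k+1) * f (k+1)) + p (n+1) 0 * f 0 :=
          Finset.sum_range_succ' _ (n+1)
        have e2 : ∀ k ∈ Finset.range (n+1), p (n+1) (k+1) * f (k+1)
            = (((k:ℝ)+1)/((k:ℝ)+2)) * p n (k+1) * f (k+1) + (1/((k:ℝ)+1)) * p n k * f (k+1) := by
          intro k hk
          rw [Finset.mem_range] at hk
          rw [hrec n (k+1) (by omega) (by omega)]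
          push_cast
          ring_nf
        rw [e1, hn0 (n+1) (by omega), Finset.sum_congr rfl e2]
        rw [Finset.sum_add_distrib]
        have e3 : (∑ k ∈ Finset.range (n+1), (((k:ℝ)+1)/((k:ℝ)+2)) * p n (k+1) * f (k+1))
            = ∑ k ∈ Finset.range (n+1), ((k:ℝ)/((k:ℝ)+1)) * p n k * f k := by
          have e4 : (∑ k ∈ Finset.range (n+2), ((k:ℝ)/((k:ℝ)+1)) * p n k * f k)
              = (∑ k ∈ Finset.range (n+1), (((k:ℝ)+1)/(((k:ℝ)+1)+1)) * p n (k+1) * f (k+1))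
                + ((0:ℝ)/((0:ℝ)+1)) * p n 0 * f 0 := by
            have := Finset.sum_range_succ' (fun k => ((k:ℝ)/((k:ℝ)+1)) * p n k * f k) (n+1)
            rw [this]; push_cast; ring_nf
          have e5 : (∑ k ∈ Finset.range (n+2), ((k:ℝ)/((k:ℝ)+1)) * p n k * f k)
              = (∑ k ∈ Finset.range (n+1), ((k:ℝ)/((k:ℝ)+1)) * p n k * f k)
                + (((n+1:ℕ):ℝ)/(((n+1:ℕ):ℝ)+1)) * p n (n+1) * f (n+1) :=
            Finset.sum_range_succ _ (n+1)
          rw [hupper n (n+1) le_rfl] at e5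
          have e4' : (∑ k ∈ Finset.range (n+1), (((k:ℝ)+1)/(((k:ℝ)+1)+1)) * p n (k+1) * f (k+1))
              = ∑ k ∈ Finset.range (n+2), ((k:ℝ)/((k:ℝ)+1)) * p n k * f k := by
            rw [e4]; simp
          calc (∑ k ∈ Finset.range (n+1), (((k:ℝ)+1)/((k:ℝ)+2)) * p n (k+1) * f (k+1))
              = ∑ k ∈ Finset.range (n+1), (((k:ℝ)+1)/(((k:ℝ)+1)+1)) * p n (k+1) * f (k+1) := by
                apply Finset.sum_congr rfl; intro k _; ring_nf
            _ = ∑ k ∈ Finset.range (n+2), ((k:ℝ)/((k:ℝ)+1)) * p n k * f k := e4'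
            _ = ∑ k ∈ Finset.range (n+1), ((k:ℝ)/((k:ℝ)+1)) * p n k * f k := by
                rw [e5]; ring
        rw [e3]
        rw [← Finset.sum_add_distrib]
        have e6 : ∀ k ∈ Finset.range (n+1),
            ((k:ℝ)/((k:ℝ)+1)) * p n k * f k + (1/((k:ℝ)+1)) * p n k * f (k+1)
            ≤ c * (p n k * f k) := by
          intro k _
          have h := hH k
          have hp := hpos n k
          calc ((k:ℝ)/((k:ℝ)+1)) * p n k * f k + (1/((k:ℝ)+1)) * p n k * f (k+1)
              = p n k * (((k:ℝ)/((k:ℝ)+1)) * f k + (1/((k:ℝ)+1)) * f (k+1)) := by ring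
            _ ≤ p n k * (c * f k) := mul_le_mul_of_nonneg_left h hp
            _ = c * (p n k * f k) := by ring
        calc (∑ k ∈ Finset.range (n+1),
              (((k:ℝ)/((k:ℝ)+1)) * p n k * f k + (1/((k:ℝ)+1)) * p n k * f (k+1)) + 0 * f 0)
            = ∑ k ∈ Finset.range (n+1),
              (((k:ℝ)/((k:ℝ)+1)) * p n k * f k + (1/((k:ℝ)+1)) * p n k * f (k+1)) := by ring
          _ ≤ ∑ k ∈ Finset.range (n+1), c * (p n k * f k) := Finset.sum_le_sum e6
          _ = c * ∑ k ∈ Finset.range (n+1), p n k * f k := by rw [Finset.mul_sum]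
      calc (∑ k ∈ Finset.range (n+2), p (n+1) k * f k)
          ≤ c * ∑ k ∈ Finset.range (n+1), p n k * f k := step
        _ ≤ c * (c^n * f 0) := mul_le_mul_of_nonneg_left ih hc
        _ = c^(n+1) * f 0 := by ring
  intro n ε hε0 hε1
  by_cases hnz : n = 0
  · subst hnz
    have hm0 : m 0 = 0 := by
      rw [hm 0]
      rw [show ((1:ℝ) + 8*((0:ℕ):ℝ)) = 1 by norm_num, Real.sqrt_one]
      norm_num
    constructor
    · have hfil : (Finset.range 1).filter (fun k : ℕ => (1+ε) * m 0 ≤ (k:ℝ)) = Finset.range 1 := by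
        apply Finset.filter_true_of_mem
        intro k _
        rw [hm0, mul_zero]
        positivity
      rw [hfil, Finset.sum_range_one, h00, hm0]
      simp
    · have hfil : (Finset.range 1).filter (fun k : ℕ => (k:ℝ) ≤ (1-ε) * m 0) = Finset.range 1 := by
        apply Finset.filter_true_of_mem
        intro k hk
        rw [Finset.mem_range] at hk
        have : k = 0 := by omega
        subst this
        rw [hm0, mul_zero]
        norm_num
      rw [hfil, Finset.sum_range_one, h00, hm0]
      simp
  · have hn1 : 1 ≤ n := Nat.one_le_iff_ne_zero.mpr hnz
    have hnn : (1:ℝ) ≤ (n:ℝ) := by exact_mod_cast hn1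
    have h8 : (0:ℝ) ≤ 1 + 8*(n:ℝ) := by positivity
    have hS := Real.sq_sqrt h8
    have hSnn := Real.sqrt_nonneg (1 + 8*(n:ℝ))
    have hP : (m n)^2 + (m n) = 2*(n:ℝ) := by rw [hm n]; nlinarith [hS]
    have hμ1 : 1 ≤ m n := by
      have h9 : (3:ℝ) ≤ Real.sqrt (1 + 8*(n:ℝ)) := by
        have h3 : (3:ℝ) = Real.sqrt 9 := by
          rw [show (9:ℝ) = 3^2 by norm_num, Real.sqrt_sq (by norm_num : (0:ℝ) ≤ 3)]
        rw [h3]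
        exact Real.sqrt_le_sqrt (by linarith)
      rw [hm n]
      linarith
    have hμ0 : (0:ℝ) < m n := by linarith
    constructor
    · -- upper tail
      have hu1 : 1 < (1+ε) * m n := by nlinarith
      have hu0 : (0:ℝ) ≤ (1+ε) * m n := by nlinarith
      have hAu : (1+ε) * m n ≤ ((⌈(1+ε) * m n⌉₊ : ℕ):ℝ) := Nat.le_ceil _
      have hAu1 : ((⌈(1+ε) * m n⌉₊ : ℕ):ℝ) ≤ (1+ε) * m n + 1 := (Nat.ceil_lt_add_one hu0).le
      have hA2 : (2:ℝ) ≤ ((⌈(1+ε) * m n⌉₊ : ℕ):ℝ) := by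
        have h2a : 1 < ⌈(1+ε) * m n⌉₊ := Nat.lt_ceil.mpr (by exact_mod_cast hu1)
        exact_mod_cast h2a
      obtain ⟨s, hs0, hEXP⟩ := aux_upper_exponent hμ1 hε0 hε1 hAu hAu1 hA2 hP
      set a : ℕ := ⌈(1+ε) * m n⌉₊ with ha
      have hkey := key (upF s) (1+s) (by linarith) (upF_nonneg hs0.le)
        (fun k => (upF_H k).le) n
      rw [upF_zero, mul_one] at hkey
      set filt := (Finset.range (n + 1)).filter (fun k : ℕ => (1 + ε) * m n ≤ (k : ℝ)) with hfilt
      have h1 : (∑ k ∈ filt, p n k) * upF s a ≤ ∑ k ∈ filt, p n k * upF s k := by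
        rw [Finset.sum_mul]
        apply Finset.sum_le_sum
        intro k hk
        rw [hfilt, Finset.mem_filter] at hk
        have hak : a ≤ k := Nat.ceil_le.mpr hk.2
        exact mul_le_mul_of_nonneg_left (upF_mono hs0.le hak) (hpos n k)
      have h2 : (∑ k ∈ filt, p n k * upF s k) ≤ ∑ k ∈ Finset.range (n+1), p n k * upF s k :=
        Finset.sum_le_sum_of_subset_of_nonneg (Finset.filter_subset _ _)
          (fun k _ _ => mul_nonneg (hpos n k) (upF_nonneg hs0.le k))
      have hfa : (0:ℝ) < upF s a := lt_of_lt_of_le zero_lt_one (upF_one_le hs0.le a)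
      have htail : (∑ k ∈ filt, p n k) ≤ (1+s)^n / upF s a := by
        rw [le_div_iff₀ hfa]
        calc (∑ k ∈ filt, p n k) * upF s a ≤ ∑ k ∈ filt, p n k * upF s k := h1
          _ ≤ ∑ k ∈ Finset.range (n+1), p n k * upF s k := h2
          _ ≤ (1+s)^n := hkey
      have hcn : (1+s)^n ≤ Real.exp ((n:ℝ)*(s - s^2/2 + s^3/3)) := by
        calc (1+s)^n ≤ (Real.exp (s - s^2/2 + s^3/3))^n :=
              pow_le_pow_left₀ (by linarith) (aux_exp_cubic_lower hs0.le) n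
          _ = Real.exp ((n:ℝ)*(s - s^2/2 + s^3/3)) := (Real.exp_nat_mul _ n).symm
      calc (∑ k ∈ filt, p n k) ≤ (1+s)^n / upF s a := htail
        _ ≤ Real.exp ((n:ℝ)*(s - s^2/2 + s^3/3)) /
              Real.exp (s*((a:ℝ)*((a:ℝ)+1)/2) - s^2/2*((a:ℝ)*((a:ℝ)+1)*(2*(a:ℝ)+1)/6)) :=
            div_le_div₀ (Real.exp_pos _).le hcn (Real.exp_pos _) (upF_lower hs0.le a)
        _ = Real.exp ((n:ℝ)*(s - s^2/2 + s^3/3)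
              - (s*((a:ℝ)*((a:ℝ)+1)/2) - s^2/2*((a:ℝ)*((a:ℝ)+1)*(2*(a:ℝ)+1)/6))) :=
            (Real.exp_sub _ _).symm
        _ ≤ Real.exp (-(ε ^ 2 * m n) / 3) := by
            apply Real.exp_le_exp.mpr
            have := hEXP
            linarith
    · -- lower tail
      have hb0 : (0:ℝ) ≤ (1-ε) * m n := by nlinarith
      set a : ℕ := ⌊(1-ε) * m n⌋₊ with ha
      have hAb : ((a:ℕ):ℝ) ≤ (1-ε) * m n := Nat.floor_le hb0
      have hA0 : (0:ℝ) ≤ ((a:ℕ):ℝ) := Nat.cast_nonneg a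
      set s : ℝ := ε / m n with hsdef
      have hs0 : 0 < s := div_pos hε0 hμ0
      have hsε : s ≤ ε := by
        rw [hsdef, div_le_iff₀ hμ0]; nlinarith
      have hs1 : s ≤ 1 := by linarith
      have hsA : s*(a:ℝ) ≤ ε*(1-ε) := by
        calc s*(a:ℝ) ≤ s*((1-ε) * m n) := mul_le_mul_of_nonneg_left hAb hs0.le
          _ = ε*(1-ε) := by rw [hsdef]; field_simp
      have hsA4 : s*(a:ℝ) ≤ 1/4 := le_trans hsA (by nlinarith [sq_nonneg (1-2*ε)])
      have hsA1 : s*((a:ℝ)+1) ≤ 1 := by nlinarith [sq_nonneg (1-ε)]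
      have hkey := key (loF s) (1-s) (by linarith) (loF_nonneg hs0.le)
        (loF_H hs0.le hs1) n
      rw [loF_zero, mul_one] at hkey
      set filt := (Finset.range (n + 1)).filter (fun k : ℕ => (k : ℝ) ≤ (1 - ε) * m n) with hfilt
      have h1 : (∑ k ∈ filt, p n k) * loF s a ≤ ∑ k ∈ filt, p n k * loF s k := by
        rw [Finset.sum_mul]
        apply Finset.sum_le_sum
        intro k hk
        rw [hfilt, Finset.mem_filter] at hk
        have hak : k ≤ a := Nat.le_floor hk.2
        exact mul_le_mul_of_nonneg_left (loF_anti hs0.le hak) (hpos n k)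
      have h2 : (∑ k ∈ filt, p n k * loF s k) ≤ ∑ k ∈ Finset.range (n+1), p n k * loF s k :=
        Finset.sum_le_sum_of_subset_of_nonneg (Finset.filter_subset _ _)
          (fun k _ _ => mul_nonneg (hpos n k) (loF_nonneg hs0.le k))
      have hfa : (0:ℝ) < loF s a :=
        lt_of_lt_of_le (Real.exp_pos _) (loF_lower hs0.le hsA1 hsA4)
      have htail : (∑ k ∈ filt, p n k) ≤ (1-s)^n / loF s a := by
        rw [le_div_iff₀ hfa]
        calc (∑ k ∈ filt, p n k) * loF s a ≤ ∑ k ∈ filt, p n k * loF s k := h1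
          _ ≤ ∑ k ∈ Finset.range (n+1), p n k * loF s k := h2
          _ ≤ (1-s)^n := hkey
      have hcn : (1-s)^n ≤ Real.exp ((n:ℝ)*(-s)) := by
        calc (1-s)^n ≤ (Real.exp (-s))^n := by
              apply pow_le_pow_left₀ (by linarith)
              have := Real.add_one_le_exp (-s)
              linarith
          _ = Real.exp ((n:ℝ)*(-s)) := (Real.exp_nat_mul _ n).symm
      have hEXP := aux_lower_exponent hμ1 hε0 hε1 hA0 hAb hP
      rw [← hsdef] at hEXP
      calc (∑ k ∈ filt, p n k) ≤ (1-s)^n / loF s a := htail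
        _ ≤ Real.exp ((n:ℝ)*(-s)) /
              Real.exp (-(s*((a:ℝ)*((a:ℝ)+1)/2)) - 2/3*s^2*((a:ℝ)*((a:ℝ)+1)*(2*(a:ℝ)+1)/6)) :=
            div_le_div₀ (Real.exp_pos _).le hcn (Real.exp_pos _) (loF_lower hs0.le hsA1 hsA4)
        _ = Real.exp ((n:ℝ)*(-s)
              - (-(s*((a:ℝ)*((a:ℝ)+1)/2)) - 2/3*s^2*((a:ℝ)*((a:ℝ)+1)*(2*(a:ℝ)+1)/6))) :=
            (Real.exp_sub _ _).symm
        _ ≤ Real.exp (-(ε ^ 2 * m n) / 3) := by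
            apply Real.exp_le_exp.mpr
            linarith [hEXP]
end

section
/- Let θ^i_{n+1} = P(Y^i_{n+1} = 1) be the probability that the arc i → n+1 is created, i.e., the probability that the (n+1-i)-th trial of the i-th urn is a success. Then θ^i_{n+1} ~ 1/√(2(n-i)+1) as n - i → ∞. -/
open Finset Filter


namespace Stmt9

noncomputable def fZ : ℕ → ℝ := fun k => (k:ℝ) * ((k:ℝ) + 1)
noncomputable def fX : ℕ → ℝ := fun k => (k:ℝ)
noncomputable def w : ℕ → ℝ := fun k => 1 / ((k:ℝ) * ((k:ℝ) + 1))
theorem w_nonneg : ∀ k, 0 ≤ w k := by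
  intro k
  simp only [w]
  positivity

lemma R1 (x : ℝ) (hx : 1 ≤ x) :
    x / (x + 1) * (1 / (x * (x + 1))) + 1 / (x + 1) * (1 / ((x + 1) * (x + 2)))
      ≤ 1 / (x * (x + 1)) - 2/3 * (1 / (x * (x + 1))) ^ 2 := by
  have h0 : 0 < x := by linarith
  have h1 : 0 < x + 1 := by linarith
  have h2 : 0 < x + 2 := by linarith
  rw [← sub_nonneg]
  have key : 1 / (x * (x + 1)) - 2/3 * (1 / (x * (x + 1))) ^ 2
      - (x / (x + 1) * (1 / (x * (x + 1))) + 1 / (x + 1) * (1 / ((x + 1) * (x + 2))))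
      = (4*x - 4) / (3 * x^2 * (x+1)^2 * (x+2)) := by
    field_simp
    ring
  rw [key]
  exact div_nonneg (by linarith) (by positivity)

lemma R2 (x : ℝ) (hx : 1 ≤ x) :
    x / (x + 1) * (1 / (x * (x + 1))) ^ 2 + 1 / (x + 1) * (1 / ((x + 1) * (x + 2))) ^ 2
      ≤ (1 / (x * (x + 1))) ^ 2 - 8/9 * (1 / (x * (x + 1))) ^ 3 := by
  have h0 : 0 < x := by linarith
  rw [← sub_nonneg]
  have key : (1 / (x * (x + 1))) ^ 2 - 8/9 * (1 / (x * (x + 1))) ^ 3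
      - (x / (x + 1) * (1 / (x * (x + 1))) ^ 2 + 1 / (x + 1) * (1 / ((x + 1) * (x + 2))) ^ 2)
      = (4 * (9 * x * (x+1) - 2 * (x+2)^2)) / (9 * x^3 * (x+1)^3 * (x+2)^2) := by
    field_simp
    ring
  rw [key]
  refine div_nonneg (by nlinarith) (by positivity)

lemma R3 (x : ℝ) (hx : 1 ≤ x) :
    (1 / (x * (x + 1))) ^ 2 ≤ 1/2 * (1 / (x * (x + 1))) := by
  have h0 : 0 < x := by linarith
  rw [← sub_nonneg]
  have key : 1/2 * (1 / (x * (x + 1))) - (1 / (x * (x + 1))) ^ 2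
      = (x*(x+1) - 2) / (2 * (x*(x+1))^2) := by
    field_simp
  rw [key]
  exact div_nonneg (by nlinarith) (by positivity)

lemma R4 (x a : ℝ) (hx : 1 ≤ x) (ha : 1 ≤ a) :
    1 / (x + 1) ≤ (1 / Real.sqrt a) * (1 + |x * (x + 1) - a| * (1 / (x * (x + 1)))) := by
  have h0 : 0 < x := by linarith
  have ha0 : 0 < a := by linarith
  have hsa : 0 < Real.sqrt a := Real.sqrt_pos.mpr ha0
  have hz : 0 < x * (x + 1) := by positivity
  rcases le_or_gt a (x * (x + 1)) with hcase | hcase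
  · -- Z ≥ a : 1/(x+1) ≤ 1/√a  since √a ≤ √Z ≤ x+1
    have h1 : Real.sqrt a ≤ x + 1 := by
      refine le_trans (Real.sqrt_le_sqrt hcase) ?_
      rw [show x * (x+1) = (x+1)^2 - (x+1) by ring]
      refine le_trans (Real.sqrt_le_sqrt (by nlinarith : (x+1)^2 - (x+1) ≤ (x+1)^2)) ?_
      rw [Real.sqrt_sq (by linarith)]
    have h2 : 1 / (x + 1) ≤ 1 / Real.sqrt a := by
      apply one_div_le_one_div_of_le hsa h1
    refine le_trans h2 ?_
    nlinarith [abs_nonneg (x * (x + 1) - a), one_div_pos.mpr hsa, mul_nonneg (abs_nonneg (x * (x + 1) - a)) (le_of_lt (one_div_pos.mpr hz))]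
  · -- Z < a : RHS = (1/√a)(a/Z) = √a/Z ≥ ... need x ≤ √a
    have habs : |x * (x + 1) - a| = a - x * (x+1) := by
      rw [abs_of_neg (by linarith)]
      ring
    rw [habs]
    have hxa : x ≤ Real.sqrt a := by
      rw [show x = Real.sqrt (x^2) from (Real.sqrt_sq h0.le).symm]
      apply Real.sqrt_le_sqrt
      nlinarith
    -- RHS = (1/√a) * (a / Z)  = √a / Z
    have hRHS : (1 / Real.sqrt a) * (1 + (a - x * (x+1)) * (1 / (x * (x + 1))))
        = Real.sqrt a / (x * (x+1)) := by
      have hsq : Real.sqrt a * Real.sqrt a = a := Real.mul_self_sqrt ha0.le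
      field_simp
      rw [Real.sq_sqrt ha0.le]
      ring
    rw [hRHS]
    rw [div_le_div_iff₀ (by linarith) hz]
    -- 1 * (x(x+1)) ≤ √a * (x+1)
    nlinarith [hxa, hsa]

lemma N1 (x D : ℝ) (hD : 1 ≤ D) (hx0 : 0 ≤ x) (hxh : x ≤ 1/2) (hxD : x ≤ 3/(2*D)) :
    x - 2/3 * x^2 ≤ 3/(2*(D+1)) := by
  have hD0 : 0 < D := by linarith
  rcases le_or_gt D 3 with hc | hc
  · -- use x ≤ 1/2
    have key : (1/2 - x) * (1 - 2/3*(1/2 + x)) ≥ 0 :=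
      mul_nonneg (by linarith) (by linarith)
    have h13 : (1:ℝ)/3 ≤ 3/(2*(D+1)) := by
      rw [div_le_div_iff₀ (by norm_num) (by linarith)]
      linarith
    nlinarith [key]
  · -- use x ≤ 3/(2D)
    have hcD : 3/(2*D) ≤ 1/2 := by
      rw [div_le_div_iff₀ (by linarith) (by norm_num)]
      linarith
    have key : (3/(2*D) - x) * (1 - 2/3*(3/(2*D) + x)) ≥ 0 :=
      mul_nonneg (by linarith) (by linarith)
    have heq : 3/(2*D) - 2/3*(3/(2*D))^2 = (3*D - 3)/(2*D^2) := by
      field_simp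
    have h2 : (3*D - 3)/(2*D^2) ≤ 3/(2*(D+1)) := by
      rw [div_le_div_iff₀ (by positivity) (by linarith)]
      nlinarith
    nlinarith [key]

lemma N2 (x D : ℝ) (hD : 8 ≤ D) (hx0 : 0 ≤ x) (hxD : x ≤ 27/(4*D^2)) :
    x - 16*D/27 * x^2 ≤ 27/(4*(D+1)^2) := by
  have hD0 : 0 < D := by linarith
  have hc2 : 27/(4*D^2) ≤ 27/(32*D) := by
    rw [div_le_div_iff₀ (by positivity) (by positivity)]
    nlinarith
  have key : (27/(4*D^2) - x) * (1 - 16*D/27*(27/(4*D^2) + x)) ≥ 0 := by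
    refine mul_nonneg (by linarith) ?_
    have h1 : 16*D/27*(27/(4*D^2)) = 4/D := by
      field_simp
      ring
    have h2 : 16*D/27 * x ≤ 16*D/27*(27/(4*D^2)) := by
      apply mul_le_mul_of_nonneg_left hxD (by positivity)
    have h3 : (4:ℝ)/D ≤ 1/2 := by
      rw [div_le_div_iff₀ hD0 (by norm_num)]
      linarith
    nlinarith
  have heq : 27/(4*D^2) - 16*D/27*(27/(4*D^2))^2 = (27*(D - 4))/(4*D^3) := by
    field_simp
    ring
  have h2 : (27*(D - 4))/(4*D^3) ≤ 27/(4*(D+1)^2) := by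
    rw [div_le_div_iff₀ (by positivity) (by positivity)]
    nlinarith
  nlinarith [key]

theorem sqrtTendsto : Tendsto Real.sqrt atTop atTop := by
  refine (tendsto_rpow_atTop (by norm_num : (0:ℝ) < 1/2)).congr' ?_
  filter_upwards [eventually_ge_atTop (0:ℝ)] with x hx
  exact (Real.sqrt_eq_rpow x).symm

theorem natTendsto : Tendsto (fun d : ℕ => (d:ℝ)) atTop atTop :=
  tendsto_natCast_atTop_atTop

theorem lowTendsto : Tendsto (fun d : ℕ => 1 - 1/(1 + Real.sqrt (2*(d:ℝ)))) atTop (nhds 1) := by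
  have h1 : Tendsto (fun d : ℕ => 2*(d:ℝ)) atTop atTop :=
    (tendsto_const_mul_atTop_of_pos (by norm_num)).mpr natTendsto
  have h2 : Tendsto (fun d : ℕ => 1 + Real.sqrt (2*(d:ℝ))) atTop atTop :=
    tendsto_atTop_add_const_left _ 1 (sqrtTendsto.comp h1)
  have h3 : Tendsto (fun d : ℕ => 1/(1 + Real.sqrt (2*(d:ℝ)))) atTop (nhds 0) :=
    tendsto_const_nhds.div_atTop h2
  simpa using tendsto_const_nhds.sub h3

theorem upTendsto : Tendsto (fun d : ℕ =>
    Real.sqrt (1 + 1/(2*(d:ℝ))) * (1 + 7 / Real.sqrt (Real.sqrt (d:ℝ)))) atTop (nhds 1) := by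
  have h1 : Tendsto (fun d : ℕ => 2*(d:ℝ)) atTop atTop :=
    (tendsto_const_mul_atTop_of_pos (by norm_num)).mpr natTendsto
  have h2 : Tendsto (fun d : ℕ => 1 + 1/(2*(d:ℝ))) atTop (nhds 1) := by
    have := (tendsto_const_nhds (x := (1:ℝ)) (f := atTop (α := ℕ))).add
      ((tendsto_const_nhds (x := (1:ℝ))).div_atTop h1)
    simpa using this
  have h3 : Tendsto (fun d : ℕ => Real.sqrt (1 + 1/(2*(d:ℝ)))) atTop (nhds 1) := by
    have := h2.sqrt
    simpa using this
  have h4 : Tendsto (fun d : ℕ => 7 / Real.sqrt (Real.sqrt (d:ℝ))) atTop (nhds 0) :=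
    tendsto_const_nhds.div_atTop (sqrtTendsto.comp (sqrtTendsto.comp natTendsto))
  have h5 : Tendsto (fun d : ℕ => 1 + 7 / Real.sqrt (Real.sqrt (d:ℝ))) atTop (nhds 1) := by
    simpa using tendsto_const_nhds.add h4
  simpa using h3.mul h5



/-- expectation of `f` under the time-`d` law. -/
noncomputable def Ex (p : ℕ → ℕ → ℝ) (f : ℕ → ℝ) (d : ℕ) : ℝ :=
  ∑ k ∈ Finset.range (d + 1), f k * p d k

variable {p : ℕ → ℕ → ℝ}

lemma Ex_step
    (hn0 : ∀ n : ℕ, 1 ≤ n → p n 0 = 0)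
    (hupper : ∀ i j : ℕ, i + 1 ≤ j → p i j = 0)
    (hrec : ∀ n k : ℕ, 1 ≤ k → k ≤ n + 1 →
      p (n + 1) k = ((k : ℝ) / ((k : ℝ) + 1)) * p n k + (1 / (k : ℝ)) * p n (k - 1))
    (f : ℕ → ℝ) (d : ℕ) :
    Ex p f (d + 1) = ∑ k ∈ Finset.range (d + 1),
      (((k : ℝ) / ((k : ℝ) + 1)) * f k + (1 / ((k : ℝ) + 1)) * f (k + 1)) * p d k := by
  have h0 : p (d + 1) 0 = 0 := hn0 (d + 1) (Nat.le_add_left 1 d)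
  have hstep : Ex p f (d + 1)
      = ∑ k ∈ Finset.range (d + 1), f (k + 1) * p (d + 1) (k + 1) := by
    rw [Ex, Finset.sum_range_succ' (fun k => f k * p (d + 1) k) (d + 1), h0,
      mul_zero, add_zero]
  rw [hstep]
  have hterm : ∀ k ∈ Finset.range (d + 1),
      f (k + 1) * p (d + 1) (k + 1)
        = ((((k:ℝ)+1) / ((k:ℝ) + 2) * f (k + 1)) * p d (k + 1))
          + ((1 / ((k:ℝ) + 1)) * f (k + 1)) * p d k := by
    intro k hk
    have hk' : k < d + 1 := Finset.mem_range.mp hk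
    have hr := hrec d (k + 1) (Nat.le_add_left 1 k) (by omega)
    simp only [Nat.add_sub_cancel] at hr
    rw [hr]
    push_cast
    ring
  rw [Finset.sum_congr rfl hterm, Finset.sum_add_distrib]
  set g : ℕ → ℝ := fun k => ((k : ℝ) / ((k:ℝ) + 1) * f k) * p d k with hg
  have hgk : ∀ k ∈ Finset.range (d + 1),
      (((k:ℝ)+1) / ((k:ℝ) + 2) * f (k + 1)) * p d (k + 1) = g (k + 1) := by
    intro k hk
    simp only [hg]
    push_cast
    ring
  have hA : ∑ k ∈ Finset.range (d + 1),
      (((k:ℝ)+1) / ((k:ℝ) + 2) * f (k + 1)) * p d (k + 1)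
      = ∑ k ∈ Finset.range (d + 1), g k := by
    rw [Finset.sum_congr rfl hgk]
    have h1 : ∑ k ∈ Finset.range (d + 2), g k
        = ∑ k ∈ Finset.range (d + 1), g (k + 1) + g 0 :=
      Finset.sum_range_succ' g (d + 1)
    have h2 : ∑ k ∈ Finset.range (d + 2), g k
        = ∑ k ∈ Finset.range (d + 1), g k + g (d + 1) :=
      Finset.sum_range_succ g (d + 1)
    have hg0 : g 0 = 0 := by simp [hg]
    have hgd : g (d + 1) = 0 := by
      have : p d (d + 1) = 0 := hupper d (d + 1) le_rfl
      simp [hg, this]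
    rw [hg0, add_zero] at h1
    rw [hgd, add_zero] at h2
    rw [← h1, h2]
  rw [hA, ← Finset.sum_add_distrib]
  exact Finset.sum_congr rfl fun k _ => by simp only [hg]; ring

lemma p_nonneg
    (h00 : p 0 0 = 1)
    (hn0 : ∀ n : ℕ, 1 ≤ n → p n 0 = 0)
    (hupper : ∀ i j : ℕ, i + 1 ≤ j → p i j = 0)
    (hrec : ∀ n k : ℕ, 1 ≤ k → k ≤ n + 1 →
      p (n + 1) k = ((k : ℝ) / ((k : ℝ) + 1)) * p n k + (1 / (k : ℝ)) * p n (k - 1)) :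
    ∀ d k, 0 ≤ p d k := by
  intro d
  induction d with
  | zero =>
    intro k
    rcases Nat.eq_zero_or_pos k with rfl | hk
    · rw [h00]; norm_num
    · rw [hupper 0 k hk]
  | succ d ih =>
    intro k
    rcases Nat.eq_zero_or_pos k with rfl | hk
    · rw [hn0 (d + 1) (Nat.le_add_left 1 d)]
    · by_cases hk2 : k ≤ d + 1
      · rw [hrec d k hk hk2]
        have h1 : (0:ℝ) ≤ (k : ℝ) / ((k : ℝ) + 1) := by positivity
        have h2 : (0:ℝ) ≤ 1 / (k : ℝ) := by positivity
        have := ih k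
        have := ih (k - 1)
        positivity
      · rw [hupper (d + 1) k (by omega)]

lemma p_sum_one
    (h00 : p 0 0 = 1)
    (hn0 : ∀ n : ℕ, 1 ≤ n → p n 0 = 0)
    (hupper : ∀ i j : ℕ, i + 1 ≤ j → p i j = 0)
    (hrec : ∀ n k : ℕ, 1 ≤ k → k ≤ n + 1 →
      p (n + 1) k = ((k : ℝ) / ((k : ℝ) + 1)) * p n k + (1 / (k : ℝ)) * p n (k - 1)) :
    ∀ d, Ex p (fun _ => (1:ℝ)) d = 1 := by
  intro d
  induction d with
  | zero => simp [Ex, h00]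
  | succ d ih =>
    rw [Ex_step hn0 hupper hrec]
    have hterm : ∀ k ∈ Finset.range (d + 1),
        (((k : ℝ) / ((k : ℝ) + 1)) * (1:ℝ) + (1 / ((k : ℝ) + 1)) * (1:ℝ)) * p d k
          = (fun _ => (1:ℝ)) k * p d k := by
      intro k hk
      have hk1 : ((k:ℝ) + 1) ≠ 0 := by positivity
      field_simp
    rw [Finset.sum_congr rfl hterm]
    exact ih


theorem sum_p_one {p : ℕ → ℕ → ℝ}
    (h00 : p 0 0 = 1)
    (hn0 : ∀ n : ℕ, 1 ≤ n → p n 0 = 0)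
    (hupper : ∀ i j : ℕ, i + 1 ≤ j → p i j = 0)
    (hrec : ∀ n k : ℕ, 1 ≤ k → k ≤ n + 1 →
      p (n + 1) k = ((k : ℝ) / ((k : ℝ) + 1)) * p n k + (1 / (k : ℝ)) * p n (k - 1)) :
    ∀ d, ∑ k ∈ Finset.range (d + 1), p d k = 1 := by
  intro d
  have h := p_sum_one h00 hn0 hupper hrec d
  simpa [Ex] using h

section

variable {p : ℕ → ℕ → ℝ}
  (h00 : p 0 0 = 1)
  (hn0 : ∀ n : ℕ, 1 ≤ n → p n 0 = 0)
  (hupper : ∀ i j : ℕ, i + 1 ≤ j → p i j = 0)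
  (hrec : ∀ n k : ℕ, 1 ≤ k → k ≤ n + 1 →
      p (n + 1) k = ((k : ℝ) / ((k : ℝ) + 1)) * p n k + (1 / (k : ℝ)) * p n (k - 1))

include h00 hn0 hupper hrec

theorem Ex_Z : ∀ d : ℕ, Ex p fZ d = 2 * d := by
  intro d
  induction d with
  | zero => simp [Ex, fZ]
  | succ d ih =>
    rw [Ex_step hn0 hupper hrec]
    have hterm : ∀ k ∈ Finset.range (d + 1),
        (((k : ℝ) / ((k : ℝ) + 1)) * fZ k + (1 / ((k : ℝ) + 1)) * fZ (k + 1)) * p d k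
          = fZ k * p d k + 2 * p d k := by
      intro k hk
      have hk1 : ((k:ℝ) + 1) ≠ 0 := by positivity
      simp only [fZ]
      push_cast
      field_simp
      ring
    rw [Finset.sum_congr rfl hterm, Finset.sum_add_distrib, ← Finset.mul_sum,
      sum_p_one h00 hn0 hupper hrec d]
    have : ∑ k ∈ Finset.range (d + 1), fZ k * p d k = Ex p fZ d := rfl
    rw [this, ih]
    push_cast
    ring

theorem m_nonneg (d : ℕ) : 0 ≤ Ex p fX d := by
  apply Finset.sum_nonneg
  intro k hk
  have h1 := p_nonneg h00 hn0 hupper hrec d k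
  have h2 : (0:ℝ) ≤ (k:ℝ) := by positivity
  simp only [fX]
  exact mul_nonneg h2 h1

theorem m_sq_le (d : ℕ) : (Ex p fX d) ^ 2 ≤ 2 * d := by
  have hp : ∀ k, 0 ≤ p d k := p_nonneg h00 hn0 hupper hrec d
  have CS := Finset.sum_mul_sq_le_sq_mul_sq (Finset.range (d + 1))
    (fun k => Real.sqrt (p d k)) (fun k => (k:ℝ) * Real.sqrt (p d k))
  have e1 : ∀ k ∈ Finset.range (d + 1),
      Real.sqrt (p d k) * ((k:ℝ) * Real.sqrt (p d k)) = fX k * p d k := by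
    intro k _
    simp only [fX]
    rw [show Real.sqrt (p d k) * ((k:ℝ) * Real.sqrt (p d k))
        = (k:ℝ) * (Real.sqrt (p d k) * Real.sqrt (p d k)) by ring,
      Real.mul_self_sqrt (hp k)]
  have e2 : ∀ k ∈ Finset.range (d + 1), Real.sqrt (p d k) ^ 2 = p d k := by
    intro k _; exact Real.sq_sqrt (hp k)
  have e3 : ∀ k ∈ Finset.range (d + 1),
      ((k:ℝ) * Real.sqrt (p d k)) ^ 2 = (k:ℝ)^2 * p d k := by
    intro k _
    rw [mul_pow, Real.sq_sqrt (hp k)]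
  rw [Finset.sum_congr rfl e1, Finset.sum_congr rfl e3, Finset.sum_congr rfl e2,
    sum_p_one h00 hn0 hupper hrec d, one_mul] at CS
  have CS' : (Ex p fX d) ^ 2 ≤ ∑ k ∈ Finset.range (d + 1), (k:ℝ)^2 * p d k := CS
  refine le_trans CS' ?_
  have : ∑ k ∈ Finset.range (d + 1), (k:ℝ)^2 * p d k
      ≤ ∑ k ∈ Finset.range (d + 1), fZ k * p d k := by
    apply Finset.sum_le_sum
    intro k _
    apply mul_le_mul_of_nonneg_right _ (hp k)
    simp only [fZ]
    nlinarith [Nat.cast_nonneg (α := ℝ) k]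
  refine le_trans this ?_
  rw [show ∑ k ∈ Finset.range (d + 1), fZ k * p d k = Ex p fZ d from rfl,
    Ex_Z h00 hn0 hupper hrec d]

theorem m_le_sqrt (d : ℕ) : Ex p fX d ≤ Real.sqrt (2 * d) := by
  have h1 := m_sq_le h00 hn0 hupper hrec d
  have h0 := m_nonneg h00 hn0 hupper hrec d
  have h2 := Real.le_sqrt h0 (y := 2 * d) (by positivity)
  rw [h2]
  exact h1

theorem Ex_Z2 : ∀ d : ℕ, Ex p (fun k => fZ k ^ 2) d
    = 4 * (d:ℝ)^2 + 4 * ∑ j ∈ Finset.range d, Ex p fX j := by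
  intro d
  induction d with
  | zero => simp [Ex, fZ]
  | succ d ih =>
    rw [Ex_step hn0 hupper hrec]
    have hterm : ∀ k ∈ Finset.range (d + 1),
        (((k : ℝ) / ((k : ℝ) + 1)) * fZ k ^ 2 + (1 / ((k : ℝ) + 1)) * fZ (k + 1) ^ 2) * p d k
          = fZ k ^ 2 * p d k + (4 * (fZ k * p d k) + (4 * (fX k * p d k) + 4 * p d k)) := by
      intro k hk
      have hk1 : ((k:ℝ) + 1) ≠ 0 := by positivity
      simp only [fZ, fX]
      push_cast
      field_simp
      ring
    rw [Finset.sum_congr rfl hterm, Finset.sum_add_distrib, Finset.sum_add_distrib,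
      Finset.sum_add_distrib, ← Finset.mul_sum, ← Finset.mul_sum, ← Finset.mul_sum,
      sum_p_one h00 hn0 hupper hrec d]
    rw [show ∑ k ∈ Finset.range (d + 1), fZ k ^ 2 * p d k
        = Ex p (fun k => fZ k ^ 2) d from rfl,
      show ∑ k ∈ Finset.range (d + 1), fZ k * p d k = Ex p fZ d from rfl,
      show ∑ k ∈ Finset.range (d + 1), fX k * p d k = Ex p fX d from rfl,
      ih, Ex_Z h00 hn0 hupper hrec d, Finset.sum_range_succ]
    push_cast
    ring

theorem Var_eq (d : ℕ) : Ex p (fun k => (fZ k - 2 * d) ^ 2) d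
    = 4 * ∑ j ∈ Finset.range d, Ex p fX j := by
  have hsplit : ∀ k ∈ Finset.range (d + 1),
      (fun k => (fZ k - 2 * (d:ℝ)) ^ 2) k * p d k
        = fZ k ^ 2 * p d k + ((-(4 * (d:ℝ))) * (fZ k * p d k)
            + (4 * (d:ℝ)^2) * p d k) := by
    intro k _
    ring
  rw [Ex, Finset.sum_congr rfl hsplit, Finset.sum_add_distrib, Finset.sum_add_distrib,
    ← Finset.mul_sum, ← Finset.mul_sum, sum_p_one h00 hn0 hupper hrec d,
    show ∑ k ∈ Finset.range (d + 1), fZ k ^ 2 * p d k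
        = Ex p (fun k => fZ k ^ 2) d from rfl,
    show ∑ k ∈ Finset.range (d + 1), fZ k * p d k = Ex p fZ d from rfl,
    Ex_Z2 h00 hn0 hupper hrec d, Ex_Z h00 hn0 hupper hrec d]
  ring

theorem Var_le (d : ℕ) : Ex p (fun k => (fZ k - 2 * d) ^ 2) d
    ≤ 4 * d * Real.sqrt (2 * d) := by
  rw [Var_eq h00 hn0 hupper hrec d]
  have : ∑ j ∈ Finset.range d, Ex p fX j ≤ ∑ j ∈ Finset.range d, Real.sqrt (2 * d) := by
    apply Finset.sum_le_sum
    intro j hj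
    refine le_trans (m_le_sqrt h00 hn0 hupper hrec j) (Real.sqrt_le_sqrt ?_)
    have : (j:ℝ) ≤ (d:ℝ) := by
      exact_mod_cast le_of_lt (Finset.mem_range.mp hj)
    linarith
  rw [Finset.sum_const, Finset.card_range, nsmul_eq_mul] at this
  linarith


theorem Ex_nonneg {f : ℕ → ℝ} (hf : ∀ k, 0 ≤ f k) (d : ℕ) : 0 ≤ Ex p f d := by
  apply Finset.sum_nonneg
  intro k _
  exact mul_nonneg (hf k) (p_nonneg h00 hn0 hupper hrec d k)

theorem p11 : p 1 1 = 1 := by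
  have h := hrec 0 1 le_rfl (by norm_num)
  have h01 : p 0 1 = 0 := hupper 0 1 le_rfl
  rw [h01] at h
  rw [h, h00]
  norm_num

theorem u_one : Ex p w 1 = 1 / 2 := by
  have h10 : p 1 0 = 0 := hn0 1 le_rfl
  rw [Ex, Finset.sum_range_succ, Finset.sum_range_one, h10,
    p11 h00 hn0 hupper hrec]
  simp [w]
  norm_num

omit h00 in
theorem Ex_step_le (d : ℕ) (hd : 1 ≤ d) (f g : ℕ → ℝ)
    (hpt : ∀ k : ℕ, 1 ≤ k →
      ((k : ℝ) / ((k : ℝ) + 1)) * f k + (1 / ((k : ℝ) + 1)) * f (k + 1) ≤ g k)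
    (hp : ∀ k, 0 ≤ p d k) :
    Ex p f (d + 1) ≤ ∑ k ∈ Finset.range (d + 1), g k * p d k := by
  rw [Ex_step hn0 hupper hrec]
  apply Finset.sum_le_sum
  intro k _
  rcases Nat.eq_zero_or_pos k with rfl | hk
  · rw [hn0 d hd]
    simp
  · exact mul_le_mul_of_nonneg_right (by exact_mod_cast hpt k hk) (hp k)

theorem u_rec (d : ℕ) (hd : 1 ≤ d) :
    Ex p w (d + 1) ≤ Ex p w d - 2/3 * Ex p (fun k => w k ^ 2) d := by
  have hp := p_nonneg h00 hn0 hupper hrec d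
  have h := Ex_step_le hn0 hupper hrec d hd w (fun k => w k - 2/3 * w k ^ 2) ?_ hp
  · refine le_trans h ?_
    rw [show (∑ k ∈ Finset.range (d + 1), (w k - 2/3 * w k ^ 2) * p d k)
        = ∑ k ∈ Finset.range (d + 1), (w k * p d k - 2/3 * (w k ^ 2 * p d k))
        from Finset.sum_congr rfl fun k _ => by ring,
      Finset.sum_sub_distrib, ← Finset.mul_sum]
    exact le_refl _
  · intro k hk
    have hx : (1:ℝ) ≤ (k:ℝ) := by exact_mod_cast hk
    have := R1 (k:ℝ) hx
    simp only [w]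
    push_cast
    convert this using 3 <;> push_cast <;> ring

theorem v_rec (d : ℕ) (hd : 1 ≤ d) :
    Ex p (fun k => w k ^ 2) (d + 1)
      ≤ Ex p (fun k => w k ^ 2) d - 8/9 * Ex p (fun k => w k ^ 3) d := by
  have hp := p_nonneg h00 hn0 hupper hrec d
  have h := Ex_step_le hn0 hupper hrec d hd (fun k => w k ^ 2)
    (fun k => w k ^ 2 - 8/9 * w k ^ 3) ?_ hp
  · refine le_trans h ?_
    rw [show (∑ k ∈ Finset.range (d + 1), (w k ^ 2 - 8/9 * w k ^ 3) * p d k)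
        = ∑ k ∈ Finset.range (d + 1), (w k ^ 2 * p d k - 8/9 * (w k ^ 3 * p d k))
        from Finset.sum_congr rfl fun k _ => by ring,
      Finset.sum_sub_distrib, ← Finset.mul_sum]
    exact le_refl _
  · intro k hk
    have hx : (1:ℝ) ≤ (k:ℝ) := by exact_mod_cast hk
    have := R2 (k:ℝ) hx
    simp only [w]
    push_cast
    convert this using 3 <;> push_cast <;> ring

theorem cs1 (d : ℕ) : (Ex p w d) ^ 2 ≤ Ex p (fun k => w k ^ 2) d := by
  have hp : ∀ k, 0 ≤ p d k := p_nonneg h00 hn0 hupper hrec d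
  have CS := Finset.sum_mul_sq_le_sq_mul_sq (Finset.range (d + 1))
    (fun k => Real.sqrt (p d k)) (fun k => w k * Real.sqrt (p d k))
  have e1 : ∀ k ∈ Finset.range (d + 1),
      Real.sqrt (p d k) * (w k * Real.sqrt (p d k)) = w k * p d k := by
    intro k _
    rw [show Real.sqrt (p d k) * (w k * Real.sqrt (p d k))
        = w k * (Real.sqrt (p d k) * Real.sqrt (p d k)) by ring,
      Real.mul_self_sqrt (hp k)]
  have e2 : ∀ k ∈ Finset.range (d + 1), Real.sqrt (p d k) ^ 2 = p d k := by
    intro k _; exact Real.sq_sqrt (hp k)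
  have e3 : ∀ k ∈ Finset.range (d + 1),
      (w k * Real.sqrt (p d k)) ^ 2 = w k ^ 2 * p d k := by
    intro k _
    rw [mul_pow, Real.sq_sqrt (hp k)]
  rw [Finset.sum_congr rfl e1, Finset.sum_congr rfl e3, Finset.sum_congr rfl e2,
    sum_p_one h00 hn0 hupper hrec d, one_mul] at CS
  exact CS

theorem cs2 (d : ℕ) : (Ex p (fun k => w k ^ 2) d) ^ 2
    ≤ Ex p w d * Ex p (fun k => w k ^ 3) d := by
  have hp : ∀ k, 0 ≤ p d k := p_nonneg h00 hn0 hupper hrec d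
  have hwp : ∀ k, 0 ≤ w k * p d k := fun k =>
    mul_nonneg (w_nonneg k) (hp k)
  have CS := Finset.sum_mul_sq_le_sq_mul_sq (Finset.range (d + 1))
    (fun k => Real.sqrt (w k * p d k)) (fun k => w k * Real.sqrt (w k * p d k))
  have e1 : ∀ k ∈ Finset.range (d + 1),
      Real.sqrt (w k * p d k) * (w k * Real.sqrt (w k * p d k)) = w k ^ 2 * p d k := by
    intro k _
    rw [show Real.sqrt (w k * p d k) * (w k * Real.sqrt (w k * p d k))
        = w k * (Real.sqrt (w k * p d k) * Real.sqrt (w k * p d k)) by ring,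
      Real.mul_self_sqrt (hwp k)]
    ring
  have e2 : ∀ k ∈ Finset.range (d + 1), Real.sqrt (w k * p d k) ^ 2 = w k * p d k := by
    intro k _; exact Real.sq_sqrt (hwp k)
  have e3 : ∀ k ∈ Finset.range (d + 1),
      (w k * Real.sqrt (w k * p d k)) ^ 2 = w k ^ 3 * p d k := by
    intro k _
    rw [mul_pow, Real.sq_sqrt (hwp k)]
    ring
  rw [Finset.sum_congr rfl e1, Finset.sum_congr rfl e3, Finset.sum_congr rfl e2] at CS
  exact CS

theorem v_le_half_u (d : ℕ) :
    Ex p (fun k => w k ^ 2) d ≤ 1/2 * Ex p w d := by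
  rw [show (1:ℝ)/2 * Ex p w d = ∑ k ∈ Finset.range (d+1), (1/2 * w k) * p d k by
    rw [Ex, Finset.mul_sum]; exact Finset.sum_congr rfl fun k _ => by ring]
  apply Finset.sum_le_sum
  intro k _
  apply mul_le_mul_of_nonneg_right _ (p_nonneg h00 hn0 hupper hrec d k)
  rcases Nat.eq_zero_or_pos k with rfl | hk
  · simp [w]
  · have hx : (1:ℝ) ≤ (k:ℝ) := by exact_mod_cast hk
    have := R3 (k:ℝ) hx
    simp only [w]
    convert this using 2

theorem u_nonneg (d : ℕ) : 0 ≤ Ex p w d :=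
  Ex_nonneg h00 hn0 hupper hrec (fun k => w_nonneg k) d

theorem v_nonneg (d : ℕ) : 0 ≤ Ex p (fun k => w k ^ 2) d :=
  Ex_nonneg h00 hn0 hupper hrec (fun k => pow_nonneg (w_nonneg k) 2) d

theorem t_nonneg (d : ℕ) : 0 ≤ Ex p (fun k => w k ^ 3) d :=
  Ex_nonneg h00 hn0 hupper hrec (fun k => pow_nonneg (w_nonneg k) 3) d

theorem u_le_half : ∀ d : ℕ, 1 ≤ d → Ex p w d ≤ 1/2 := by
  intro d hd
  induction d, hd using Nat.le_induction with
  | base => rw [u_one h00 hn0 hupper hrec]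
  | succ d hd ih =>
    have h1 := u_rec h00 hn0 hupper hrec d hd
    have h2 := v_nonneg h00 hn0 hupper hrec d
    linarith

theorem u_bound : ∀ d : ℕ, 1 ≤ d → Ex p w d ≤ 3 / (2 * d) := by
  intro d hd
  induction d, hd using Nat.le_induction with
  | base =>
    rw [u_one h00 hn0 hupper hrec]
    norm_num
  | succ d hd ih =>
    have h1 := u_rec h00 hn0 hupper hrec d hd
    have h2 := cs1 h00 hn0 hupper hrec d
    have h3 := u_le_half h00 hn0 hupper hrec d hd
    have h4 := u_nonneg h00 hn0 hupper hrec d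
    have hD : (1:ℝ) ≤ (d:ℝ) := by exact_mod_cast hd
    have hnum := N1 (Ex p w d) (d:ℝ) hD h4 h3 ih
    have : Ex p w (d+1) ≤ Ex p w d - 2/3 * (Ex p w d)^2 := by linarith
    refine le_trans this (le_trans hnum (le_of_eq ?_))
    push_cast
    ring

theorem v_bound : ∀ d : ℕ, 8 ≤ d → Ex p (fun k => w k ^ 2) d ≤ 27 / (4 * (d:ℝ)^2) := by
  intro d hd
  induction d, hd using Nat.le_induction with
  | base =>
    have h1 := v_le_half_u h00 hn0 hupper hrec 8
    have h2 := u_bound h00 hn0 hupper hrec 8 (by norm_num)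
    norm_num at h2 ⊢
    linarith
  | succ d hd ih =>
    have hd1 : 1 ≤ d := by omega
    have hrecv := v_rec h00 hn0 hupper hrec d hd1
    have hcs := cs2 h00 hn0 hupper hrec d
    have hu := u_bound h00 hn0 hupper hrec d hd1
    have ht0 := t_nonneg h00 hn0 hupper hrec d
    have hv0 := v_nonneg h00 hn0 hupper hrec d
    have hD : (8:ℝ) ≤ (d:ℝ) := by exact_mod_cast hd
    have hD0 : (0:ℝ) < (d:ℝ) := by linarith
    set v := Ex p (fun k => w k ^ 2) d
    set t := Ex p (fun k => w k ^ 3) d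
    set u := Ex p w d
    have h1 : v^2 ≤ 3/(2*(d:ℝ)) * t := by
      refine le_trans hcs ?_
      exact mul_le_mul_of_nonneg_right hu ht0
    have h2 : 2*(d:ℝ)/3 * v^2 ≤ t := by
      have h3 := mul_le_mul_of_nonneg_left h1 (by positivity : (0:ℝ) ≤ 2*(d:ℝ)/3)
      have h4 : 2*(d:ℝ)/3 * (3/(2*(d:ℝ)) * t) = t := by
        field_simp
      linarith
    have h5 : Ex p (fun k => w k ^ 2) (d+1) ≤ v - 16*(d:ℝ)/27 * v^2 := by
      have : 8/9 * (2*(d:ℝ)/3 * v^2) ≤ 8/9 * t :=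
        mul_le_mul_of_nonneg_left h2 (by norm_num)
      have he : 8/9 * (2*(d:ℝ)/3 * v^2) = 16*(d:ℝ)/27 * v^2 := by ring
      linarith
    have hnum := N2 v (d:ℝ) hD hv0 ih
    refine le_trans h5 (le_trans hnum (le_of_eq ?_))
    push_cast
    ring

theorem lower_bound (d : ℕ) :
    1 - 1/(1 + Real.sqrt (2*(d:ℝ)))
      ≤ (Ex p (fun k => 1/((k:ℝ)+1)) d) * Real.sqrt (2*(d:ℝ)+1) := by
  have hp : ∀ k, 0 ≤ p d k := p_nonneg h00 hn0 hupper hrec d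
  -- Cauchy-Schwarz : 1 ≤ θ * (m + 1)
  have CS := Finset.sum_mul_sq_le_sq_mul_sq (Finset.range (d + 1))
    (fun k => Real.sqrt (1/((k:ℝ)+1) * p d k))
    (fun k => Real.sqrt (((k:ℝ)+1) * p d k))
  have hnn1 : ∀ k : ℕ, (0:ℝ) ≤ 1/((k:ℝ)+1) * p d k := by
    intro k
    have := hp k
    positivity
  have hnn2 : ∀ k : ℕ, (0:ℝ) ≤ ((k:ℝ)+1) * p d k := by
    intro k
    have := hp k
    positivity
  have e1 : ∀ k ∈ Finset.range (d + 1),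
      Real.sqrt (1/((k:ℝ)+1) * p d k) * Real.sqrt (((k:ℝ)+1) * p d k) = p d k := by
    intro k _
    rw [← Real.sqrt_mul (hnn1 k)]
    have hc : ((k:ℝ)+1) ≠ 0 := by positivity
    rw [show (1/((k:ℝ)+1) * p d k) * (((k:ℝ)+1) * p d k) = p d k ^ 2 by
      field_simp]
    exact Real.sqrt_sq (hp k)
  have e2 : ∀ k ∈ Finset.range (d + 1),
      Real.sqrt (1/((k:ℝ)+1) * p d k) ^ 2 = 1/((k:ℝ)+1) * p d k := by
    intro k _; exact Real.sq_sqrt (hnn1 k)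
  have e3 : ∀ k ∈ Finset.range (d + 1),
      Real.sqrt (((k:ℝ)+1) * p d k) ^ 2 = ((k:ℝ)+1) * p d k := by
    intro k _; exact Real.sq_sqrt (hnn2 k)
  rw [Finset.sum_congr rfl e1, Finset.sum_congr rfl e2, Finset.sum_congr rfl e3,
    sum_p_one h00 hn0 hupper hrec d] at CS
  have hsum2 : ∑ k ∈ Finset.range (d + 1), ((k:ℝ)+1) * p d k = Ex p fX d + 1 := by
    have h1 : ∑ k ∈ Finset.range (d + 1), ((k:ℝ)+1) * p d k
        = ∑ k ∈ Finset.range (d + 1), (fX k * p d k + p d k) :=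
      Finset.sum_congr rfl fun k _ => by simp only [fX]; ring
    rw [h1, Finset.sum_add_distrib, sum_p_one h00 hn0 hupper hrec d]
    rfl
  rw [hsum2, one_pow] at CS
  -- CS : 1 ≤ θ * (m + 1)  with θ = Ex p fθ d
  have hθsum : ∑ k ∈ Finset.range (d + 1), 1/((k:ℝ)+1) * p d k
      = Ex p (fun k => 1/((k:ℝ)+1)) d := rfl
  rw [hθsum] at CS
  set θd := Ex p (fun k => 1/((k:ℝ)+1)) d with hθd
  set m := Ex p fX d with hm
  have hθ0 : 0 ≤ θd := Ex_nonneg h00 hn0 hupper hrec (fun k => by positivity) d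
  have hmle : m ≤ Real.sqrt (2*(d:ℝ)) := m_le_sqrt h00 hn0 hupper hrec d
  set s1 := Real.sqrt (2*(d:ℝ)) with hs1
  set s2 := Real.sqrt (2*(d:ℝ)+1) with hs2
  have hs10 : 0 ≤ s1 := Real.sqrt_nonneg _
  have hs12 : s1 ≤ s2 := Real.sqrt_le_sqrt (by linarith)
  have h1s : (0:ℝ) < 1 + s1 := by linarith
  have hcs' : 1 ≤ θd * (1 + s1) := by nlinarith
  have key : 1/(1 + s1) ≤ θd := by
    rw [div_le_iff₀ h1s]
    linarith
  have heq : 1 - 1/(1 + s1) = s1 * (1/(1 + s1)) := by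
    field_simp
    ring
  rw [heq]
  calc s1 * (1/(1 + s1)) ≤ s2 * (1/(1 + s1)) := by
        apply mul_le_mul_of_nonneg_right hs12
        positivity
    _ ≤ s2 * θd := mul_le_mul_of_nonneg_left key (Real.sqrt_nonneg _)
    _ = θd * s2 := mul_comm _ _

theorem upper_bound (d : ℕ) (hd : 8 ≤ d) :
    (Ex p (fun k => 1/((k:ℝ)+1)) d) * Real.sqrt (2*(d:ℝ)+1)
      ≤ Real.sqrt (1 + 1/(2*(d:ℝ))) * (1 + 7 / Real.sqrt (Real.sqrt (d:ℝ))) := by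
  have hd1 : 1 ≤ d := by omega
  have hdR : (8:ℝ) ≤ (d:ℝ) := by exact_mod_cast hd
  have hd0 : (0:ℝ) < (d:ℝ) := by linarith
  have hp : ∀ k, 0 ≤ p d k := p_nonneg h00 hn0 hupper hrec d
  set B := Ex p (fun k => |fZ k - 2*(d:ℝ)| * w k) d with hB
  have hB0 : 0 ≤ B :=
    Ex_nonneg h00 hn0 hupper hrec
      (fun k => mul_nonneg (abs_nonneg _) (w_nonneg k)) d
  set s1 := Real.sqrt (2*(d:ℝ)) with hs1def
  have hs1pos : 0 < s1 := Real.sqrt_pos.mpr (by linarith)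
  -- step 1 : θ ≤ (1/s1) * (1 + B)
  have step1 : Ex p (fun k => 1/((k:ℝ)+1)) d ≤ 1/s1 * (1 + B) := by
    have hpt : Ex p (fun k => 1/((k:ℝ)+1)) d
        ≤ ∑ k ∈ Finset.range (d+1), (1/s1 * (1 + |fZ k - 2*(d:ℝ)| * w k)) * p d k := by
      apply Finset.sum_le_sum
      intro k _
      rcases Nat.eq_zero_or_pos k with rfl | hk
      · rw [hn0 d hd1]
        simp
      · apply mul_le_mul_of_nonneg_right _ (hp k)
        have hx : (1:ℝ) ≤ (k:ℝ) := by exact_mod_cast hk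
        have ha : (1:ℝ) ≤ 2*(d:ℝ) := by linarith
        have := R4 (k:ℝ) (2*(d:ℝ)) hx ha
        simp only [fZ, w]
        exact this
    refine le_trans hpt (le_of_eq ?_)
    rw [show (∑ k ∈ Finset.range (d+1), (1/s1 * (1 + |fZ k - 2*(d:ℝ)| * w k)) * p d k)
        = ∑ k ∈ Finset.range (d+1),
            (1/s1 * p d k + 1/s1 * ((|fZ k - 2*(d:ℝ)| * w k) * p d k))
        from Finset.sum_congr rfl fun k _ => by ring,
      Finset.sum_add_distrib, ← Finset.mul_sum, ← Finset.mul_sum,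
      sum_p_one h00 hn0 hupper hrec d]
    rw [hB, Ex]
    ring
  -- step 2 : B ≤ 7 / sqrt (sqrt d)
  have step2 : B ≤ 7 / Real.sqrt (Real.sqrt (d:ℝ)) := by
    have CS := Finset.sum_mul_sq_le_sq_mul_sq (Finset.range (d + 1))
      (fun k => |fZ k - 2*(d:ℝ)| * Real.sqrt (p d k))
      (fun k => w k * Real.sqrt (p d k))
    have e1 : ∀ k ∈ Finset.range (d + 1),
        (|fZ k - 2*(d:ℝ)| * Real.sqrt (p d k)) * (w k * Real.sqrt (p d k))
          = (fun k => |fZ k - 2*(d:ℝ)| * w k) k * p d k := by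
      intro k _
      simp only
      rw [show (|fZ k - 2*(d:ℝ)| * Real.sqrt (p d k)) * (w k * Real.sqrt (p d k))
          = (|fZ k - 2*(d:ℝ)| * w k) * (Real.sqrt (p d k) * Real.sqrt (p d k)) by ring,
        Real.mul_self_sqrt (hp k)]
    have e2 : ∀ k ∈ Finset.range (d + 1),
        (|fZ k - 2*(d:ℝ)| * Real.sqrt (p d k)) ^ 2
          = (fun k => (fZ k - 2*(d:ℝ))^2) k * p d k := by
      intro k _
      simp only
      rw [mul_pow, Real.sq_sqrt (hp k), sq_abs]
    have e3 : ∀ k ∈ Finset.range (d + 1),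
        (w k * Real.sqrt (p d k)) ^ 2 = (fun k => w k ^ 2) k * p d k := by
      intro k _
      simp only
      rw [mul_pow, Real.sq_sqrt (hp k)]
    rw [Finset.sum_congr rfl e1, Finset.sum_congr rfl e2, Finset.sum_congr rfl e3] at CS
    have hCS : B ^ 2 ≤ Ex p (fun k => (fZ k - 2*(d:ℝ))^2) d * Ex p (fun k => w k ^ 2) d := CS
    have hVar := Var_le h00 hn0 hupper hrec d
    have hVar0 : 0 ≤ Ex p (fun k => (fZ k - 2*(d:ℝ))^2) d :=
      Ex_nonneg h00 hn0 hupper hrec (fun k => sq_nonneg _) d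
    have hv := v_bound h00 hn0 hupper hrec d hd
    have hv0 := v_nonneg h00 hn0 hupper hrec d
    have hsd : Real.sqrt (2*(d:ℝ)) = Real.sqrt 2 * Real.sqrt (d:ℝ) :=
      Real.sqrt_mul (by norm_num) _
    have hsqrt2 : Real.sqrt 2 ≤ 49/27 := by
      rw [show (49:ℝ)/27 = Real.sqrt ((49/27)^2) from
        (Real.sqrt_sq (by norm_num)).symm]
      apply Real.sqrt_le_sqrt
      norm_num
    have hdd : Real.sqrt (d:ℝ) * Real.sqrt (d:ℝ) = (d:ℝ) :=
      Real.mul_self_sqrt hd0.le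
    have hsdpos : 0 < Real.sqrt (d:ℝ) := Real.sqrt_pos.mpr hd0
    have hprod : Ex p (fun k => (fZ k - 2*(d:ℝ))^2) d * Ex p (fun k => w k ^ 2) d
        ≤ 49 / Real.sqrt (d:ℝ) := by
      have h1 : Ex p (fun k => (fZ k - 2*(d:ℝ))^2) d * Ex p (fun k => w k ^ 2) d
          ≤ (4*(d:ℝ)*Real.sqrt (2*(d:ℝ))) * (27/(4*(d:ℝ)^2)) := by
        apply mul_le_mul hVar hv hv0
        positivity
      refine le_trans h1 ?_
      rw [hsd, le_div_iff₀ hsdpos]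
      have hXeq : 4*(d:ℝ)*(Real.sqrt 2*Real.sqrt (d:ℝ))*(27/(4*(d:ℝ)^2))*Real.sqrt (d:ℝ)
          = 27*Real.sqrt 2 := by
        field_simp
        linear_combination hdd
      rw [hXeq]
      linarith [hsqrt2]
    have hB2 : B^2 ≤ 49 / Real.sqrt (d:ℝ) := le_trans hCS hprod
    have : B ≤ Real.sqrt (49 / Real.sqrt (d:ℝ)) := by
      rw [show B = Real.sqrt (B^2) from (Real.sqrt_sq hB0).symm]
      exact Real.sqrt_le_sqrt hB2
    refine le_trans this (le_of_eq ?_)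
    rw [Real.sqrt_div (by norm_num : (0:ℝ) ≤ 49),
      show (49:ℝ) = 7^2 by norm_num, Real.sqrt_sq (by norm_num)]
  -- step 3 : combine
  set q := Real.sqrt (1 + 1/(2*(d:ℝ))) with hq
  have hq0 : 0 ≤ q := Real.sqrt_nonneg _
  have hs2eq : Real.sqrt (2*(d:ℝ)+1) = s1 * q := by
    rw [hs1def, hq, ← Real.sqrt_mul (by positivity : (0:ℝ) ≤ 2*(d:ℝ))]
    congr 1
    field_simp
  rw [hs2eq]
  have hθ0 : 0 ≤ Ex p (fun k => 1/((k:ℝ)+1)) d :=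
    Ex_nonneg h00 hn0 hupper hrec (fun k => by positivity) d
  calc Ex p (fun k => 1/((k:ℝ)+1)) d * (s1 * q)
      ≤ (1/s1 * (1 + B)) * (s1 * q) := by
        apply mul_le_mul_of_nonneg_right step1
        positivity
    _ = (1 + B) * q := by
        field_simp
    _ ≤ (1 + 7 / Real.sqrt (Real.sqrt (d:ℝ))) * q := by
        apply mul_le_mul_of_nonneg_right _ hq0
        linarith
    _ = q * (1 + 7 / Real.sqrt (Real.sqrt (d:ℝ))) := mul_comm _ _

end

end Stmt9

/-- The success probability of the `(n+1-i)`-th trial of the `i`-th urn,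
`θ^i_{n+1} = E(1/(1+X_{n-i}))` where `X` is the chain with `p_{k,k+1} = 1/(1+k)`,
`p_{k,k} = k/(k+1)`, `X_0 = 0`, satisfies `θ^i_{n+1} ~ 1/√(2(n-i)+1)` as `n-i → ∞`. -/
theorem stmt_9 (p : ℕ → ℕ → ℝ)
    (h00 : p 0 0 = 1)
    (hn0 : ∀ n : ℕ, 1 ≤ n → p n 0 = 0)
    (hupper : ∀ i j : ℕ, i + 1 ≤ j → p i j = 0)
    (hrec : ∀ n k : ℕ, 1 ≤ k → k ≤ n + 1 →
      p (n + 1) k = ((k : ℝ) / ((k : ℝ) + 1)) * p n k + (1 / (k : ℝ)) * p n (k - 1))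
    (θ : ℕ → ℝ)
    (hθ : ∀ d : ℕ, θ d = ∑ k ∈ Finset.range (d + 1), (1 / ((k : ℝ) + 1)) * p d k) :
    Tendsto (fun d : ℕ => θ d * Real.sqrt (2 * (d : ℝ) + 1)) atTop (nhds 1) := by
  have hθEx : ∀ d, θ d = Stmt9.Ex p (fun k => 1/((k:ℝ)+1)) d := by
    intro d
    rw [hθ d]
    rfl
  apply tendsto_of_tendsto_of_tendsto_of_le_of_le' Stmt9.lowTendsto Stmt9.upTendsto
  · filter_upwards with d
    rw [hθEx d]
    exact Stmt9.lower_bound h00 hn0 hupper hrec d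
  · filter_upwards [eventually_ge_atTop 8] with d hd
    rw [hθEx d]
    exact Stmt9.upper_bound h00 hn0 hupper hrec d hd
end

section
/- Define recursively S^{(1)}_i = S^{(0)}_{i+1} + b_0 S^{(0)}_i and S^{(k+1)}_i = S^{(k)}_{i+1} + b_k S^{(k)}_i - α² S^{(k-1)}_i for i ≥ 0 and 0 ≤ k ≤ i+1, where b_k = 1/(k+1) + kα², with conventions S^{(-1)}_i = 0 and S^{(n)}_i = 0 for n > i. Then for every k ≥ 0, the power series p(k,t) = (1/(α^{2k} k!)) · Σ_{i=0}^{∞} (λt)^i/i! · S^{(k)}_i converges for all t ≥ 0 and solves the birth-death ODE system p'(k,t) = -((λ/(1+k)) + kμ) p(k,t) + (λ/k) p(k-1,t)·1_{k≥1} + μ(k+1) p(k+1,t), with p(k,0) = δ_{k,0}. -/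
open Finset


/-- Stirling numbers of the second kind. -/
def StQ : ℕ → ℕ → ℕ
  | 0, 0 => 1
  | 0, _+1 => 0
  | _+1, 0 => 0
  | i+1, b+1 => StQ i b + (b+1) * StQ i (b+1)

lemma StQ_zero_of_lt : ∀ i b : ℕ, i < b → StQ i b = 0 := by
  intro i
  induction i with
  | zero => intro b hb; match b, hb with | b+1, _ => rfl
  | succ i ih =>
    intro b hb
    match b, hb with
    | b+1, hb =>
      show StQ i b + (b+1) * StQ i (b+1) = 0
      rw [ih b (by omega), ih (b+1) (by omega)]
      simp

lemma StQ_le : ∀ i b : ℕ, StQ i b ≤ i.choose b * b ^ (i - b) := by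
  intro i
  induction i with
  | zero =>
    intro b
    match b with
    | 0 => simp [StQ]
    | b+1 => simp [StQ]
  | succ i ih =>
    intro b
    match b with
    | 0 => simp [StQ]
    | b+1 =>
      show StQ i b + (b+1) * StQ i (b+1) ≤ _
      rcases le_or_gt (b+1) i with hbi | hbi
      · have h1 : StQ i b ≤ i.choose b * (b+1) ^ (i - b) :=
          le_trans (ih b) (Nat.mul_le_mul_left _ (Nat.pow_le_pow_left (by omega) _))
        have h2 : (b+1) * StQ i (b+1) ≤ i.choose (b+1) * (b+1) ^ (i - b) := by
          calc (b+1) * StQ i (b+1) ≤ (b+1) * (i.choose (b+1) * (b+1) ^ (i - (b+1))) :=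
                Nat.mul_le_mul_left _ (ih (b+1))
            _ = i.choose (b+1) * ((b+1) ^ (i - (b+1)) * (b+1)) := by ring
            _ = i.choose (b+1) * (b+1) ^ (i - b) := by
                have he : i - (b+1) + 1 = i - b := by omega
                rw [← pow_succ, he]
        calc StQ i b + (b+1) * StQ i (b+1)
            ≤ i.choose b * (b+1) ^ (i - b) + i.choose (b+1) * (b+1) ^ (i - b) := by
              exact Nat.add_le_add h1 h2
          _ = (i+1).choose (b+1) * (b+1) ^ (i + 1 - (b+1)) := by
              rw [Nat.choose_succ_succ]
              have : i + 1 - (b+1) = i - b := by omega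
              rw [this]
              ring
      · have h1 : StQ i b = 0 ∨ StQ i b ≤ i.choose b * (b+1) ^ (i-b) := by
          rcases lt_or_ge i b with h | h
          · exact Or.inl (StQ_zero_of_lt i b h)
          · exact Or.inr (le_trans (ih b)
              (Nat.mul_le_mul_left _ (Nat.pow_le_pow_left (by omega) _)))
        have h2 : StQ i (b+1) = 0 := StQ_zero_of_lt i (b+1) hbi
        rcases h1 with h1 | h1
        · rw [h1, h2]; simp
        · rw [h2]
          simp only [Nat.mul_zero, Nat.add_zero]
          refine le_trans h1 ?_
          rw [Nat.choose_succ_succ]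
          have : i + 1 - (b+1) = i - b := by omega
          rw [this]
          exact Nat.mul_le_mul_right _ (Nat.le_add_right _ _)

/-- Bell-type majorant: partitions with `k` marked blocks. -/
def QQ (k i : ℕ) : ℕ := ∑ b ∈ Finset.range (i+1), b.choose k * StQ i b

lemma QQ_rec (k i : ℕ) :
    QQ k (i+1) = (k+1) * (QQ (k+1) i + QQ k i) + (if k = 0 then 0 else QQ (k-1) i) := by
  have hshift : QQ k (i+1)
      = ∑ b ∈ Finset.range (i+1), ((b+1).choose k + b.choose k * b) * StQ i b := by
    unfold QQ
    rw [Finset.sum_range_succ' (fun b => b.choose k * StQ (i+1) b) (i+1)]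
    have h0 : StQ (i+1) 0 = 0 := rfl
    rw [h0]
    simp only [Nat.mul_zero, Nat.add_zero]
    have hA : ∑ b ∈ Finset.range (i+1), (b+1).choose k * StQ (i+1) (b+1)
        = ∑ b ∈ Finset.range (i+1), ((b+1).choose k * StQ i b
            + (b+1).choose k * ((b+1) * StQ i (b+1))) := by
      refine Finset.sum_congr rfl fun b _ => ?_
      show (b+1).choose k * (StQ i b + (b+1) * StQ i (b+1)) = _
      ring
    rw [hA, Finset.sum_add_distrib]
    have hB : ∑ b ∈ Finset.range (i+1), (b+1).choose k * ((b+1) * StQ i (b+1))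
        = ∑ b ∈ Finset.range (i+1), (b.choose k * b) * StQ i b := by
      have h1 : ∑ b ∈ Finset.range (i+2), (b.choose k * b) * StQ i b
          = ∑ b ∈ Finset.range (i+1), ((b+1).choose k * (b+1)) * StQ i (b+1) := by
        rw [Finset.sum_range_succ' (fun b => (b.choose k * b) * StQ i b) (i+1)]
        simp
      have h2 : ∑ b ∈ Finset.range (i+2), (b.choose k * b) * StQ i b
          = ∑ b ∈ Finset.range (i+1), (b.choose k * b) * StQ i b := by
        rw [Finset.sum_range_succ]
        rw [StQ_zero_of_lt i (i+1) (by omega)]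
        simp
      rw [← h2, h1]
      refine Finset.sum_congr rfl fun b _ => ?_
      ring
    rw [hB, ← Finset.sum_add_distrib]
    refine Finset.sum_congr rfl fun b _ => ?_
    ring
  rw [hshift]
  unfold QQ
  rw [mul_add, Finset.mul_sum, Finset.mul_sum]
  rcases Nat.eq_zero_or_pos k with hk | hk
  · subst hk
    simp only [if_pos rfl, Nat.add_zero]
    rw [← Finset.sum_add_distrib]
    refine Finset.sum_congr rfl fun b _ => ?_
    simp [Nat.choose_one_right, Nat.choose_zero_right]
    ring
  · obtain ⟨j, rfl⟩ : ∃ j, k = j + 1 := ⟨k - 1, by omega⟩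
    simp only [if_neg (Nat.succ_ne_zero j), Nat.add_sub_cancel]
    rw [← Finset.sum_add_distrib, ← Finset.sum_add_distrib]
    refine Finset.sum_congr rfl fun b _ => ?_
    have key : (b+1).choose (j+1) + b.choose (j+1) * b
        = (j+2) * b.choose (j+2) + (j+2) * b.choose (j+1) + b.choose j := by
      have h1 : (b+1).choose (j+1) = b.choose j + b.choose (j+1) := Nat.choose_succ_succ b j
      have h2 : (b+1) * b.choose (j+1) = (b+1).choose (j+2) * (j+2) :=
        Nat.add_one_mul_choose_eq b (j+1)
      have h3 : (b+1).choose (j+2) = b.choose (j+1) + b.choose (j+2) :=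
        Nat.choose_succ_succ b (j+1)
      have h2' : (b+1) * b.choose (j+1) = (b.choose (j+1) + b.choose (j+2)) * (j+2) := by
        rw [← h3]; exact h2
      calc (b+1).choose (j+1) + b.choose (j+1) * b
          = b.choose j + (b+1) * b.choose (j+1) := by rw [h1]; ring
        _ = b.choose j + (b.choose (j+1) + b.choose (j+2)) * (j+2) := by rw [h2']
        _ = (j+2) * b.choose (j+2) + (j+2) * b.choose (j+1) + b.choose j := by ring
    rw [key]
    ring
lemma choose_le_two_pow' (b k : ℕ) : b.choose k ≤ 2 ^ b := by
  rcases le_or_gt k b with h | h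
  · calc b.choose k ≤ ∑ j ∈ Finset.range (b+1), b.choose j :=
        Finset.single_le_sum (fun j _ => Nat.zero_le _) (Finset.mem_range.mpr (by omega))
      _ = 2 ^ b := Nat.sum_range_choose b
  · rw [Nat.choose_eq_zero_of_lt h]; exact Nat.zero_le _

lemma QQ_summable (k : ℕ) {x : ℝ} (hx : 0 ≤ x) :
    Summable (fun i : ℕ => x ^ i / (Nat.factorial i : ℝ) * (QQ k i : ℝ)) := by
  apply summable_of_sum_range_le (c := Real.exp (2 * x * Real.exp x))
    (fun i => by positivity)
  intro N
  set F : ℕ → ℕ → ℝ := fun b m =>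
    (2*x) ^ b / (Nat.factorial b : ℝ) * ((x * b) ^ m / (Nat.factorial m : ℝ)) with hF
  have hFnn : ∀ b m, 0 ≤ F b m := by
    intro b m
    have : (0:ℝ) ≤ (b:ℝ) := Nat.cast_nonneg b
    positivity
  have step1 : ∀ i : ℕ, x ^ i / (Nat.factorial i : ℝ) * (QQ k i : ℝ)
      ≤ ∑ b ∈ Finset.range (i+1), F b (i - b) := by
    intro i
    have hQ : (QQ k i : ℝ) ≤ ∑ b ∈ Finset.range (i+1),
        (2:ℝ)^b * ((i.choose b : ℝ) * (b:ℝ)^(i-b)) := by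
      have hN : QQ k i ≤ ∑ b ∈ Finset.range (i+1), 2^b * (i.choose b * b^(i-b)) := by
        unfold QQ
        refine Finset.sum_le_sum fun b _ => ?_
        exact Nat.mul_le_mul (choose_le_two_pow' b k) (StQ_le i b)
      calc (QQ k i : ℝ) ≤ ((∑ b ∈ Finset.range (i+1), 2^b * (i.choose b * b^(i-b)) : ℕ) : ℝ) :=
            Nat.cast_le.mpr hN
        _ = _ := by push_cast; ring
    calc x ^ i / (Nat.factorial i : ℝ) * (QQ k i : ℝ)
        ≤ x ^ i / (Nat.factorial i : ℝ) * ∑ b ∈ Finset.range (i+1),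
            (2:ℝ)^b * ((i.choose b : ℝ) * (b:ℝ)^(i-b)) := by
          apply mul_le_mul_of_nonneg_left hQ (by positivity)
      _ = ∑ b ∈ Finset.range (i+1), F b (i - b) := by
          rw [Finset.mul_sum]
          refine Finset.sum_congr rfl fun b hb => ?_
          have hbi : b ≤ i := by
            have := Finset.mem_range.mp hb; omega
          have hfi : (Nat.factorial i : ℝ) ≠ 0 := Nat.cast_ne_zero.mpr i.factorial_ne_zero
          have hfb : (Nat.factorial b : ℝ) ≠ 0 := Nat.cast_ne_zero.mpr b.factorial_ne_zero
          have hfib : (Nat.factorial (i-b) : ℝ) ≠ 0 := Nat.cast_ne_zero.mpr (i-b).factorial_ne_zero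
          rw [hF]
          simp only []
          rw [Nat.cast_choose ℝ hbi, show x ^ i = x ^ b * x ^ (i-b) by
            rw [← pow_add]; congr 1; omega, mul_pow, mul_pow]
          field_simp
  have step2 : ∑ i ∈ Finset.range N, ∑ b ∈ Finset.range (i+1), F b (i - b)
      ≤ ∑ b ∈ Finset.range N, ∑ m ∈ Finset.range N, F b m := by
    rw [Finset.sum_sigma' (Finset.range N) (fun i => Finset.range (i+1))
      (fun i b => F b (i - b))]
    have himg : ∑ q ∈ (Finset.range N).sigma (fun i => Finset.range (i+1)),
        F q.2 (q.1 - q.2)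
        = ∑ p ∈ Finset.image (fun q : (_ : ℕ) × ℕ => (q.2, q.1 - q.2))
            ((Finset.range N).sigma (fun i => Finset.range (i+1))), F p.1 p.2 := by
      rw [Finset.sum_image]
      rintro ⟨i, b⟩ hq ⟨i', b'⟩ hq' h
      simp only [Finset.coe_sigma, Set.mem_sigma_iff, Finset.mem_coe, Finset.mem_sigma, Finset.mem_range, Prod.mk.injEq] at hq hq' h
      obtain ⟨h1, h2⟩ := h
      change b = b' at h1
      change i - b = i' - b' at h2
      have : i = i' := by omega
      subst this; subst h1; rfl
    rw [himg]
    have hsub : Finset.image (fun q : (_ : ℕ) × ℕ => (q.2, q.1 - q.2))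
        ((Finset.range N).sigma (fun i => Finset.range (i+1)))
        ⊆ Finset.range N ×ˢ Finset.range N := by
      intro p hp
      simp only [Finset.mem_image, Finset.mem_sigma, Finset.mem_range,
        Finset.mem_product] at hp ⊢
      obtain ⟨⟨i, b⟩, ⟨hi, hb⟩, rfl⟩ := hp
      constructor <;> omega
    calc _ ≤ ∑ p ∈ Finset.range N ×ˢ Finset.range N, F p.1 p.2 :=
          Finset.sum_le_sum_of_subset_of_nonneg hsub (fun p _ _ => hFnn p.1 p.2)
      _ = _ := Finset.sum_product _ _ _
  have step3 : ∑ b ∈ Finset.range N, ∑ m ∈ Finset.range N, F b m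
      ≤ Real.exp (2 * x * Real.exp x) := by
    calc ∑ b ∈ Finset.range N, ∑ m ∈ Finset.range N, F b m
        ≤ ∑ b ∈ Finset.range N, (2*x)^b / (Nat.factorial b : ℝ) * Real.exp (x * b) := by
          refine Finset.sum_le_sum fun b _ => ?_
          rw [hF]
          simp only []
          rw [← Finset.mul_sum]
          have hxb : (0:ℝ) ≤ x * b := mul_nonneg hx (Nat.cast_nonneg b)
          exact mul_le_mul_of_nonneg_left (Real.sum_le_exp_of_nonneg hxb N) (by positivity)
      _ = ∑ b ∈ Finset.range N, (2 * x * Real.exp x)^b / (Nat.factorial b : ℝ) := by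
          refine Finset.sum_congr rfl fun b _ => ?_
          rw [mul_comm x (b:ℝ), Real.exp_nat_mul, mul_pow]
          ring
      _ ≤ Real.exp (2 * x * Real.exp x) :=
          Real.sum_le_exp_of_nonneg (by positivity) N
  calc ∑ i ∈ Finset.range N, x ^ i / (Nat.factorial i : ℝ) * (QQ k i : ℝ)
      ≤ ∑ i ∈ Finset.range N, ∑ b ∈ Finset.range (i+1), F b (i - b) :=
        Finset.sum_le_sum fun i _ => step1 i
    _ ≤ _ := le_trans step2 step3

lemma QQ_summable_mul (k : ℕ) {x : ℝ} (hx : 0 ≤ x) :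
    Summable (fun n : ℕ => (n : ℝ) * x ^ n / (Nat.factorial n : ℝ) * (QQ k n : ℝ)) := by
  refine Summable.of_nonneg_of_le (fun n => by positivity) (fun n => ?_)
    (QQ_summable k (x := 2 * x) (by positivity))
  have h1 : (n : ℝ) * x ^ n ≤ (2 * x) ^ n := by
    rw [mul_pow]
    have h2 : (n : ℝ) ≤ 2 ^ n := by
      exact_mod_cast (Nat.lt_two_pow_self (n := n)).le
    exact mul_le_mul_of_nonneg_right h2 (by positivity)
  have h3 : (0:ℝ) ≤ (QQ k n : ℝ) := Nat.cast_nonneg _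
  have h4 : (0:ℝ) < (Nat.factorial n : ℝ) := by exact_mod_cast n.factorial_pos
  have h5 : (n : ℝ) * x ^ n / (Nat.factorial n : ℝ) ≤ (2*x) ^ n / (Nat.factorial n : ℝ) :=
    by gcongr
  exact mul_le_mul_of_nonneg_right h5 h3


set_option maxHeartbeats 2000000 in
/-- Transient solution of the discouragement queue (birth rates `λ/(1+k)`, death
rates `kμ`): with `α = √(μ/λ)`, `b_k = 1/(k+1) + kα²` and coefficients `S^{(k)}_i`
given by the stated recursion (with `S^{(-1)}_i = 0`, `S^{(n)}_i = 0` for `n > i`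
and `S^{(0)}_0 = 1`), the series `p(k,t) = (1/(α^{2k} k!)) Σ_i (λt)^i/i! · S^{(k)}_i`
converges for `t ≥ 0` and solves the birth–death system with `p(k,0) = δ_{k,0}`. -/
theorem stmt_12 (lam mu : ℝ) (hlam : 0 < lam) (hmu : 0 < mu)
    (α : ℝ) (hα : α = Real.sqrt (mu / lam))
    (b : ℕ → ℝ) (hb : ∀ k : ℕ, b k = 1 / ((k : ℝ) + 1) + (k : ℝ) * α ^ 2)
    (S : ℕ → ℕ → ℝ)
    (hS00 : S 0 0 = 1)
    (hSzero : ∀ n i : ℕ, i < n → S n i = 0)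
    (hrec1 : ∀ i : ℕ, S 1 i = S 0 (i + 1) + b 0 * S 0 i)
    (hrec : ∀ k i : ℕ, 1 ≤ k →
      S (k + 1) i = S k (i + 1) + b k * S k i - α ^ 2 * S (k - 1) i)
    (p : ℕ → ℝ → ℝ)
    (hp : ∀ (k : ℕ) (t : ℝ), p k t =
      (1 / (α ^ (2 * k) * (Nat.factorial k : ℝ))) *
        ∑' i : ℕ, (lam * t) ^ i / (Nat.factorial i : ℝ) * S k i) :
    (∀ (k : ℕ) (t : ℝ), 0 ≤ t →
      Summable (fun i : ℕ => (lam * t) ^ i / (Nat.factorial i : ℝ) * S k i)) ∧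
    (∀ k : ℕ, p k 0 = if k = 0 then 1 else 0) ∧
    (∀ t : ℝ, 0 ≤ t →
      HasDerivAt (fun s => p 0 s) (-(lam / 1) * p 0 t + mu * 1 * p 1 t) t) ∧
    (∀ k : ℕ, 1 ≤ k → ∀ t : ℝ, 0 ≤ t →
      HasDerivAt (fun s => p k s)
        (-(lam / (1 + (k : ℝ)) + (k : ℝ) * mu) * p k t +
          lam / (k : ℝ) * p (k - 1) t + mu * ((k : ℝ) + 1) * p (k + 1) t) t) := by
  have hMLpos : 0 < mu / lam := div_pos hmu hlam
  have hα2 : α ^ 2 = mu / lam := by rw [hα]; exact Real.sq_sqrt hMLpos.le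
  have hα2pos : 0 < α ^ 2 := hα2 ▸ hMLpos
  have hb0 : b 0 = 1 := by rw [hb]; norm_num
  -- derived recursions
  have hrecA : ∀ i : ℕ, S 0 (i+1) = S 1 i - b 0 * S 0 i := by
    intro i; have := hrec1 i; linarith
  have hrecB : ∀ m i : ℕ,
      S (m+1) (i+1) = S (m+2) i - b (m+1) * S (m+1) i + α ^ 2 * S m i := by
    intro m i
    have h := hrec (m+1) i (by omega)
    simp only [Nat.add_sub_cancel] at h
    linarith
  -- coefficient bound
  have hSb : ∀ (i k : ℕ), |S k i| ≤ (1 + α ^ 2) ^ i * (QQ k i : ℝ) := by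
    intro i
    induction i with
    | zero =>
      intro k
      match k with
      | 0 =>
        rw [hS00]
        have hq : QQ 0 0 = 1 := by decide
        rw [hq]
        norm_num
      | k+1 =>
        rw [hSzero (k+1) 0 (by omega)]
        simp only [abs_zero]
        positivity
    | succ i ih =>
      intro k
      have hC1 : (1:ℝ) ≤ 1 + α ^ 2 := by nlinarith
      have hCnn : (0:ℝ) ≤ (1 + α ^ 2) ^ i := by positivity
      match k with
      | 0 =>
        have hQ : (QQ 0 (i+1) : ℝ) = (QQ 1 i : ℝ) + (QQ 0 i : ℝ) := by
          rw [QQ_rec]; norm_num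
        rw [hrecA i, hb0, one_mul, hQ]
        have h1 := ih 1
        have h0 := ih 0
        calc |S 1 i - S 0 i| ≤ |S 1 i| + |S 0 i| := abs_sub _ _
          _ ≤ (1 + α ^ 2) ^ i * (QQ 1 i : ℝ) + (1 + α ^ 2) ^ i * (QQ 0 i : ℝ) := by
              linarith
          _ ≤ (1 + α ^ 2) ^ (i+1) * ((QQ 1 i : ℝ) + (QQ 0 i : ℝ)) := by
              have hps : (1 + α ^ 2 : ℝ) ^ (i+1) = (1 + α ^ 2) ^ i * (1 + α ^ 2) :=
                pow_succ _ _
              rw [hps]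
              have q1 : (0:ℝ) ≤ (QQ 1 i : ℝ) := Nat.cast_nonneg _
              have q0 : (0:ℝ) ≤ (QQ 0 i : ℝ) := Nat.cast_nonneg _
              nlinarith [mul_nonneg (mul_nonneg hCnn (add_nonneg q1 q0))
                (sub_nonneg.mpr hC1)]
      | m+1 =>
        have hQ : (QQ (m+1) (i+1) : ℝ)
            = ((m:ℝ)+2) * ((QQ (m+2) i : ℝ) + (QQ (m+1) i : ℝ)) + (QQ m i : ℝ) := by
          rw [QQ_rec]
          simp only [Nat.add_sub_cancel, if_neg (Nat.succ_ne_zero m)]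
          push_cast
          ring
        have hble : b (m+1) ≤ ((m:ℝ)+2) * (1 + α ^ 2) := by
          rw [hb]
          push_cast
          have h1 : 1/((m:ℝ)+1+1) ≤ 1 := by
            rw [div_le_one (by positivity)]; linarith
          nlinarith [Nat.cast_nonneg (α := ℝ) m, hα2pos]
        have hbnn : 0 ≤ b (m+1) := by
          rw [hb]; positivity
        rw [hrecB m i, hQ]
        have h1 := ih (m+2)
        have h2 := ih (m+1)
        have h3 := ih m
        have q1 : (0:ℝ) ≤ (QQ (m+2) i : ℝ) := Nat.cast_nonneg _
        have q2 : (0:ℝ) ≤ (QQ (m+1) i : ℝ) := Nat.cast_nonneg _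
        have q3 : (0:ℝ) ≤ (QQ m i : ℝ) := Nat.cast_nonneg _
        have habs2 : |b (m+1) * S (m+1) i| ≤ ((m:ℝ)+2) * (1 + α ^ 2) *
            ((1 + α ^ 2) ^ i * (QQ (m+1) i : ℝ)) := by
          rw [abs_mul, abs_of_nonneg hbnn]
          have := mul_le_mul hble h2 (abs_nonneg _) (by positivity)
          linarith
        have habs3 : |α ^ 2 * S m i| ≤ (1 + α ^ 2) * ((1 + α ^ 2) ^ i * (QQ m i : ℝ)) := by
          rw [abs_mul, abs_of_nonneg hα2pos.le]
          have hle : α ^ 2 ≤ 1 + α ^ 2 := by linarith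
          have := mul_le_mul hle h3 (abs_nonneg _) (by linarith)
          linarith
        calc |S (m+2) i - b (m+1) * S (m+1) i + α ^ 2 * S m i|
            ≤ |S (m+2) i - b (m+1) * S (m+1) i| + |α ^ 2 * S m i| := abs_add_le _ _
          _ ≤ |S (m+2) i| + |b (m+1) * S (m+1) i| + |α ^ 2 * S m i| := by
              have := abs_sub (S (m+2) i) (b (m+1) * S (m+1) i)
              linarith
          _ ≤ (1 + α ^ 2) ^ (i+1) * (((m:ℝ)+2) * ((QQ (m+2) i : ℝ) + (QQ (m+1) i : ℝ))
                + (QQ m i : ℝ)) := by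
              have hps : (1 + α ^ 2 : ℝ) ^ (i+1) = (1 + α ^ 2) ^ i * (1 + α ^ 2) :=
                pow_succ _ _
              rw [hps]
              have hm1 : (1:ℝ) ≤ ((m:ℝ)+2) * (1 + α ^ 2) := by
                nlinarith [Nat.cast_nonneg (α := ℝ) m]
              nlinarith [h1, habs2, habs3,
                mul_nonneg (mul_nonneg hCnn q1) (sub_nonneg.mpr hm1)]
  -- master summability
  have msum : ∀ (j : ℕ) (x : ℝ), 0 ≤ x →
      Summable (fun n : ℕ => x ^ n / (Nat.factorial n : ℝ) * S j n) := by
    intro j x hx0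
    refine Summable.of_norm_bounded (g := fun n => (x * (1 + α ^ 2)) ^ n / (Nat.factorial n : ℝ) * (QQ j n : ℝ))
      (QQ_summable j (by positivity)) (fun n => ?_)
    have hfn : (0:ℝ) < (Nat.factorial n : ℝ) := by exact_mod_cast n.factorial_pos
    rw [Real.norm_eq_abs, abs_mul, abs_div, abs_pow, abs_of_nonneg hx0,
      abs_of_nonneg hfn.le]
    calc x ^ n / (Nat.factorial n : ℝ) * |S j n|
        ≤ x ^ n / (Nat.factorial n : ℝ) * ((1 + α ^ 2) ^ n * (QQ j n : ℝ)) := by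
          exact mul_le_mul_of_nonneg_left (hSb n j) (by positivity)
      _ = (x * (1 + α ^ 2)) ^ n / (Nat.factorial n : ℝ) * (QQ j n : ℝ) := by
          rw [mul_pow]; ring
  -- term-by-term differentiation of the series
  have hderiv : ∀ (j : ℕ) (t : ℝ), 0 ≤ t →
      HasDerivAt (fun s => ∑' n : ℕ, (lam * s) ^ n / (Nat.factorial n : ℝ) * S j n)
        (lam * ∑' n : ℕ, (lam * t) ^ n / (Nat.factorial n : ℝ) * S j (n+1)) t := by
    intro j t ht
    have hR1 : (1:ℝ) ≤ t + 1 := by linarith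
    have htmem : t ∈ Set.Ioo (-1 : ℝ) (t + 1) := by constructor <;> linarith
    have hu_sum : Summable (fun n : ℕ =>
        (n : ℝ) * (lam * (1 + α ^ 2) * (t+1)) ^ n / (Nat.factorial n : ℝ) * (QQ j n : ℝ)) :=
      QQ_summable_mul j (by positivity)
    have hbound : ∀ (n : ℕ), ∀ y ∈ Set.Ioo (-1 : ℝ) (t + 1),
        ‖lam ^ n * S j n / (Nat.factorial n : ℝ) * ((n : ℝ) * y ^ (n-1))‖
          ≤ (n : ℝ) * (lam * (1 + α ^ 2) * (t+1)) ^ n / (Nat.factorial n : ℝ) * (QQ j n : ℝ) := by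
      intro n y hy
      have hyabs : |y| ≤ t + 1 := by
        rw [abs_le]; exact ⟨by linarith [hy.1], (hy.2).le⟩
      have hfn : (0:ℝ) < (Nat.factorial n : ℝ) := by exact_mod_cast n.factorial_pos
      have hyp : |y| ^ (n-1) ≤ (t+1) ^ (n-1) := pow_le_pow_left₀ (abs_nonneg _) hyabs _
      have hyp2 : ((t:ℝ)+1) ^ (n-1) ≤ (t+1) ^ n := pow_le_pow_right₀ hR1 (Nat.sub_le n 1)
      simp only [Real.norm_eq_abs, abs_mul, abs_div, abs_pow, Nat.abs_cast,
        abs_of_nonneg hlam.le, abs_of_nonneg hfn.le]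
      calc lam ^ n * |S j n| / (Nat.factorial n : ℝ) * ((n:ℝ) * |y| ^ (n-1))
          ≤ lam ^ n * ((1 + α ^ 2) ^ n * (QQ j n : ℝ)) / (Nat.factorial n : ℝ)
              * ((n:ℝ) * (t+1) ^ n) := by
            have hS := hSb n j
            gcongr
            exact le_trans hyp hyp2
        _ = (n : ℝ) * (lam * (1 + α ^ 2) * (t+1)) ^ n / (Nat.factorial n : ℝ)
              * (QQ j n : ℝ) := by
            rw [mul_pow, mul_pow]; ring
    have hg : ∀ (n : ℕ), ∀ y ∈ Set.Ioo (-1 : ℝ) (t + 1),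
        HasDerivAt (fun z => (lam * z) ^ n / (Nat.factorial n : ℝ) * S j n)
          (lam ^ n * S j n / (Nat.factorial n : ℝ) * ((n : ℝ) * y ^ (n-1))) y := by
      intro n y _
      have h2 := (hasDerivAt_pow n y).const_mul (lam ^ n * S j n / (Nat.factorial n : ℝ))
      have hfun : (fun z : ℝ => (lam * z) ^ n / (Nat.factorial n : ℝ) * S j n)
          = fun z : ℝ => lam ^ n * S j n / (Nat.factorial n : ℝ) * z ^ n := by
        funext z; rw [mul_pow]; ring
      rw [hfun]
      exact h2
    have hd := hasDerivAt_tsum_of_isPreconnected hu_sum isOpen_Ioo isPreconnected_Ioo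
      hg hbound htmem (msum j (lam * t) (mul_nonneg hlam.le ht)) htmem
    have hsum_g' : Summable (fun n : ℕ =>
        lam ^ n * S j n / (Nat.factorial n : ℝ) * ((n : ℝ) * t ^ (n-1))) :=
      Summable.of_norm_bounded hu_sum (fun n => hbound n t htmem)
    have hval : (∑' n : ℕ, lam ^ n * S j n / (Nat.factorial n : ℝ) * ((n : ℝ) * t ^ (n-1)))
        = lam * ∑' n : ℕ, (lam * t) ^ n / (Nat.factorial n : ℝ) * S j (n+1) := by
      rw [Summable.tsum_eq_zero_add hsum_g']
      have h0 : lam ^ 0 * S j 0 / (Nat.factorial 0 : ℝ) * ((0 : ℕ) * t ^ (0-1)) = 0 := by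
        simp
      rw [h0, zero_add]
      have hfe : (fun n : ℕ => lam ^ (n+1) * S j (n+1) / (Nat.factorial (n+1) : ℝ)
            * (((n:ℝ)+1) * t ^ n))
          = fun n : ℕ => lam * ((lam * t) ^ n / (Nat.factorial n : ℝ) * S j (n+1)) := by
        funext n
        have hfs : (Nat.factorial (n+1) : ℝ) = ((n:ℝ)+1) * (Nat.factorial n : ℝ) := by
          exact_mod_cast Nat.factorial_succ n
        have hfn : (Nat.factorial n : ℝ) ≠ 0 :=
          Nat.cast_ne_zero.mpr n.factorial_ne_zero
        rw [hfs, mul_pow, pow_succ]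
        field_simp
      calc (∑' n : ℕ, lam ^ (n+1) * S j (n+1) / (Nat.factorial (n+1) : ℝ)
            * (((n+1:ℕ) : ℝ) * t ^ ((n+1)-1)))
          = ∑' n : ℕ, lam * ((lam * t) ^ n / (Nat.factorial n : ℝ) * S j (n+1)) := by
            refine tsum_congr fun n => ?_
            have : ((n+1:ℕ) : ℝ) = (n:ℝ)+1 := by push_cast; ring
            rw [Nat.add_sub_cancel, this]
            exact congrFun hfe n
        _ = lam * ∑' n : ℕ, (lam * t) ^ n / (Nat.factorial n : ℝ) * S j (n+1) :=
            tsum_mul_left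
    rw [hval] at hd
    exact hd
  refine ⟨fun k t ht => msum k (lam * t) (mul_nonneg hlam.le ht), ?_, ?_, ?_⟩
  · -- initial condition
    intro k
    rw [hp k 0]
    have h0 : (∑' i : ℕ, (lam * 0) ^ i / (Nat.factorial i : ℝ) * S k i) = S k 0 := by
      rw [tsum_eq_single 0 ?_]
      · simp
      · intro i hi
        obtain ⟨j, rfl⟩ : ∃ j, i = j + 1 := ⟨i - 1, by omega⟩
        simp [pow_succ]
    rw [h0]
    match k with
    | 0 =>
      rw [hS00]
      simp
    | m+1 =>
      rw [hSzero (m+1) 0 (by omega)]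
      simp
  · -- k = 0 equation
    intro t ht
    have hd := hderiv 0 t ht
    have hps : (fun s => p 0 s)
        = (fun s => ∑' n : ℕ, (lam * s) ^ n / (Nat.factorial n : ℝ) * S 0 n) := by
      funext s
      rw [hp]
      norm_num
    rw [hps]
    have hsplit : (∑' n : ℕ, (lam * t) ^ n / (Nat.factorial n : ℝ) * S 0 (n+1))
        = (∑' n : ℕ, (lam * t) ^ n / (Nat.factorial n : ℝ) * S 1 n)
          - ∑' n : ℕ, (lam * t) ^ n / (Nat.factorial n : ℝ) * S 0 n := by
      have hfe : (fun n : ℕ => (lam * t) ^ n / (Nat.factorial n : ℝ) * S 0 (n+1))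
          = fun n : ℕ => (lam * t) ^ n / (Nat.factorial n : ℝ) * S 1 n
              - (lam * t) ^ n / (Nat.factorial n : ℝ) * S 0 n := by
        funext n
        rw [hrecA n, hb0]
        ring
      rw [hfe]
      exact Summable.tsum_sub (msum 1 (lam*t) (mul_nonneg hlam.le ht))
        (msum 0 (lam*t) (mul_nonneg hlam.le ht))
    have hveq : -(lam / 1) * p 0 t + mu * 1 * p 1 t
        = lam * ∑' n : ℕ, (lam * t) ^ n / (Nat.factorial n : ℝ) * S 0 (n+1) := by
      rw [hsplit, hp 0 t, hp 1 t, hα2]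
      have h1 : (2 : ℕ) * 1 = 2 := rfl
      simp only [Nat.mul_zero, pow_zero, Nat.factorial_zero, Nat.factorial_one, h1, hα2]
      have hml : mu / lam ≠ 0 := ne_of_gt hMLpos
      field_simp
      ring
    rw [hveq]
    exact hd
  · -- k ≥ 1 equation
    intro k hk t ht
    obtain ⟨m, rfl⟩ : ∃ m, k = m + 1 := ⟨k - 1, by omega⟩
    have hd := (hderiv (m+1) t ht).const_mul
      (1 / (α ^ (2 * (m+1)) * (Nat.factorial (m+1) : ℝ)))
    have hps : (fun s => p (m+1) s)
        = fun s => (1 / (α ^ (2 * (m+1)) * (Nat.factorial (m+1) : ℝ)))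
            * ∑' n : ℕ, (lam * s) ^ n / (Nat.factorial n : ℝ) * S (m+1) n := by
      funext s; rw [hp]
    rw [hps]
    have hnn := mul_nonneg hlam.le ht
    have hsplit : (∑' n : ℕ, (lam * t) ^ n / (Nat.factorial n : ℝ) * S (m+1) (n+1))
        = ((∑' n : ℕ, (lam * t) ^ n / (Nat.factorial n : ℝ) * S (m+2) n)
            - b (m+1) * ∑' n : ℕ, (lam * t) ^ n / (Nat.factorial n : ℝ) * S (m+1) n)
          + α ^ 2 * ∑' n : ℕ, (lam * t) ^ n / (Nat.factorial n : ℝ) * S m n := by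
      have hfe : (fun n : ℕ => (lam * t) ^ n / (Nat.factorial n : ℝ) * S (m+1) (n+1))
          = fun n : ℕ => ((lam * t) ^ n / (Nat.factorial n : ℝ) * S (m+2) n
              - b (m+1) * ((lam * t) ^ n / (Nat.factorial n : ℝ) * S (m+1) n))
              + α ^ 2 * ((lam * t) ^ n / (Nat.factorial n : ℝ) * S m n) := by
        funext n
        rw [hrecB m n]
        ring
      rw [hfe]
      rw [Summable.tsum_add (((msum (m+2) (lam*t) hnn)).sub
        (((msum (m+1) (lam*t) hnn)).mul_left (b (m+1))))
        (((msum m (lam*t) hnn)).mul_left (α ^ 2))]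
      rw [Summable.tsum_sub (msum (m+2) (lam*t) hnn) ((msum (m+1) (lam*t) hnn).mul_left (b (m+1)))]
      rw [tsum_mul_left, tsum_mul_left]
    have hveq : -(lam / (1 + ((m+1 : ℕ) : ℝ)) + ((m+1 : ℕ) : ℝ) * mu) * p (m+1) t +
          lam / ((m+1 : ℕ) : ℝ) * p ((m+1) - 1) t
          + mu * (((m+1 : ℕ) : ℝ) + 1) * p ((m+1) + 1) t
        = (1 / (α ^ (2 * (m+1)) * (Nat.factorial (m+1) : ℝ)))
          * (lam * ∑' n : ℕ, (lam * t) ^ n / (Nat.factorial n : ℝ) * S (m+1) (n+1)) := by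
      rw [hsplit]
      have hm1 : (m+1) - 1 = m := rfl
      rw [hm1, hp (m+1) t, hp m t, hp (m+2) t, hb (m+1)]
      have hfs1 : (Nat.factorial (m+1) : ℝ) = ((m:ℝ)+1) * (Nat.factorial m : ℝ) := by
        exact_mod_cast Nat.factorial_succ m
      have hfs2 : (Nat.factorial (m+2) : ℝ) = ((m:ℝ)+2) * (Nat.factorial (m+1) : ℝ) := by
        have := Nat.factorial_succ (m+1)
        push_cast [this]
        ring
      have hpow1 : α ^ (2 * (m+1)) = (mu/lam) ^ (m+1) := by rw [pow_mul, hα2]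
      have hpow2 : α ^ (2 * m) = (mu/lam) ^ m := by rw [pow_mul, hα2]
      have hpow3 : α ^ (2 * (m+2)) = (mu/lam) ^ (m+2) := by rw [pow_mul, hα2]
      have hpows1 : (mu/lam : ℝ) ^ (m+1) = (mu/lam) ^ m * (mu/lam) := pow_succ _ _
      have hpows2 : (mu/lam : ℝ) ^ (m+2) = (mu/lam) ^ m * (mu/lam) * (mu/lam) := by
        rw [pow_succ, pow_succ]
      have hfm : (Nat.factorial m : ℝ) ≠ 0 := Nat.cast_ne_zero.mpr m.factorial_ne_zero
      have hpm : ((mu/lam : ℝ)) ^ m ≠ 0 := pow_ne_zero _ (ne_of_gt hMLpos)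
      rw [hpow1, hpow2, hpow3, hpows1, hpows2, hfs2, hfs1, hα2]
      push_cast
      field_simp
      ring
    rw [hveq]
    exact hd
end

section
/- Let α > 0 and define d_k = Π_{i=0}^{k} 1/(1 + i(i-1)α²), and define T^{(h)}_k recursively by T^{(0)}_k = 1 for all k ≥ 0 and T^{(h)}_k = Σ_{i=0}^{k} ((d_{i+1} - d_{i+2})/d_i) · T^{(h-1)}_{i+1} for h ≥ 1. Then the numbers p_{n,k} = d_k · T^{((n-k)/2)}_k when n + k is even and 0 ≤ k ≤ n, and p_{n,k} = 0 otherwise, satisfy the embedded-chain recursion p_{n+1,k} = (1/(1 + k(k-1)α²)) p_{n,k-1} + ((k+2)(k+1)α²/(1 + (k+2)(k+1)α²)) p_{n,k+1} for all n ≥ 0 and 1 ≤ k ≤ n+1, with p_{0,0} = 1 and p_{n,k} = 0 for k > n. -/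
open Finset

/-- The numbers `p_{n,k} = d_k T^{((n-k)/2)}_k` (for `n+k` even, `0 ≤ k ≤ n`; `0`
otherwise), where `d_k = Π_{i=0}^k 1/(1+i(i-1)α²)` and `T^{(h)}_k` is given by the
stated recursion, satisfy the embedded-chain recursion of the discouragement queue:
`p_{n+1,k} = p_{n,k-1}/(1+k(k-1)α²) + p_{n,k+1}·(k+2)(k+1)α²/(1+(k+2)(k+1)α²)`,
with `p_{0,0} = 1` and `p_{n,k} = 0` for `k > n`. -/
theorem stmt_14 (α : ℝ) (hα : 0 < α)
    (d : ℕ → ℝ)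
    (hd : ∀ k : ℕ, d k = ∏ i ∈ Finset.range (k + 1), 1 / (1 + (i : ℝ) * ((i : ℝ) - 1) * α ^ 2))
    (T : ℕ → ℕ → ℝ)
    (hT0 : ∀ k : ℕ, T 0 k = 1)
    (hTrec : ∀ h k : ℕ,
      T (h + 1) k = ∑ i ∈ Finset.range (k + 1), ((d (i + 1) - d (i + 2)) / d i) * T h (i + 1))
    (p : ℕ → ℕ → ℝ)
    (hp : ∀ n k : ℕ, p n k =
      if k ≤ n ∧ (n + k) % 2 = 0 then d k * T ((n - k) / 2) k else 0) :
    p 0 0 = 1 ∧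
    (∀ n k : ℕ, n < k → p n k = 0) ∧
    (∀ n k : ℕ, 1 ≤ k → k ≤ n + 1 →
      p (n + 1) k =
        (1 / (1 + (k : ℝ) * ((k : ℝ) - 1) * α ^ 2)) * p n (k - 1) +
        (((k : ℝ) + 2) * ((k : ℝ) + 1) * α ^ 2 / (1 + ((k : ℝ) + 2) * ((k : ℝ) + 1) * α ^ 2)) *
          p n (k + 1)) := by
  have hpos : ∀ i : ℕ, (0:ℝ) < 1 + (i : ℝ) * ((i : ℝ) - 1) * α ^ 2 := by
    intro i
    rcases i with _ | s
    · norm_num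
    · have e : ((s+1 : ℕ) : ℝ) - 1 = (s : ℝ) := by push_cast; ring
      rw [e]
      have : (0:ℝ) ≤ ((s+1 : ℕ) : ℝ) * (s : ℝ) * α ^ 2 := by positivity
      linarith
  have hdpos : ∀ k, 0 < d k := by
    intro k
    rw [hd]
    exact Finset.prod_pos fun i _ => by
      rw [one_div]; exact inv_pos.2 (hpos i)
  have hdne : ∀ k, d k ≠ 0 := fun k => ne_of_gt (hdpos k)
  have hdsucc : ∀ k : ℕ, d (k + 1) = d k / (1 + ((k:ℝ) + 1) * (k:ℝ) * α ^ 2) := by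
    intro k
    rw [hd (k+1), Finset.prod_range_succ, ← hd k]
    have e : ((k+1 : ℕ) : ℝ) - 1 = (k : ℝ) := by push_cast; ring
    rw [e]
    push_cast
    rw [mul_one_div]
  refine ⟨?_, ?_, ?_⟩
  · rw [hp]
    norm_num [hT0, hd]
  · intro n k hnk
    rw [hp, if_neg]
    rintro ⟨h1, -⟩
    omega
  · intro n k hk1 hk2
    obtain ⟨j, rfl⟩ : ∃ j, k = j + 1 := ⟨k - 1, by omega⟩
    simp only [Nat.add_sub_cancel]
    by_cases hpar : (n + j) % 2 = 0
    · by_cases hn2 : j + 2 ≤ n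
      · obtain ⟨m, rfl⟩ : ∃ m, n = j + 2 * m + 2 := ⟨(n - j - 2) / 2, by omega⟩
        rw [hp, hp, hp, if_pos ⟨by omega, by omega⟩, if_pos ⟨by omega, by omega⟩,
          if_pos ⟨by omega, by omega⟩]
        have e1 : (j + 2 * m + 2 + 1 - (j + 1)) / 2 = m + 1 := by omega
        have e2 : (j + 2 * m + 2 - j) / 2 = m + 1 := by omega
        have e3 : (j + 2 * m + 2 - (j + 2)) / 2 = m := by omega
        rw [e1, e2, e3]
        have hT1 := hTrec m (j + 1)
        rw [Finset.sum_range_succ, ← hTrec m j] at hT1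
        rw [hT1]
        simp only [show j + 1 + 1 = j + 2 from rfl, show j + 1 + 2 = j + 3 from rfl]
        have hA : (1 + ((j:ℝ) + 1) * (j:ℝ) * α ^ 2) ≠ 0 := by positivity
        have hB : (1 + ((j:ℝ) + 2 + 1) * ((j:ℝ) + 2) * α ^ 2) ≠ 0 := by positivity
        have hC : (1 + (((j:ℕ):ℝ) + 1 + 2) * (((j:ℕ):ℝ) + 1 + 1) * α ^ 2) ≠ 0 := by positivity
        have eqA : (1 / (1 + ((j + 1 : ℕ) : ℝ) * (((j + 1 : ℕ) : ℝ) - 1) * α ^ 2)) * d j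
            = d (j + 1) := by
          rw [hdsucc j]; push_cast; ring
        have eqB : (((j + 1 : ℕ) : ℝ) + 2) * (((j + 1 : ℕ) : ℝ) + 1) * α ^ 2 /
              (1 + (((j + 1 : ℕ) : ℝ) + 2) * (((j + 1 : ℕ) : ℝ) + 1) * α ^ 2) * d (j + 2)
            = d (j + 2) - d (j + 3) := by
          have h3 : d (j + 3) = d (j + 2) / (1 + ((j:ℝ) + 2 + 1) * ((j:ℝ) + 2) * α ^ 2) := by
            have := hdsucc (j + 2); push_cast at this ⊢; exact this
          rw [h3]
          push_cast at hC ⊢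
          field_simp
          ring
        have eqI : (d (j + 2) - d (j + 3)) / d (j + 1) * d (j + 1) = d (j + 2) - d (j + 3) :=
          div_mul_cancel₀ _ (hdne _)
        linear_combination (-(T (m + 1) j)) * eqA + (T m (j + 2)) * eqI - (T m (j + 2)) * eqB
      · have hnj : n = j := by omega
        rw [hp, hp, hp, if_pos ⟨by omega, by omega⟩, if_pos ⟨by omega, by omega⟩,
          if_neg (by omega)]
        have e1 : (n + 1 - (j + 1)) / 2 = 0 := by omega
        have e2 : (n - j) / 2 = 0 := by omega
        rw [e1, e2, hT0, hT0, hdsucc j]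
        push_cast
        rw [show ((j:ℝ) + 1 - 1) = (j:ℝ) from by ring]
        have hA : (1 + ((j:ℝ) + 1) * (j:ℝ) * α ^ 2) ≠ 0 := by positivity
        field_simp
        ring
    · rw [hp, hp, hp, if_neg (by omega), if_neg (by omega), if_neg (by omega)]
      ring
end
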